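/- arXiv:0902.0306 — 9 statements merged into one kernel-verified Lean document; each statement's English description precedes it below -/
import Mathlib

section
/- Let (S, F, μ, ≺) be an ordered probability space, i.e., a probability space equipped with a strict partial order ≺ such that {(x,y) : x ≺ y} is measurable in the product σ-field. Define g(x) := μ{z ∈ S : z ≺ x}. Then the set {(x,y) ∈ S² : x ≺ y and g(x) ≥ g(y)} is a null set for the product measure μ × μ. -/
open MeasureTheory

/-- On an ordered probability space `(S, μ, ≺)`, with
`g x = μ {z : z ≺ x}`, the set `{(x,y) : x ≺ y ∧ g x ≥ g y}` is
`μ × μ`-null. -/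
theorem ordered_prob_space_g_increasing {S : Type*} [MeasurableSpace S]
    (μ : Measure S) [IsProbabilityMeasure μ]
    (r : S → S → Prop) (hirr : Irreflexive r) (htrans : Transitive r)
    (hmeas : MeasurableSet {p : S × S | r p.1 p.2}) :
    (μ.prod μ) {p : S × S | r p.1 p.2 ∧ μ {z | r z p.2} ≤ μ {z | r z p.1}} = 0 := by
  classical
  let g : S → ENNReal := fun x => μ {z | r z x}
  have hmeas' : MeasurableSet {p : S × S | r p.2 p.1} :=
    measurable_swap (α := S) (β := S) hmeas
  have hgmeas : Measurable g := measurable_measure_prodMk_left hmeas'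
  have hsec : ∀ y : S, MeasurableSet {x | r x y} := fun y =>
    hmeas.preimage (measurable_id.prodMk measurable_const)
  -- Key step: for each fixed `y`, the set of `x ≺ y` with `g y ≤ g x` is null.
  have key : ∀ y : S, μ {x | r x y ∧ g y ≤ g x} = 0 := by
    intro y
    set B : Set S := {x | r x y ∧ g y ≤ g x} with hB
    have hBsub : B ⊆ {z | r z y} := fun x hx => hx.1
    have hBmeas : MeasurableSet B :=
      (hsec y).inter (hgmeas (measurableSet_Ici (a := g y)))
    -- for `x ∈ B`, almost every `z ≺ y` satisfies `z ≺ x`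
    have hnull : ∀ x ∈ B, μ {z | z ∈ B ∧ ¬ r z x} = 0 := by
      intro x hx
      have hsub : {z | r z x} ⊆ {z | r z y} := fun z hz => htrans hz hx.1
      have hle : g x ≤ g y := measure_mono hsub
      have heq : g x = g y := le_antisymm hle hx.2
      have hdiff : μ ({z | r z y} \ {z | r z x}) = 0 := by
        rw [measure_diff hsub (hsec x).nullMeasurableSet (measure_ne_top μ _)]
        have : μ {z | r z x} = μ {z | r z y} := heq
        rw [this, tsub_self]
      refine measure_mono_null ?_ hdiff
      intro z hz
      exact ⟨hBsub hz.1, hz.2⟩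
    set D : Set (S × S) := (B ×ˢ B) ∩ {p : S × S | r p.1 p.2} with hD
    have hDmeas : MeasurableSet D := (hBmeas.prod hBmeas).inter hmeas
    have hDsub : D ⊆ B ×ˢ B := Set.inter_subset_left
    -- the complement of D inside B × B is null
    have hcompl : (μ.prod μ) ((B ×ˢ B) \ D) = 0 := by
      have hm : MeasurableSet ((B ×ˢ B) \ D) := (hBmeas.prod hBmeas).diff hDmeas
      rw [Measure.prod_apply_symm hm]
      have hz : ∀ x : S, μ ((fun z => (z, x)) ⁻¹' ((B ×ˢ B) \ D)) = 0 := by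
        intro x
        by_cases hx : x ∈ B
        · refine measure_mono_null ?_ (hnull x hx)
          intro z hz
          simp only [Set.mem_preimage, Set.mem_diff, Set.mem_prod, hD,
            Set.mem_inter_iff, Set.mem_setOf_eq] at hz
          exact ⟨hz.1.1, fun hr => hz.2 ⟨hz.1, hr⟩⟩
        · have : ((fun z => (z, x)) ⁻¹' ((B ×ˢ B) \ D)) = ∅ := by
            ext z
            simp only [Set.mem_preimage, Set.mem_diff, Set.mem_prod, Set.mem_empty_iff_false,
              iff_false]
            intro h
            exact hx h.1.2
          rw [this, measure_empty]
      simp only [hz, lintegral_zero]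
    have hprod : (μ.prod μ) (B ×ˢ B) = μ B * μ B := by rw [Measure.prod_prod]
    have hD_eq : (μ.prod μ) D = μ B * μ B := by
      refine le_antisymm (hprod ▸ measure_mono hDsub) ?_
      calc μ B * μ B = (μ.prod μ) (B ×ˢ B) := hprod.symm
        _ ≤ (μ.prod μ) (D ∪ ((B ×ˢ B) \ D)) := by
            refine measure_mono ?_
            intro p hp
            by_cases hpD : p ∈ D
            · exact Or.inl hpD
            · exact Or.inr ⟨hp, hpD⟩
        _ ≤ (μ.prod μ) D + (μ.prod μ) ((B ×ˢ B) \ D) := measure_union_le _ _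
        _ = (μ.prod μ) D := by rw [hcompl, add_zero]
    -- the swapped copy of D has the same measure
    have hswap : (μ.prod μ) (Prod.swap ⁻¹' D) = μ B * μ B := by
      have hmap := Measure.map_apply (μ := μ.prod μ) measurable_swap hDmeas
      rw [Measure.prod_swap] at hmap
      rw [← hmap, hD_eq]
    have hdisj : Disjoint D (Prod.swap ⁻¹' D) := by
      rw [Set.disjoint_left]
      rintro ⟨z, x⟩ hzx hxz
      have h1 : r z x := hzx.2
      have h2 : r x z := hxz.2
      exact hirr z (htrans h1 h2)
    have hsubU : D ∪ Prod.swap ⁻¹' D ⊆ B ×ˢ B := by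
      rintro ⟨z, x⟩ (h | h)
      · exact h.1
      · exact ⟨h.1.2, h.1.1⟩
    have hle2 : μ B * μ B + μ B * μ B ≤ μ B * μ B := by
      calc μ B * μ B + μ B * μ B
          = (μ.prod μ) (D ∪ Prod.swap ⁻¹' D) := by
            rw [measure_union hdisj (measurable_swap hDmeas), hD_eq, hswap]
        _ ≤ (μ.prod μ) (B ×ˢ B) := measure_mono hsubU
        _ = μ B * μ B := hprod
    have hfin : μ B * μ B ≠ ⊤ := ENNReal.mul_ne_top (measure_ne_top μ B) (measure_ne_top μ B)
    have hcc : μ B * μ B = 0 := by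
      have h0 : μ B * μ B + μ B * μ B ≤ μ B * μ B + 0 := by rwa [add_zero]
      exact le_antisymm ((ENNReal.add_le_add_iff_left hfin).mp h0) zero_le
    exact mul_self_eq_zero.mp hcc
  -- assemble via Fubini and swap
  set T' : Set (S × S) := {p | r p.2 p.1 ∧ g p.1 ≤ g p.2} with hT'
  have hle_meas : MeasurableSet {p : S × S | g p.1 ≤ g p.2} :=
    measurableSet_le (hgmeas.comp measurable_fst) (hgmeas.comp measurable_snd)
  have hT'meas : MeasurableSet T' := hmeas'.inter hle_meas
  have hT'null : (μ.prod μ) T' = 0 := by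
    rw [Measure.measure_prod_null hT'meas]
    refine Filter.Eventually.of_forall fun y => ?_
    have : Prod.mk y ⁻¹' T' = {x | r x y ∧ g y ≤ g x} := rfl
    simpa [this] using key y
  have hmap := Measure.map_apply (μ := μ.prod μ) measurable_swap hT'meas
  rw [Measure.prod_swap] at hmap
  have : (μ.prod μ) (Prod.swap ⁻¹' T') = 0 := by rw [← hmap, hT'null]
  exact this
end

section
/- Let (S, F, μ, ≺) be an ordered probability space, x ∈ S, D_x := {z : z ≺ x}, and E_x := {z : z ≺ x and μ(D_z) ≥ μ(D_x)}. Then μ(E_x) = 0. -/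
open MeasureTheory

/-- On an ordered probability space, for any `x`, the set
`E_x = {z : z ≺ x ∧ μ D_z ≥ μ D_x}` (where `D_y = {w : w ≺ y}`) is null. -/
theorem ordered_prob_space_Ex_null {S : Type*} [MeasurableSpace S]
    (μ : Measure S) [IsProbabilityMeasure μ]
    (r : S → S → Prop) (hirr : Irreflexive r) (htrans : Transitive r)
    (hmeas : MeasurableSet {p : S × S | r p.1 p.2})
    (x : S) :
    μ {z | r z x ∧ μ {w | r w x} ≤ μ {w | r w z}} = 0 := by
  set A : Set (S × S) := {p : S × S | r p.1 p.2} with hA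
  -- measurability of slices D_y = {w | r w y}
  have hD : ∀ y : S, MeasurableSet {w | r w y} := by
    intro y
    have : {w | r w y} = (fun w => (w, y)) ⁻¹' A := rfl
    rw [this]
    exact hmeas.preimage (measurable_id.prodMk measurable_const)
  have hμD : Measurable fun y => μ {w | r w y} := by
    have := measurable_measure_prodMk_right (μ := μ) hmeas
    exact this
  set E : Set S := {z | r z x ∧ μ {w | r w x} ≤ μ {w | r w z}} with hE
  have hEmeas : MeasurableSet E := by
    apply (hD x).inter
    exact hμD measurableSet_Ici
  -- key: for z ∈ E, the set of w ∈ E with ¬ r w z is null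
  have key : ∀ z ∈ E, μ {w | w ∈ E ∧ ¬ r w z} = 0 := by
    intro z hz
    have hsub : {w | w ∈ E ∧ ¬ r w z} ⊆ {w | r w x} \ {w | r w z} := by
      intro w hw
      exact ⟨hw.1.1, hw.2⟩
    have hDsub : {w | r w z} ⊆ {w | r w x} := fun w hw => htrans hw hz.1
    have hdiff : μ ({w | r w x} \ {w | r w z}) = 0 := by
      rw [measure_diff hDsub (hD z).nullMeasurableSet (measure_ne_top μ _)]
      exact tsub_eq_zero_of_le hz.2
    exact measure_mono_null hsub hdiff
  -- The "bad" product set T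
  set T : Set (S × S) := {p | p.1 ∈ E ∧ p.2 ∈ E ∧ ¬ r p.2 p.1} with hT
  have hTmeas : MeasurableSet T := by
    have h1 : MeasurableSet {p : S × S | p.1 ∈ E} := hEmeas.preimage measurable_fst
    have h2 : MeasurableSet {p : S × S | p.2 ∈ E} := hEmeas.preimage measurable_snd
    have h3 : MeasurableSet {p : S × S | r p.2 p.1} :=
      hmeas.preimage measurable_swap
    exact h1.inter (h2.inter h3.compl)
  have hTnull : μ.prod μ T = 0 := by
    rw [Measure.prod_apply hTmeas]
    rw [lintegral_eq_zero_iff (measurable_measure_prodMk_left hTmeas)]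
    filter_upwards with z
    by_cases hz : z ∈ E
    · have : Prod.mk z ⁻¹' T = {w | w ∈ E ∧ ¬ r w z} := by
        ext w; simp only [Set.mem_preimage, hT, Set.mem_setOf_eq]
        tauto
      rw [this]; exact key z hz
    · have : Prod.mk z ⁻¹' T = ∅ := by
        ext w; simp only [Set.mem_preimage, hT, Set.mem_setOf_eq]
        tauto
      simp [this]
  -- the swapped set
  have hT'null : μ.prod μ (Prod.swap ⁻¹' T) = 0 := by
    rw [← Measure.prod_swap, Measure.map_apply measurable_swap hTmeas] at hTnull
    have : Prod.swap ⁻¹' T = Prod.swap ⁻¹' T := rfl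
    exact hTnull
  -- E × E is covered by T and its swap
  have hcover : E ×ˢ E ⊆ T ∪ Prod.swap ⁻¹' T := by
    rintro ⟨z, w⟩ ⟨hz, hw⟩
    by_cases h : r w z
    · right
      refine ⟨hw, hz, fun h' => ?_⟩
      exact hirr z (htrans h' h)
    · left; exact ⟨hz, hw, h⟩
  have : μ.prod μ (E ×ˢ E) = 0 :=
    measure_mono_null hcover (le_antisymm
      (le_trans (measure_union_le _ _) (by rw [hTnull, hT'null, add_zero])) zero_le)
  rw [Measure.prod_prod, mul_eq_zero] at this
  rcases this with h | h <;> exact h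
end

section
/- Let W : [0,1]² → [0,1] be measurable such that every point (x,y) with W(x,y) > 0 is a Lebesgue point of W, and such that W(x₁,x₂)·W(x₂,x₃)·(1 − W(x₁,x₃)) = 0 for Lebesgue-almost every (x₁,x₂,x₃) ∈ [0,1]³, and moreover W(x,y) = 1 whenever (2ε)^{-2}∫∫_{|x'-x|<ε,|y'-y|<ε} W(x',y') dx'dy' → 1 as ε → 0. Then for all x, y, z ∈ [0,1]: W(x,y) > 0 and W(y,z) > 0 imply W(x,z) = 1. -/
open MeasureTheory Filter Set

lemma zpow_neg2 (ε : ℝ) : (2 * ε) ^ (-2 : ℤ) = (4 * ε ^ 2)⁻¹ := by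
  rw [zpow_neg]
  congr 1
  rw [zpow_two]
  ring

lemma half_lower (W : ℝ × ℝ → ℝ) (hWmeas : Measurable W)
    (a : ℝ) (ha : 0 < a) (hb : ∀ p, |W p - a| ≤ 1)
    (x y ε : ℝ) (hε : 0 < ε)
    (S : Set ℝ) (hS : MeasurableSet S) (hSsub : S ⊆ Ioo (x - ε) (x + ε))
    (hvol : volume S = ENNReal.ofReal ε)
    (hW0 : ∀ p : ℝ × ℝ, p.1 ∈ S → W p = 0) :
    a / 2 ≤ (2 * ε) ^ (-2 : ℤ) *
      ∫ p in Ioo (x - ε) (x + ε) ×ˢ Ioo (y - ε) (y + ε), |W p - a| := by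
  set B := Ioo (x - ε) (x + ε) ×ˢ Ioo (y - ε) (y + ε) with hB
  have hBvol : volume B = ENNReal.ofReal (2 * ε) * ENNReal.ofReal (2 * ε) := by
    rw [hB, show (volume : Measure (ℝ × ℝ)) = (volume : Measure ℝ).prod volume from rfl,
      Measure.prod_prod, Real.volume_Ioo, Real.volume_Ioo]; ring_nf
  have hBfin : volume B ≠ ⊤ := by rw [hBvol]; exact ENNReal.mul_ne_top ENNReal.ofReal_ne_top ENNReal.ofReal_ne_top
  have hint : IntegrableOn (fun p => |W p - a|) B volume := by
    apply Measure.integrableOn_of_bounded hBfin ((hWmeas.sub measurable_const).abs).aestronglyMeasurable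
    exact ae_of_all _ fun p => by simpa using hb p
  set H := S ×ˢ Ioo (y - ε) (y + ε) with hH
  have hHsub : H ⊆ B := Set.prod_mono hSsub (subset_refl _)
  have hHm : MeasurableSet H := hS.prod measurableSet_Ioo
  have hHvol : volume H = ENNReal.ofReal ε * ENNReal.ofReal (2 * ε) := by
    rw [hH, show (volume : Measure (ℝ × ℝ)) = (volume : Measure ℝ).prod volume from rfl,
      Measure.prod_prod, Real.volume_Ioo, hvol]; ring_nf
  have h1 : ∫ p in H, |W p - a| = (2 * ε ^ 2) * a := by
    rw [setIntegral_congr_fun hHm (fun p hp => by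
      rw [hW0 p hp.1, zero_sub, abs_neg, abs_of_nonneg ha.le]), setIntegral_const, measureReal_def, hHvol,
      ENNReal.toReal_mul, ENNReal.toReal_ofReal hε.le,
      ENNReal.toReal_ofReal (by linarith), smul_eq_mul]
    ring
  have h2 : ∫ p in H, |W p - a| ≤ ∫ p in B, |W p - a| := by
    apply setIntegral_mono_set hint (ae_of_all _ fun p => abs_nonneg _)
    exact HasSubset.Subset.eventuallyLE hHsub
  rw [h1] at h2
  rw [zpow_neg2, le_inv_mul_iff₀ (by positivity : (0:ℝ) < 4 * ε ^ 2)]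
  nlinarith

lemma half_lower_snd (W : ℝ × ℝ → ℝ) (hWmeas : Measurable W)
    (a : ℝ) (ha : 0 < a) (hb : ∀ p, |W p - a| ≤ 1)
    (x y ε : ℝ) (hε : 0 < ε)
    (S : Set ℝ) (hS : MeasurableSet S) (hSsub : S ⊆ Ioo (y - ε) (y + ε))
    (hvol : volume S = ENNReal.ofReal ε)
    (hW0 : ∀ p : ℝ × ℝ, p.2 ∈ S → W p = 0) :
    a / 2 ≤ (2 * ε) ^ (-2 : ℤ) *
      ∫ p in Ioo (x - ε) (x + ε) ×ˢ Ioo (y - ε) (y + ε), |W p - a| := by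
  set B := Ioo (x - ε) (x + ε) ×ˢ Ioo (y - ε) (y + ε) with hB
  have hBvol : volume B = ENNReal.ofReal (2 * ε) * ENNReal.ofReal (2 * ε) := by
    rw [hB, show (volume : Measure (ℝ × ℝ)) = (volume : Measure ℝ).prod volume from rfl,
      Measure.prod_prod, Real.volume_Ioo, Real.volume_Ioo]; ring_nf
  have hBfin : volume B ≠ ⊤ := by rw [hBvol]; exact ENNReal.mul_ne_top ENNReal.ofReal_ne_top ENNReal.ofReal_ne_top
  have hint : IntegrableOn (fun p => |W p - a|) B volume := by
    apply Measure.integrableOn_of_bounded hBfin ((hWmeas.sub measurable_const).abs).aestronglyMeasurable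
    exact ae_of_all _ fun p => by simpa using hb p
  set H := Ioo (x - ε) (x + ε) ×ˢ S with hH
  have hHsub : H ⊆ B := Set.prod_mono (subset_refl _) hSsub
  have hHm : MeasurableSet H := measurableSet_Ioo.prod hS
  have hHvol : volume H = ENNReal.ofReal (2 * ε) * ENNReal.ofReal ε := by
    rw [hH, show (volume : Measure (ℝ × ℝ)) = (volume : Measure ℝ).prod volume from rfl,
      Measure.prod_prod, Real.volume_Ioo, hvol]; ring_nf
  have h1 : ∫ p in H, |W p - a| = (2 * ε ^ 2) * a := by
    rw [setIntegral_congr_fun hHm (fun p hp => by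
      rw [hW0 p hp.2, zero_sub, abs_neg, abs_of_nonneg ha.le]), setIntegral_const, measureReal_def, hHvol,
      ENNReal.toReal_mul, ENNReal.toReal_ofReal (by linarith : (0:ℝ) ≤ 2 * ε),
      ENNReal.toReal_ofReal hε.le, smul_eq_mul]
    ring
  have h2 : ∫ p in H, |W p - a| ≤ ∫ p in B, |W p - a| := by
    apply setIntegral_mono_set hint (ae_of_all _ fun p => abs_nonneg _)
    exact HasSubset.Subset.eventuallyLE hHsub
  rw [h1] at h2
  rw [zpow_neg2, le_inv_mul_iff₀ (by positivity : (0:ℝ) < 4 * ε ^ 2)]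
  nlinarith

lemma interior_of_lebesgue (W : ℝ × ℝ → ℝ) (hWmeas : Measurable W)
    (hrange : ∀ p, W p ∈ Set.Icc (0 : ℝ) 1)
    (hsupp : ∀ p : ℝ × ℝ, p ∉ Set.Icc (0:ℝ) 1 ×ˢ Set.Icc (0:ℝ) 1 → W p = 0)
    (x y : ℝ) (ha : 0 < W (x, y))
    (hT : Tendsto (fun ε : ℝ => (2 * ε) ^ (-2 : ℤ) *
        ∫ p in Set.Ioo (x - ε) (x + ε) ×ˢ Set.Ioo (y - ε) (y + ε),
          |W p - W (x, y)| ∂(volume : Measure (ℝ × ℝ)))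
        (nhdsWithin 0 (Set.Ioi 0)) (nhds 0)) :
    x ∈ Set.Ioo (0:ℝ) 1 ∧ y ∈ Set.Ioo (0:ℝ) 1 := by
  set a := W (x, y) with haa
  have hmem : (x, y) ∈ Set.Icc (0:ℝ) 1 ×ˢ Set.Icc (0:ℝ) 1 := by
    by_contra h
    have h0 := hsupp _ h
    rw [haa, h0] at ha
    exact lt_irrefl _ ha
  have hb : ∀ p, |W p - a| ≤ 1 := by
    intro p
    have h1 := hrange p; have h2 := hrange (x, y)
    rw [abs_le]; constructor <;> [linarith [h1.1, h2.2]; linarith [h1.2, h2.1]]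
  have hev : ∀ᶠ ε in nhdsWithin (0:ℝ) (Set.Ioi 0),
      (fun ε : ℝ => (2 * ε) ^ (-2 : ℤ) *
        ∫ p in Set.Ioo (x - ε) (x + ε) ×ˢ Set.Ioo (y - ε) (y + ε),
          |W p - a|) ε < a / 2 ∧ ε ∈ Set.Ioi (0:ℝ) :=
    (hT.eventually_lt_const (by linarith)).and eventually_mem_nhdsWithin
  obtain ⟨ε, hlt, hε⟩ := hev.exists
  simp only [Set.mem_Ioi] at hε
  have key : ∀ S : Set ℝ, MeasurableSet S → volume S = ENNReal.ofReal ε →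
      ((S ⊆ Ioo (x - ε) (x + ε) ∧ ∀ p : ℝ × ℝ, p.1 ∈ S → W p = 0) ∨
       (S ⊆ Ioo (y - ε) (y + ε) ∧ ∀ p : ℝ × ℝ, p.2 ∈ S → W p = 0)) → False := by
    rintro S hSm hSv (⟨hsub, h0⟩ | ⟨hsub, h0⟩)
    · exact absurd hlt (not_lt.2 (half_lower W hWmeas a ha hb x y ε hε S hSm hsub hSv h0))
    · exact absurd hlt (not_lt.2 (half_lower_snd W hWmeas a ha hb x y ε hε S hSm hsub hSv h0))
  simp only [Set.mem_prod, Set.mem_Icc] at hmem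
  obtain ⟨⟨hx0, hx1⟩, hy0, hy1⟩ := hmem
  constructor
  · constructor
    · rcases lt_or_eq_of_le hx0 with h | h
      · exact h
      · exfalso
        apply key (Ioo (x - ε) x) measurableSet_Ioo
          (by rw [Real.volume_Ioo]; ring_nf)
        left
        refine ⟨Ioo_subset_Ioo le_rfl (by linarith), fun p hp => hsupp p ?_⟩
        intro hmem'
        have := hmem'.1.1
        have h2 := hp.2
        rw [← h] at h2
        linarith
    · rcases lt_or_eq_of_le hx1 with h | h
      · exact h
      · exfalso
        apply key (Ioo x (x + ε)) measurableSet_Ioo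
          (by rw [Real.volume_Ioo]; ring_nf)
        left
        refine ⟨Ioo_subset_Ioo (by linarith) le_rfl, fun p hp => hsupp p ?_⟩
        intro hmem'
        have := hmem'.1.2
        have h2 := hp.1
        rw [h] at h2
        linarith
  · constructor
    · rcases lt_or_eq_of_le hy0 with h | h
      · exact h
      · exfalso
        apply key (Ioo (y - ε) y) measurableSet_Ioo
          (by rw [Real.volume_Ioo]; ring_nf)
        right
        refine ⟨Ioo_subset_Ioo le_rfl (by linarith), fun p hp => hsupp p ?_⟩
        intro hmem'
        have := hmem'.2.1
        have h2 := hp.2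
        rw [← h] at h2
        linarith
    · rcases lt_or_eq_of_le hy1 with h | h
      · exact h
      · exfalso
        apply key (Ioo y (y + ε)) measurableSet_Ioo
          (by rw [Real.volume_Ioo]; ring_nf)
        right
        refine ⟨Ioo_subset_Ioo (by linarith) le_rfl, fun p hp => hsupp p ?_⟩
        intro hmem'
        have := hmem'.2.2
        have h2 := hp.1
        rw [h] at h2
        linarith

lemma vol3_slice13 (G : Set (ℝ × ℝ)) (hG : MeasurableSet G) (s : Set ℝ) (hs : MeasurableSet s) :
    volume {t : ℝ × ℝ × ℝ | (t.1, t.2.2) ∈ G ∧ t.2.1 ∈ s} = volume s * volume G := by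
  have hmG : MeasurableSet {t : ℝ × ℝ × ℝ | (t.1, t.2.2) ∈ G ∧ t.2.1 ∈ s} := by
    apply MeasurableSet.inter
    · exact (measurable_fst.prodMk (measurable_snd.comp measurable_snd)) hG
    · exact (measurable_fst.comp measurable_snd) hs
  rw [show (volume : Measure (ℝ × ℝ × ℝ)) = (volume : Measure ℝ).prod volume from rfl,
    Measure.prod_apply hmG]
  have : ∀ t1 : ℝ, (Prod.mk t1 ⁻¹' {t : ℝ × ℝ × ℝ | (t.1, t.2.2) ∈ G ∧ t.2.1 ∈ s})
      = s ×ˢ {w : ℝ | (t1, w) ∈ G} := by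
    intro t1; ext q; simp [Set.mem_prod, and_comm]
  simp_rw [this]
  have h2 : ∀ t1 : ℝ, volume (s ×ˢ {w : ℝ | (t1, w) ∈ G}) =
      volume s * volume {w : ℝ | (t1, w) ∈ G} := by
    intro t1
    rw [show (volume : Measure (ℝ × ℝ)) = (volume : Measure ℝ).prod volume from rfl,
      Measure.prod_prod]
  simp_rw [h2]
  rw [lintegral_const_mul _ (by
    exact Measurable.comp (measurable_measure_prodMk_left hG) measurable_id |>.comp measurable_id)]
  · congr 1
    rw [show (volume : Measure (ℝ × ℝ)) = (volume : Measure ℝ).prod volume from rfl,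
      Measure.prod_apply hG]
    rfl

lemma vol3_slice12 (N : Set (ℝ × ℝ)) (hN : MeasurableSet N) (s : Set ℝ) (hs : MeasurableSet s) :
    volume {t : ℝ × ℝ × ℝ | (t.1, t.2.1) ∈ N ∧ t.2.2 ∈ s} = volume N * volume s := by
  have hmN : MeasurableSet {t : ℝ × ℝ × ℝ | (t.1, t.2.1) ∈ N ∧ t.2.2 ∈ s} := by
    apply MeasurableSet.inter
    · exact (measurable_fst.prodMk (measurable_fst.comp measurable_snd)) hN
    · exact (measurable_snd.comp measurable_snd) hs
  rw [show (volume : Measure (ℝ × ℝ × ℝ)) = (volume : Measure ℝ).prod volume from rfl,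
    Measure.prod_apply hmN]
  have : ∀ t1 : ℝ, (Prod.mk t1 ⁻¹' {t : ℝ × ℝ × ℝ | (t.1, t.2.1) ∈ N ∧ t.2.2 ∈ s})
      = {w : ℝ | (t1, w) ∈ N} ×ˢ s := by
    intro t1; ext q; simp [Set.mem_prod]
  simp_rw [this]
  have h2 : ∀ t1 : ℝ, volume ({w : ℝ | (t1, w) ∈ N} ×ˢ s) =
      volume {w : ℝ | (t1, w) ∈ N} * volume s := by
    intro t1
    rw [show (volume : Measure (ℝ × ℝ)) = (volume : Measure ℝ).prod volume from rfl,
      Measure.prod_prod]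
  simp_rw [h2]
  have h3 : ∀ t1 : ℝ, {w : ℝ | (t1, w) ∈ N} = Prod.mk t1 ⁻¹' N := fun _ => rfl
  simp_rw [h3]
  rw [lintegral_mul_const _ (measurable_measure_prodMk_left hN)]
  congr 1
  rw [show (volume : Measure (ℝ × ℝ)) = (volume : Measure ℝ).prod volume from rfl,
    Measure.prod_apply hN]

lemma vol3_prod (s : Set ℝ) (N : Set (ℝ × ℝ)) :
    volume {t : ℝ × ℝ × ℝ | t.1 ∈ s ∧ t.2 ∈ N} = volume s * volume N := by
  have : {t : ℝ × ℝ × ℝ | t.1 ∈ s ∧ t.2 ∈ N} = s ×ˢ N := rfl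
  rw [this, show (volume : Measure (ℝ × ℝ × ℝ)) = (volume : Measure ℝ).prod volume from rfl,
    Measure.prod_prod]

lemma key_measure_bound (W : ℝ × ℝ → ℝ) (hWmeas : Measurable W)
    (hrange : ∀ p, W p ∈ Set.Icc (0 : ℝ) 1)
    (htriple : ∀ᵐ t ∂(volume : Measure (ℝ × ℝ × ℝ)),
      t ∈ Set.Icc (0:ℝ) 1 ×ˢ (Set.Icc (0:ℝ) 1 ×ˢ Set.Icc (0:ℝ) 1) →
      W (t.1, t.2.1) * W (t.2.1, t.2.2) * (1 - W (t.1, t.2.2)) = 0)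
    (x y z ε : ℝ) (hε : 0 < ε)
    (hx : Ioo (x - ε) (x + ε) ⊆ Icc (0:ℝ) 1)
    (hy : Ioo (y - ε) (y + ε) ⊆ Icc (0:ℝ) 1)
    (hz : Ioo (z - ε) (z + ε) ⊆ Icc (0:ℝ) 1) :
    volume ((Ioo (x - ε) (x + ε) ×ˢ Ioo (z - ε) (z + ε)) ∩ {p | W p ≠ 1}) ≤
      volume ((Ioo (x - ε) (x + ε) ×ˢ Ioo (y - ε) (y + ε)) ∩ {p | W p ≤ 0}) +
      volume ((Ioo (y - ε) (y + ε) ×ˢ Ioo (z - ε) (z + ε)) ∩ {p | W p ≤ 0}) := by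
  set Bx := Ioo (x - ε) (x + ε) with hBx
  set By := Ioo (y - ε) (y + ε) with hBy
  set Bz := Ioo (z - ε) (z + ε) with hBz
  set G := (Bx ×ˢ Bz) ∩ {p | W p ≠ 1} with hGdef
  set N1 := (Bx ×ˢ By) ∩ {p | W p ≤ 0} with hN1def
  set N2 := (By ×ˢ Bz) ∩ {p | W p ≤ 0} with hN2def
  have hGm : MeasurableSet G :=
    (measurableSet_Ioo.prod measurableSet_Ioo).inter
      ((hWmeas (measurableSet_singleton 1)).compl)
  have hN1m : MeasurableSet N1 :=
    (measurableSet_Ioo.prod measurableSet_Ioo).inter (hWmeas measurableSet_Iic)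
  have hN2m : MeasurableSet N2 :=
    (measurableSet_Ioo.prod measurableSet_Ioo).inter (hWmeas measurableSet_Iic)
  set Z := {t : ℝ × ℝ × ℝ | ¬ (t ∈ Set.Icc (0:ℝ) 1 ×ˢ (Set.Icc (0:ℝ) 1 ×ˢ Set.Icc (0:ℝ) 1) →
      W (t.1, t.2.1) * W (t.2.1, t.2.2) * (1 - W (t.1, t.2.2)) = 0)} with hZdef
  have hZ0 : volume Z = 0 := htriple
  have hsub : {t : ℝ × ℝ × ℝ | (t.1, t.2.2) ∈ G ∧ t.2.1 ∈ By} ⊆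
      Z ∪ ({t : ℝ × ℝ × ℝ | (t.1, t.2.1) ∈ N1 ∧ t.2.2 ∈ Bz} ∪
           {t : ℝ × ℝ × ℝ | t.1 ∈ Bx ∧ t.2 ∈ N2}) := by
    rintro ⟨t1, t2, t3⟩ ⟨hG13, hBy2⟩
    obtain ⟨hmemxz, hne⟩ := hG13
    have h1x : t1 ∈ Bx := hmemxz.1
    have h3z : t3 ∈ Bz := hmemxz.2
    by_cases hA : (t1, t2) ∈ N1
    · exact Or.inr (Or.inl ⟨hA, h3z⟩)
    by_cases hB : (t2, t3) ∈ N2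
    · exact Or.inr (Or.inr ⟨h1x, hB⟩)
    left
    simp only [hZdef, Set.mem_setOf_eq]
    intro himp
    have hcube : (t1, t2, t3) ∈ Set.Icc (0:ℝ) 1 ×ˢ (Set.Icc (0:ℝ) 1 ×ˢ Set.Icc (0:ℝ) 1) :=
      ⟨hx h1x, hy hBy2, hz h3z⟩
    have hW1 : 0 < W (t1, t2) := by
      by_contra h
      exact hA ⟨⟨h1x, hBy2⟩, le_of_not_gt h⟩
    have hW2 : 0 < W (t2, t3) := by
      by_contra h
      exact hB ⟨⟨hBy2, h3z⟩, le_of_not_gt h⟩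
    have hW3 : W (t1, t3) < 1 := lt_of_le_of_ne (hrange (t1, t3)).2 hne
    have := himp hcube
    nlinarith [mul_pos (mul_pos hW1 hW2) (by linarith : (0:ℝ) < 1 - W (t1, t3))]
  have hv1 : volume {t : ℝ × ℝ × ℝ | (t.1, t.2.2) ∈ G ∧ t.2.1 ∈ By} = volume By * volume G :=
    vol3_slice13 G hGm By measurableSet_Ioo
  have hv2 : volume {t : ℝ × ℝ × ℝ | (t.1, t.2.1) ∈ N1 ∧ t.2.2 ∈ Bz} = volume N1 * volume Bz :=
    vol3_slice12 N1 hN1m Bz measurableSet_Ioo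
  have hv3 : volume {t : ℝ × ℝ × ℝ | t.1 ∈ Bx ∧ t.2 ∈ N2} = volume Bx * volume N2 :=
    vol3_prod Bx N2
  have hle : volume By * volume G ≤ volume N1 * volume Bz + volume Bx * volume N2 := by
    rw [← hv1, ← hv2, ← hv3]
    calc volume {t : ℝ × ℝ × ℝ | (t.1, t.2.2) ∈ G ∧ t.2.1 ∈ By}
        ≤ volume (Z ∪ ({t : ℝ × ℝ × ℝ | (t.1, t.2.1) ∈ N1 ∧ t.2.2 ∈ Bz} ∪
           {t : ℝ × ℝ × ℝ | t.1 ∈ Bx ∧ t.2 ∈ N2})) := measure_mono hsub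
      _ ≤ volume Z + volume ({t : ℝ × ℝ × ℝ | (t.1, t.2.1) ∈ N1 ∧ t.2.2 ∈ Bz} ∪
           {t : ℝ × ℝ × ℝ | t.1 ∈ Bx ∧ t.2 ∈ N2}) := measure_union_le _ _
      _ ≤ volume Z + (volume {t : ℝ × ℝ × ℝ | (t.1, t.2.1) ∈ N1 ∧ t.2.2 ∈ Bz} +
           volume {t : ℝ × ℝ × ℝ | t.1 ∈ Bx ∧ t.2 ∈ N2}) := by
          gcongr
          exact measure_union_le _ _
      _ = _ := by rw [hZ0, zero_add]
  have hc : volume Bx = ENNReal.ofReal (2 * ε) := by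
    rw [hBx, Real.volume_Ioo]; ring_nf
  have hcy : volume By = ENNReal.ofReal (2 * ε) := by
    rw [hBy, Real.volume_Ioo]; ring_nf
  have hcz : volume Bz = ENNReal.ofReal (2 * ε) := by
    rw [hBz, Real.volume_Ioo]; ring_nf
  rw [hc, hcy, hcz] at hle
  have hc0 : (ENNReal.ofReal (2 * ε)) ≠ 0 := by
    simp [ENNReal.ofReal_eq_zero]; linarith
  have hctop : (ENNReal.ofReal (2 * ε)) ≠ ⊤ := ENNReal.ofReal_ne_top
  rw [← ENNReal.mul_le_mul_iff_right hc0 hctop (b := volume G) (c := volume N1 + volume N2)]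
  calc ENNReal.ofReal (2 * ε) * volume G
      ≤ volume N1 * ENNReal.ofReal (2 * ε) + ENNReal.ofReal (2 * ε) * volume N2 := hle
    _ = ENNReal.ofReal (2 * ε) * (volume N1 + volume N2) := by ring

lemma cheb (W : ℝ × ℝ → ℝ) (hWmeas : Measurable W)
    (a : ℝ) (ha : 0 < a) (hb : ∀ p, |W p - a| ≤ 1)
    (x y ε : ℝ) (hε : 0 < ε) :
    a * (volume ((Ioo (x - ε) (x + ε) ×ˢ Ioo (y - ε) (y + ε)) ∩ {p | W p ≤ 0})).toReal ≤
      ∫ p in Ioo (x - ε) (x + ε) ×ˢ Ioo (y - ε) (y + ε), |W p - a| := by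
  set B := Ioo (x - ε) (x + ε) ×ˢ Ioo (y - ε) (y + ε) with hB
  set N := B ∩ {p | W p ≤ 0} with hN
  have hBvol : volume B = ENNReal.ofReal (2 * ε) * ENNReal.ofReal (2 * ε) := by
    rw [hB, show (volume : Measure (ℝ × ℝ)) = (volume : Measure ℝ).prod volume from rfl,
      Measure.prod_prod, Real.volume_Ioo, Real.volume_Ioo]; ring_nf
  have hBfin : volume B ≠ ⊤ := by
    rw [hBvol]; exact ENNReal.mul_ne_top ENNReal.ofReal_ne_top ENNReal.ofReal_ne_top
  have hNsub : N ⊆ B := Set.inter_subset_left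
  have hNfin : volume N ≠ ⊤ := fun h => hBfin (top_le_iff.1 (h ▸ measure_mono hNsub))
  have hNm : MeasurableSet N :=
    (measurableSet_Ioo.prod measurableSet_Ioo).inter (hWmeas measurableSet_Iic)
  have hint : IntegrableOn (fun p => |W p - a|) B volume :=
    Measure.integrableOn_of_bounded hBfin ((hWmeas.sub measurable_const).abs).aestronglyMeasurable
      (ae_of_all _ fun p => by simpa using hb p)
  have h1 : ∫ p in N, (a : ℝ) ≤ ∫ p in N, |W p - a| := by
    apply setIntegral_mono_on (integrableOn_const hNfin)
      (hint.mono_set hNsub) hNm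
    intro p hp
    have hp2 : W p ≤ 0 := hp.2
    rw [abs_of_nonpos (by linarith)]
    linarith
  have h2 : ∫ p in N, |W p - a| ≤ ∫ p in B, |W p - a| :=
    setIntegral_mono_set hint (ae_of_all _ fun p => abs_nonneg _)
      (HasSubset.Subset.eventuallyLE hNsub)
  rw [setIntegral_const, measureReal_def, smul_eq_mul, mul_comm] at h1
  linarith

/-- If every point where `W > 0` is a Lebesgue point of `W`, the
triple product condition `W(x₁,x₂)W(x₂,x₃)(1 − W(x₁,x₃)) = 0` holds a.e. on
`[0,1]³`, and `W(x,y) = 1` whenever the local averages of `W` at `(x,y)` tend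
to 1, then `W(x,y) > 0` and `W(y,z) > 0` imply `W(x,z) = 1` for all
`x, y, z ∈ [0,1]`. -/
theorem kernel_transitivity_from_lebesgue_points
    (W : ℝ × ℝ → ℝ) (hWmeas : Measurable W)
    (hrange : ∀ p, W p ∈ Set.Icc (0 : ℝ) 1)
    (hsupp : ∀ p : ℝ × ℝ, p ∉ Set.Icc (0:ℝ) 1 ×ˢ Set.Icc (0:ℝ) 1 → W p = 0)
    (hleb : ∀ x y : ℝ, 0 < W (x, y) →
      Tendsto (fun ε : ℝ => (2 * ε) ^ (-2 : ℤ) *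
        ∫ p in Set.Ioo (x - ε) (x + ε) ×ˢ Set.Ioo (y - ε) (y + ε),
          |W p - W (x, y)| ∂(volume : Measure (ℝ × ℝ)))
        (nhdsWithin 0 (Set.Ioi 0)) (nhds 0))
    (htriple : ∀ᵐ t ∂(volume : Measure (ℝ × ℝ × ℝ)),
      t ∈ Set.Icc (0:ℝ) 1 ×ˢ (Set.Icc (0:ℝ) 1 ×ˢ Set.Icc (0:ℝ) 1) →
      W (t.1, t.2.1) * W (t.2.1, t.2.2) * (1 - W (t.1, t.2.2)) = 0)
    (hone : ∀ x y : ℝ,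
      Tendsto (fun ε : ℝ => (2 * ε) ^ (-2 : ℤ) *
        ∫ p in Set.Ioo (x - ε) (x + ε) ×ˢ Set.Ioo (y - ε) (y + ε),
          W p ∂(volume : Measure (ℝ × ℝ)))
        (nhdsWithin 0 (Set.Ioi 0)) (nhds 1) → W (x, y) = 1) :
    ∀ x y z : ℝ, x ∈ Set.Icc (0:ℝ) 1 → y ∈ Set.Icc (0:ℝ) 1 →
      z ∈ Set.Icc (0:ℝ) 1 →
      0 < W (x, y) → 0 < W (y, z) → W (x, z) = 1 := by
  intro x y z hx hy hz hxy hyz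
  have hT1 := hleb x y hxy
  have hT2 := hleb y z hyz
  obtain ⟨hxI, hyI⟩ := interior_of_lebesgue W hWmeas hrange hsupp x y hxy hT1
  obtain ⟨-, hzI⟩ := interior_of_lebesgue W hWmeas hrange hsupp y z hyz hT2
  set a1 := W (x, y) with ha1
  set a2 := W (y, z) with ha2
  have hb1 : ∀ p, |W p - a1| ≤ 1 := by
    intro p
    have h1 := hrange p; have h2 := hrange (x, y)
    rw [abs_le]; constructor
    · linarith [h1.1, h2.2]
    · linarith [h1.2, h2.1]
  have hb2 : ∀ p, |W p - a2| ≤ 1 := by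
    intro p
    have h1 := hrange p; have h2 := hrange (y, z)
    rw [abs_le]; constructor
    · linarith [h1.1, h2.2]
    · linarith [h1.2, h2.1]
  apply hone x z
  -- δ for interiority
  set δ : ℝ := min x (min (1 - x) (min y (min (1 - y) (min z (1 - z))))) with hδ
  have hδpos : 0 < δ := by
    simp only [hδ, lt_min_iff]
    exact ⟨hxI.1, by linarith [hxI.2], hyI.1, by linarith [hyI.2], hzI.1, by linarith [hzI.2]⟩
  -- the lower comparison function
  set L : ℝ → ℝ := fun ε => 1 - a1⁻¹ * ((2 * ε) ^ (-2 : ℤ) *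
      ∫ p in Set.Ioo (x - ε) (x + ε) ×ˢ Set.Ioo (y - ε) (y + ε), |W p - a1|)
    - a2⁻¹ * ((2 * ε) ^ (-2 : ℤ) *
      ∫ p in Set.Ioo (y - ε) (y + ε) ×ˢ Set.Ioo (z - ε) (z + ε), |W p - a2|) with hL
  have hLtend : Tendsto L (nhdsWithin 0 (Set.Ioi 0)) (nhds 1) := by
    have := (tendsto_const_nhds (x := (1:ℝ)) (f := nhdsWithin (0:ℝ) (Set.Ioi 0))).sub
      ((hT1.const_mul a1⁻¹).sub (hT2.const_mul a2⁻¹).neg).neg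
    simpa [hL] using ((tendsto_const_nhds (x := (1:ℝ))
        (f := nhdsWithin (0:ℝ) (Set.Ioi 0))).sub (hT1.const_mul a1⁻¹)).sub
        (hT2.const_mul a2⁻¹)
  apply tendsto_of_tendsto_of_tendsto_of_le_of_le' hLtend tendsto_const_nhds
  · -- L ≤ F eventually
    filter_upwards [Ioo_mem_nhdsGT_of_mem (Set.mem_Ico.2 ⟨le_refl (0:ℝ), hδpos⟩)] with ε hεδ
    obtain ⟨hε, hεδ'⟩ := hεδ
    have hδx : ε ≤ x := le_trans hεδ'.le (min_le_left _ _)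
    have hδ1x : ε ≤ 1 - x := le_trans hεδ'.le (le_trans (min_le_right _ _) (min_le_left _ _))
    have hδy : ε ≤ y := le_trans hεδ'.le (le_trans (min_le_right _ _)
      (le_trans (min_le_right _ _) (min_le_left _ _)))
    have hδ1y : ε ≤ 1 - y := le_trans hεδ'.le (le_trans (min_le_right _ _)
      (le_trans (min_le_right _ _) (le_trans (min_le_right _ _) (min_le_left _ _))))
    have hδz : ε ≤ z := le_trans hεδ'.le (le_trans (min_le_right _ _)
      (le_trans (min_le_right _ _) (le_trans (min_le_right _ _)
      (le_trans (min_le_right _ _) (min_le_left _ _)))))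
    have hδ1z : ε ≤ 1 - z := le_trans hεδ'.le (le_trans (min_le_right _ _)
      (le_trans (min_le_right _ _) (le_trans (min_le_right _ _)
      (le_trans (min_le_right _ _) (min_le_right _ _)))))
    have hsx : Ioo (x - ε) (x + ε) ⊆ Icc (0:ℝ) 1 := fun u hu =>
      ⟨by linarith [hu.1], by linarith [hu.2]⟩
    have hsy : Ioo (y - ε) (y + ε) ⊆ Icc (0:ℝ) 1 := fun u hu =>
      ⟨by linarith [hu.1], by linarith [hu.2]⟩
    have hsz : Ioo (z - ε) (z + ε) ⊆ Icc (0:ℝ) 1 := fun u hu =>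
      ⟨by linarith [hu.1], by linarith [hu.2]⟩
    -- measure bounds
    set B := Ioo (x - ε) (x + ε) ×ˢ Ioo (z - ε) (z + ε) with hBdef
    set G := B ∩ {p | W p ≠ 1} with hGdef
    set N1 := (Ioo (x - ε) (x + ε) ×ˢ Ioo (y - ε) (y + ε)) ∩ {p | W p ≤ 0} with hN1def
    set N2 := (Ioo (y - ε) (y + ε) ×ˢ Ioo (z - ε) (z + ε)) ∩ {p | W p ≤ 0} with hN2def
    have hkey : volume G ≤ volume N1 + volume N2 :=
      key_measure_bound W hWmeas hrange htriple x y z ε hε hsx hsy hsz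
    have hBvol : volume B = ENNReal.ofReal (2 * ε) * ENNReal.ofReal (2 * ε) := by
      rw [hBdef, show (volume : Measure (ℝ × ℝ)) = (volume : Measure ℝ).prod volume from rfl,
        Measure.prod_prod, Real.volume_Ioo, Real.volume_Ioo]; ring_nf
    have hBfin : volume B ≠ ⊤ := by
      rw [hBvol]; exact ENNReal.mul_ne_top ENNReal.ofReal_ne_top ENNReal.ofReal_ne_top
    have hN1fin : volume N1 ≠ ⊤ := by
      refine fun h => ?_
      have : volume ((Ioo (x - ε) (x + ε) ×ˢ Ioo (y - ε) (y + ε)) : Set (ℝ × ℝ)) = ⊤ :=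
        top_le_iff.1 (h ▸ measure_mono Set.inter_subset_left)
      rw [show (volume : Measure (ℝ × ℝ)) = (volume : Measure ℝ).prod volume from rfl,
        Measure.prod_prod, Real.volume_Ioo, Real.volume_Ioo] at this
      exact (ENNReal.mul_ne_top ENNReal.ofReal_ne_top ENNReal.ofReal_ne_top) this
    have hN2fin : volume N2 ≠ ⊤ := by
      refine fun h => ?_
      have : volume ((Ioo (y - ε) (y + ε) ×ˢ Ioo (z - ε) (z + ε)) : Set (ℝ × ℝ)) = ⊤ :=
        top_le_iff.1 (h ▸ measure_mono Set.inter_subset_left)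
      rw [show (volume : Measure (ℝ × ℝ)) = (volume : Measure ℝ).prod volume from rfl,
        Measure.prod_prod, Real.volume_Ioo, Real.volume_Ioo] at this
      exact (ENNReal.mul_ne_top ENNReal.ofReal_ne_top ENNReal.ofReal_ne_top) this
    have hGsub : G ⊆ B := Set.inter_subset_left
    have hGfin : volume G ≠ ⊤ := fun h => hBfin (top_le_iff.1 (h ▸ measure_mono hGsub))
    have hGm : MeasurableSet G :=
      (measurableSet_Ioo.prod measurableSet_Ioo).inter
        ((hWmeas (measurableSet_singleton 1)).compl)
    have hBm : MeasurableSet B := measurableSet_Ioo.prod measurableSet_Ioo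
    -- real versions
    have hgr : (volume G).toReal ≤ (volume N1).toReal + (volume N2).toReal := by
      rw [← ENNReal.toReal_add hN1fin hN2fin]
      exact ENNReal.toReal_mono (ENNReal.add_ne_top.2 ⟨hN1fin, hN2fin⟩) hkey
    have hch1 : a1 * (volume N1).toReal ≤
        ∫ p in Ioo (x - ε) (x + ε) ×ˢ Ioo (y - ε) (y + ε), |W p - a1| :=
      cheb W hWmeas a1 hxy hb1 x y ε hε
    have hch2 : a2 * (volume N2).toReal ≤
        ∫ p in Ioo (y - ε) (y + ε) ×ˢ Ioo (z - ε) (z + ε), |W p - a2| :=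
      cheb W hWmeas a2 hyz hb2 y z ε hε
    -- integral lower bound
    have hintW : IntegrableOn W B volume :=
      Measure.integrableOn_of_bounded hBfin hWmeas.aestronglyMeasurable
        (ae_of_all _ fun p => by
          rw [Real.norm_eq_abs, abs_of_nonneg (hrange p).1]; exact (hrange p).2)
    have hBGvol : volume (B \ G) = volume B - volume G := by
      rw [measure_diff hGsub hGm.nullMeasurableSet hGfin]
    have hint1 : ∫ p in B \ G, W p = (volume (B \ G)).toReal := by
      rw [setIntegral_congr_fun (hBm.diff hGm) (fun p hp => ?_), setIntegral_const,
        measureReal_def, smul_eq_mul, mul_one]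
      by_contra hne
      exact hp.2 ⟨hp.1, hne⟩
    have hint2 : ∫ p in B \ G, W p ≤ ∫ p in B, W p :=
      setIntegral_mono_set hintW (ae_of_all _ fun p => (hrange p).1)
        (HasSubset.Subset.eventuallyLE Set.diff_subset)
    have hBr : (volume B).toReal = 4 * ε ^ 2 := by
      rw [hBvol, ENNReal.toReal_mul,
        ENNReal.toReal_ofReal (by linarith : (0:ℝ) ≤ 2 * ε)]
      ring
    have hdiffr : (volume (B \ G)).toReal = (volume B).toReal - (volume G).toReal := by
      rw [hBGvol, ENNReal.toReal_sub_of_le (measure_mono hGsub) hBfin]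
    -- final arithmetic
    have hu : (0:ℝ) < (4 * ε ^ 2) := by positivity
    have hWlow : 4 * ε ^ 2 - ((volume N1).toReal + (volume N2).toReal) ≤ ∫ p in B, W p := by
      have := hint1 ▸ hint2
      rw [hdiffr, hBr] at this
      linarith
    simp only [hL]
    rw [zpow_neg2]
    set I1 := ∫ p in Ioo (x - ε) (x + ε) ×ˢ Ioo (y - ε) (y + ε), |W p - a1| with hI1
    set I2 := ∫ p in Ioo (y - ε) (y + ε) ×ˢ Ioo (z - ε) (z + ε), |W p - a2| with hI2
    have hn1 : (volume N1).toReal ≤ a1⁻¹ * I1 := by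
      rw [← mul_le_mul_iff_of_pos_left hxy, ← mul_assoc, mul_inv_cancel₀ hxy.ne', one_mul]
      exact hch1
    have hn2 : (volume N2).toReal ≤ a2⁻¹ * I2 := by
      rw [← mul_le_mul_iff_of_pos_left hyz, ← mul_assoc, mul_inv_cancel₀ hyz.ne', one_mul]
      exact hch2
    have hulow : 4 * ε ^ 2 - (a1⁻¹ * I1 + a2⁻¹ * I2) ≤ ∫ p in B, W p := by linarith
    have hinv : (4 * ε ^ 2)⁻¹ * (4 * ε ^ 2) = 1 := inv_mul_cancel₀ hu.ne'
    have := mul_le_mul_of_nonneg_left hulow (inv_nonneg.2 hu.le)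
    calc 1 - a1⁻¹ * ((4 * ε ^ 2)⁻¹ * I1) - a2⁻¹ * ((4 * ε ^ 2)⁻¹ * I2)
        = (4 * ε ^ 2)⁻¹ * (4 * ε ^ 2 - (a1⁻¹ * I1 + a2⁻¹ * I2)) := by
          rw [mul_sub, hinv]; ring
      _ ≤ (4 * ε ^ 2)⁻¹ * ∫ p in B, W p := this
  · -- F ≤ 1 eventually
    filter_upwards [eventually_mem_nhdsWithin] with ε hε
    simp only [Set.mem_Ioi] at hε
    set B := Ioo (x - ε) (x + ε) ×ˢ Ioo (z - ε) (z + ε) with hBdef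
    have hBvol : volume B = ENNReal.ofReal (2 * ε) * ENNReal.ofReal (2 * ε) := by
      rw [hBdef, show (volume : Measure (ℝ × ℝ)) = (volume : Measure ℝ).prod volume from rfl,
        Measure.prod_prod, Real.volume_Ioo, Real.volume_Ioo]; ring_nf
    have hBfin : volume B ≠ ⊤ := by
      rw [hBvol]; exact ENNReal.mul_ne_top ENNReal.ofReal_ne_top ENNReal.ofReal_ne_top
    have hintW : IntegrableOn W B volume :=
      Measure.integrableOn_of_bounded hBfin hWmeas.aestronglyMeasurable
        (ae_of_all _ fun p => by
          rw [Real.norm_eq_abs, abs_of_nonneg (hrange p).1]; exact (hrange p).2)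
    have h1 : ∫ p in B, W p ≤ ∫ p in B, (1:ℝ) :=
      setIntegral_mono hintW (integrableOn_const hBfin)
        (fun p => (hrange p).2)
    rw [setIntegral_const, measureReal_def, smul_eq_mul, mul_one] at h1
    have hBr : (volume B).toReal = 4 * ε ^ 2 := by
      rw [hBvol, ENNReal.toReal_mul,
        ENNReal.toReal_ofReal (by linarith : (0:ℝ) ≤ 2 * ε)]
      ring
    rw [hBr] at h1
    rw [zpow_neg2]
    have hu : (0:ℝ) < (4 * ε ^ 2) := by positivity
    calc (4 * ε ^ 2)⁻¹ * ∫ p in B, W p ≤ (4 * ε ^ 2)⁻¹ * (4 * ε ^ 2) :=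
          mul_le_mul_of_nonneg_left h1 (inv_nonneg.2 hu.le)
      _ = 1 := inv_mul_cancel₀ hu.ne'
end

section
/- Let W : [0,1]² → [0,1] be measurable such that every point (x,y) with W(x,y) > 0 is a Lebesgue point of W, and such that W(x₁,x₂)·W(x₂,x₃)·W(x₃,x₁) = 0 for Lebesgue-almost every (x₁,x₂,x₃) ∈ [0,1]³. Then for all x, y, z ∈ [0,1]: W(x,y) > 0 and W(y,z) > 0 imply W(z,x) = 0. -/
open MeasureTheory Filter

private lemma interval_len_aux (x ε : ℝ) (hx : x ∈ Set.Icc (0:ℝ) 1) (hε : 0 < ε)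
    (hε1 : ε ≤ 1) : ε ≤ min (x + ε) 1 - max (x - ε) 0 := by
  obtain ⟨hx0, hx1⟩ := hx
  rcases le_total (x + ε) 1 with h1 | h1 <;> rcases le_total (x - ε) 0 with h2 | h2
  · rw [min_eq_left h1, max_eq_right h2]; linarith
  · rw [min_eq_left h1, max_eq_left h2]; linarith
  · rw [min_eq_right h1, max_eq_right h2]; linarith
  · rw [min_eq_right h1, max_eq_left h2]; linarith

private lemma small_bad (W : ℝ × ℝ → ℝ) (hWmeas : Measurable W)
    (hrange : ∀ p, W p ∈ Set.Icc (0 : ℝ) 1) (x y : ℝ) (ha : 0 < W (x, y))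
    (hleb : Tendsto (fun ε : ℝ => (2 * ε) ^ (-2 : ℤ) *
        ∫ p in Set.Ioo (x - ε) (x + ε) ×ˢ Set.Ioo (y - ε) (y + ε),
          |W p - W (x, y)| ∂(volume : Measure (ℝ × ℝ)))
        (nhdsWithin 0 (Set.Ioi 0)) (nhds 0))
    {δ : ℝ} (hδ : 0 < δ) :
    ∀ᶠ ε in nhdsWithin (0:ℝ) (Set.Ioi 0),
      volume ((Set.Ioo (x - ε) (x + ε) ×ˢ Set.Ioo (y - ε) (y + ε)) ∩
        {p | W p ≤ W (x, y) / 2}) ≤ ENNReal.ofReal (δ * ε ^ 2) := by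
  have hδ' : (0:ℝ) < δ * W (x, y) / 8 := by positivity
  filter_upwards [Metric.tendsto_nhds.mp hleb _ hδ', self_mem_nhdsWithin] with ε havg hε
  have hεpos : (0:ℝ) < ε := hε
  set a := W (x, y) with ha_def
  set box := Set.Ioo (x - ε) (x + ε) ×ˢ Set.Ioo (y - ε) (y + ε) with hbox
  have hboxfin : volume box < ⊤ := by
    rw [hbox, Measure.volume_eq_prod, Measure.prod_prod]
    exact ENNReal.mul_lt_top measure_Ioo_lt_top measure_Ioo_lt_top
  haveI : Fact (volume box < ⊤) := ⟨hboxfin⟩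
  have hmeasf : Measurable fun p : ℝ × ℝ => |W p - a| := (hWmeas.sub measurable_const).abs
  have ha1 : a ≤ 1 := (hrange (x, y)).2
  have hint : Integrable (fun p => |W p - a|) (volume.restrict box) := by
    refine Integrable.mono' (integrable_const 1) hmeasf.aestronglyMeasurable ?_
    filter_upwards with p
    have h1 := (hrange p).1; have h2 := (hrange p).2
    rw [Real.norm_eq_abs, abs_abs, abs_sub_le_iff]
    constructor <;> linarith
  -- Markov's inequality
  have hmark := mul_meas_ge_le_integral_of_nonneg
    (ae_of_all _ fun p => abs_nonneg (W p - a)) hint (a / 2)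
  -- bound the integral
  set I := ∫ p in box, |W p - a| with hI
  have hInonneg : 0 ≤ I := integral_nonneg fun p => abs_nonneg _
  have hpow : (2 * ε) ^ (-2 : ℤ) = ((2 * ε) ^ 2)⁻¹ := by simp [zpow_neg, zpow_ofNat]
  have havg' : ((2 * ε) ^ 2)⁻¹ * I < δ * a / 8 := by
    have h := havg
    rw [Real.dist_eq, sub_zero] at h
    calc ((2 * ε) ^ 2)⁻¹ * I = |(2 * ε) ^ (-2 : ℤ) * I| := by
          rw [hpow, abs_of_nonneg (by positivity)]
      _ < δ * a / 8 := h
  have hIlt : I < a / 2 * (δ * ε ^ 2) := by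
    have h4 : (0:ℝ) < (2 * ε) ^ 2 := by positivity
    have h5 := (mul_lt_mul_iff_right₀ h4).2 havg'
    rw [mul_inv_cancel_left₀ h4.ne'] at h5
    nlinarith
  -- conclude
  have hset : MeasurableSet {p : ℝ × ℝ | a / 2 ≤ |W p - a|} :=
    measurableSet_le measurable_const hmeasf
  have hrw : (volume.restrict box) {p | a / 2 ≤ |W p - a|}
      = volume ({p | a / 2 ≤ |W p - a|} ∩ box) := Measure.restrict_apply hset
  have hsub : box ∩ {p | W p ≤ a / 2} ⊆ {p | a / 2 ≤ |W p - a|} ∩ box := by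
    rintro p ⟨hp1, hp2⟩
    refine ⟨?_, hp1⟩
    have h0 := (hrange p).1
    simp only [Set.mem_setOf_eq] at hp2 ⊢
    rw [abs_sub_comm, abs_of_nonneg (by linarith)]
    linarith
  have hfin2 : volume ({p : ℝ × ℝ | a / 2 ≤ |W p - a|} ∩ box) ≠ ⊤ :=
    ((measure_mono Set.inter_subset_right).trans_lt hboxfin).ne
  have hXle : (volume ({p : ℝ × ℝ | a / 2 ≤ |W p - a|} ∩ box)).toReal ≤ δ * ε ^ 2 := by
    rw [← hrw]
    rw [measureReal_def] at hmark
    nlinarith [hmark, hIlt, ENNReal.toReal_nonneg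
      (a := (volume.restrict box) {p | a / 2 ≤ |W p - a|})]
  refine (ENNReal.le_ofReal_iff_toReal_le
    (((measure_mono Set.inter_subset_left).trans_lt hboxfin).ne) (by positivity)).2 ?_
  calc (volume (box ∩ {p | W p ≤ a / 2})).toReal
      ≤ (volume ({p : ℝ × ℝ | a / 2 ≤ |W p - a|} ∩ box)).toReal :=
        ENNReal.toReal_mono hfin2 (measure_mono hsub)
    _ ≤ δ * ε ^ 2 := hXle

/-- If every point where `W > 0` is a Lebesgue point of `W` and
`W(x₁,x₂)W(x₂,x₃)W(x₃,x₁) = 0` for a.e. `(x₁,x₂,x₃) ∈ [0,1]³`, then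
`W(x,y) > 0` and `W(y,z) > 0` imply `W(z,x) = 0` for all `x, y, z ∈ [0,1]`. -/
theorem kernel_no_cycle_from_lebesgue_points
    (W : ℝ × ℝ → ℝ) (hWmeas : Measurable W)
    (hrange : ∀ p, W p ∈ Set.Icc (0 : ℝ) 1)
    (hsupp : ∀ p : ℝ × ℝ, p ∉ Set.Icc (0:ℝ) 1 ×ˢ Set.Icc (0:ℝ) 1 → W p = 0)
    (hleb : ∀ x y : ℝ, 0 < W (x, y) →
      Tendsto (fun ε : ℝ => (2 * ε) ^ (-2 : ℤ) *
        ∫ p in Set.Ioo (x - ε) (x + ε) ×ˢ Set.Ioo (y - ε) (y + ε),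
          |W p - W (x, y)| ∂(volume : Measure (ℝ × ℝ)))
        (nhdsWithin 0 (Set.Ioi 0)) (nhds 0))
    (htriple : ∀ᵐ t ∂(volume : Measure (ℝ × ℝ × ℝ)),
      t ∈ Set.Icc (0:ℝ) 1 ×ˢ (Set.Icc (0:ℝ) 1 ×ˢ Set.Icc (0:ℝ) 1) →
      W (t.1, t.2.1) * W (t.2.1, t.2.2) * W (t.2.2, t.1) = 0) :
    ∀ x y z : ℝ, x ∈ Set.Icc (0:ℝ) 1 → y ∈ Set.Icc (0:ℝ) 1 →
      z ∈ Set.Icc (0:ℝ) 1 →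
      0 < W (x, y) → 0 < W (y, z) → W (z, x) = 0 := by
  intro x y z hx hy hz hxy hyz
  by_contra hzx0
  have hzx : 0 < W (z, x) := lt_of_le_of_ne (hrange (z, x)).1 (Ne.symm hzx0)
  have hδ : (0:ℝ) < 1/12 := by norm_num
  have h1 := small_bad W hWmeas hrange x y hxy (hleb x y hxy) hδ
  have h2 := small_bad W hWmeas hrange y z hyz (hleb y z hyz) hδ
  have h3 := small_bad W hWmeas hrange z x hzx (hleb z x hzx) hδ
  have h4 : ∀ᶠ ε : ℝ in nhdsWithin (0:ℝ) (Set.Ioi 0), ε < 1 :=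
    eventually_mem_set.2 (nhdsWithin_le_nhds (Iio_mem_nhds one_pos))
  have h5 : ∀ᶠ ε : ℝ in nhdsWithin (0:ℝ) (Set.Ioi 0), 0 < ε := self_mem_nhdsWithin
  obtain ⟨ε, hB1, hB2, hB3, hε1, hε0⟩ := (h1.and (h2.and (h3.and (h4.and h5)))).exists
  have hεpos : (0:ℝ) < ε := hε0
  have hεle1 : ε ≤ 1 := hε1.le
  -- notation
  set Ix := Set.Ioo (x - ε) (x + ε) with hIxd
  set Iy := Set.Ioo (y - ε) (y + ε) with hIyd
  set Iz := Set.Ioo (z - ε) (z + ε) with hIzd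
  set B1 := (Ix ×ˢ Iy) ∩ {p | W p ≤ W (x, y) / 2} with hB1d
  set B2 := (Iy ×ˢ Iz) ∩ {p | W p ≤ W (y, z) / 2} with hB2d
  set B3 := (Iz ×ˢ Ix) ∩ {p | W p ≤ W (z, x) / 2} with hB3d
  have hmB1 : MeasurableSet B1 :=
    (measurableSet_Ioo.prod measurableSet_Ioo).inter (measurableSet_le hWmeas measurable_const)
  have hmB2 : MeasurableSet B2 :=
    (measurableSet_Ioo.prod measurableSet_Ioo).inter (measurableSet_le hWmeas measurable_const)
  have hmB3 : MeasurableSet B3 :=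
    (measurableSet_Ioo.prod measurableSet_Ioo).inter (measurableSet_le hWmeas measurable_const)
  -- the cyclic shift is measure preserving
  have hcyc : MeasurePreserving (fun t : ℝ × ℝ × ℝ => (t.2.1, t.2.2, t.1)) volume volume := by
    have hs : MeasurePreserving (Prod.swap) (volume : Measure (ℝ × (ℝ × ℝ)))
        (volume : Measure ((ℝ × ℝ) × ℝ)) := by
      rw [Measure.volume_eq_prod, Measure.volume_eq_prod]
      exact Measure.measurePreserving_swap
    exact (volume_preserving_prodAssoc (α₁ := ℝ) (β₁ := ℝ) (γ₁ := ℝ)).comp hs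
  set cyc : ℝ × ℝ × ℝ → ℝ × ℝ × ℝ := fun t => (t.2.1, t.2.2, t.1) with hcycd
  -- bad sets
  set A1 := cyc ⁻¹' (cyc ⁻¹' (Iz ×ˢ B1)) with hA1d
  set A2 := (Ix ×ˢ B2 : Set (ℝ × ℝ × ℝ)) with hA2d
  set A3 := cyc ⁻¹' (Iy ×ˢ B3) with hA3d
  have hIvol : ∀ w : ℝ, volume (Set.Ioo (w - ε) (w + ε)) = ENNReal.ofReal (2 * ε) := by
    intro w; rw [Real.volume_Ioo]; congr 1; ring
  have hprod2 : ∀ (s : Set ℝ) (t : Set (ℝ × ℝ)), MeasurableSet t →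
      volume (s ×ˢ t) = volume s * volume t := by
    intro s t _
    rw [Measure.volume_eq_prod, Measure.prod_prod]
  have hvolA1 : volume A1 = volume Iz * volume B1 := by
    rw [hA1d, hcyc.measure_preimage
      ((hcyc.measurable (measurableSet_Ioo.prod hmB1)).nullMeasurableSet),
      hcyc.measure_preimage ((measurableSet_Ioo.prod hmB1).nullMeasurableSet),
      hprod2 _ _ hmB1]
  have hvolA2 : volume A2 = volume Ix * volume B2 := hprod2 _ _ hmB2
  have hvolA3 : volume A3 = volume Iy * volume B3 := by
    rw [hA3d, hcyc.measure_preimage ((measurableSet_Ioo.prod hmB3).nullMeasurableSet),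
      hprod2 _ _ hmB3]
  have hAbound : ∀ (A : Set (ℝ × ℝ × ℝ)) (w : ℝ) (B : Set (ℝ × ℝ)),
      volume A = volume (Set.Ioo (w - ε) (w + ε)) * volume B →
      volume B ≤ ENNReal.ofReal (1 / 12 * ε ^ 2) →
      volume A ≤ ENNReal.ofReal (ε ^ 3 / 6) := by
    intro A w B hvol hB
    rw [hvol, hIvol]
    calc ENNReal.ofReal (2 * ε) * volume B
        ≤ ENNReal.ofReal (2 * ε) * ENNReal.ofReal (1 / 12 * ε ^ 2) := mul_le_mul_right hB _
      _ = ENNReal.ofReal (ε ^ 3 / 6) := by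
          rw [← ENNReal.ofReal_mul (by positivity)]; congr 1; ring
  have hA1b : volume A1 ≤ ENNReal.ofReal (ε ^ 3 / 6) := hAbound A1 z B1 hvolA1 hB1
  have hA2b : volume A2 ≤ ENNReal.ofReal (ε ^ 3 / 6) := hAbound A2 x B2 hvolA2 hB2
  have hA3b : volume A3 ≤ ENNReal.ofReal (ε ^ 3 / 6) := hAbound A3 y B3 hvolA3 hB3
  -- good cube
  set Jx := Set.Ioo (max (x - ε) 0) (min (x + ε) 1) with hJxd
  set Jy := Set.Ioo (max (y - ε) 0) (min (y + ε) 1) with hJyd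
  set Jz := Set.Ioo (max (z - ε) 0) (min (z + ε) 1) with hJzd
  have hJIcc : ∀ w : ℝ, Set.Ioo (max (w - ε) 0) (min (w + ε) 1) ⊆ Set.Icc (0:ℝ) 1 :=
    fun w => (Set.Ioo_subset_Icc_self).trans
      (Set.Icc_subset_Icc (le_max_right _ _) (min_le_right _ _))
  have hJI : ∀ w : ℝ, Set.Ioo (max (w - ε) 0) (min (w + ε) 1) ⊆ Set.Ioo (w - ε) (w + ε) :=
    fun w => Set.Ioo_subset_Ioo (le_max_left _ _) (min_le_left _ _)
  have hJvol : ∀ w : ℝ, w ∈ Set.Icc (0:ℝ) 1 →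
      ENNReal.ofReal ε ≤ volume (Set.Ioo (max (w - ε) 0) (min (w + ε) 1)) := by
    intro w hw
    rw [Real.volume_Ioo]
    exact ENNReal.ofReal_le_ofReal (interval_len_aux w ε hw hεpos hεle1)
  set J := (Jx ×ˢ (Jy ×ˢ Jz) : Set (ℝ × ℝ × ℝ)) with hJd
  set Abad := A1 ∪ A2 ∪ A3 with hAbadd
  -- the good set is null by htriple
  have hG0 : volume (J \ Abad) = 0 := by
    refine measure_mono_null ?_ (ae_iff.mp htriple)
    rintro t ⟨htJ, htA⟩
    obtain ⟨ht1, ht2, ht3⟩ : t.1 ∈ Jx ∧ t.2.1 ∈ Jy ∧ t.2.2 ∈ Jz := ⟨htJ.1, htJ.2.1, htJ.2.2⟩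
    have hnA1 : t ∉ A1 := fun h => htA (Or.inl (Or.inl h))
    have hnA2 : t ∉ A2 := fun h => htA (Or.inl (Or.inr h))
    have hnA3 : t ∉ A3 := fun h => htA (Or.inr h)
    have hW1 : W (x, y) / 2 < W (t.1, t.2.1) := by
      by_contra h
      push_neg at h
      exact hnA1 ⟨hJI z ht3, ⟨hJI x ht1, hJI y ht2⟩, h⟩
    have hW2 : W (y, z) / 2 < W (t.2.1, t.2.2) := by
      by_contra h
      push_neg at h
      exact hnA2 ⟨hJI x ht1, ⟨hJI y ht2, hJI z ht3⟩, h⟩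
    have hW3 : W (z, x) / 2 < W (t.2.2, t.1) := by
      by_contra h
      push_neg at h
      exact hnA3 ⟨hJI y ht2, ⟨hJI z ht3, hJI x ht1⟩, h⟩
    have hmem : t ∈ Set.Icc (0:ℝ) 1 ×ˢ (Set.Icc (0:ℝ) 1 ×ˢ Set.Icc (0:ℝ) 1) :=
      ⟨hJIcc x ht1, hJIcc y ht2, hJIcc z ht3⟩
    have hpos : 0 < W (t.1, t.2.1) * W (t.2.1, t.2.2) * W (t.2.2, t.1) :=
      mul_pos (mul_pos (by linarith) (by linarith)) (by linarith)
    exact fun hP => hpos.ne' (hP hmem)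
  -- measure bounds give a contradiction
  have hJle : volume J ≤ volume Abad := by
    calc volume J ≤ volume ((J \ Abad) ∪ Abad) :=
          measure_mono (fun t ht => (em (t ∈ Abad)).elim Or.inr (fun h => Or.inl ⟨ht, h⟩))
      _ ≤ volume (J \ Abad) + volume Abad := measure_union_le _ _
      _ = volume Abad := by rw [hG0, zero_add]
  have hAbadb : volume Abad ≤ ENNReal.ofReal (ε ^ 3 / 2) := by
    calc volume Abad ≤ volume A1 + volume A2 + volume A3 :=
          (measure_union_le _ _).trans (add_le_add_left (measure_union_le _ _) _)
      _ ≤ ENNReal.ofReal (ε ^ 3 / 6) + ENNReal.ofReal (ε ^ 3 / 6) + ENNReal.ofReal (ε ^ 3 / 6) :=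
          add_le_add (add_le_add hA1b hA2b) hA3b
      _ = ENNReal.ofReal (ε ^ 3 / 2) := by
          rw [← ENNReal.ofReal_add (by positivity) (by positivity),
            ← ENNReal.ofReal_add (by positivity) (by positivity)]
          congr 1; ring
  have hJge : ENNReal.ofReal (ε ^ 3) ≤ volume J := by
    have hinner : volume (Jy ×ˢ Jz) = volume Jy * volume Jz := by
      rw [Measure.volume_eq_prod, Measure.prod_prod]
    have houter : volume J = volume Jx * volume (Jy ×ˢ Jz) := by
      rw [hJd, Measure.volume_eq_prod, Measure.prod_prod]
    calc ENNReal.ofReal (ε ^ 3)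
        = ENNReal.ofReal ε * (ENNReal.ofReal ε * ENNReal.ofReal ε) := by
          rw [← ENNReal.ofReal_mul hεpos.le, ← ENNReal.ofReal_mul hεpos.le]
          congr 1; ring
      _ ≤ volume Jx * (volume Jy * volume Jz) :=
          mul_le_mul' (hJvol x hx) (mul_le_mul' (hJvol y hy) (hJvol z hz))
      _ = volume J := by rw [houter, hinner]
  have hcontr : ENNReal.ofReal (ε ^ 3) ≤ ENNReal.ofReal (ε ^ 3 / 2) :=
    hJge.trans (hJle.trans hAbadb)
  have hlt : ENNReal.ofReal (ε ^ 3 / 2) < ENNReal.ofReal (ε ^ 3) :=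
    (ENNReal.ofReal_lt_ofReal_iff (by positivity)).2 (by nlinarith [pow_pos hεpos 3])
  exact absurd hcontr hlt.not_ge
end

section
/- Let W₁ : S₁² → ℝ and W₂ : S₂² → ℝ be finite-type integrable functions on probability spaces (S₁, μ₁), (S₂, μ₂), with corresponding partitions {A_i}_{i=1}^{N₁}, {B_j}_{j=1}^{N₂}. If φ₁ : S → S₁ and φ₂ : S → S₂ are measure-preserving maps from a common probability space (S, μ), then the cut norm ‖W₁∘(φ₁×φ₁) − W₂∘(φ₂×φ₂)‖□ depends only on the values of W₁ on the A_i × A_{i'}, the values of W₂ on the B_j × B_{j'}, and the numbers μ(φ₁⁻¹(A_i) ∩ φ₂⁻¹(B_j)). -/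
open MeasureTheory

/-- A linear functional on a box is bounded in absolute value by its value on some vertex. -/
lemma lin_vertex {ι : Type*} [Fintype ι] (d a m : ι → ℝ)
    (h0 : ∀ k, 0 ≤ a k) (hm : ∀ k, a k ≤ m k) :
    ∃ s : Finset ι, |∑ k, d k * a k| ≤ |∑ k ∈ s, d k * m k| := by
  classical
  set sp : Finset ι := Finset.univ.filter (fun k => 0 ≤ d k) with hsp
  set sn : Finset ι := Finset.univ.filter (fun k => ¬ (0 ≤ d k)) with hsn
  have hub : ∑ k, d k * a k ≤ ∑ k ∈ sp, d k * m k := by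
    have h1 : ∑ k, d k * a k
        = ∑ k ∈ sp, d k * a k + ∑ k ∈ sn, d k * a k := by
      rw [hsp, hsn, Finset.sum_filter_add_sum_filter_not]
    rw [h1]
    have h2 : ∑ k ∈ sp, d k * a k ≤ ∑ k ∈ sp, d k * m k := by
      apply Finset.sum_le_sum
      intro k hk
      have hdk : 0 ≤ d k := (Finset.mem_filter.1 hk).2
      exact mul_le_mul_of_nonneg_left (hm k) hdk
    have h3 : ∑ k ∈ sn, d k * a k ≤ 0 := by
      apply Finset.sum_nonpos
      intro k hk
      have hdk : d k ≤ 0 := le_of_lt (lt_of_not_ge (Finset.mem_filter.1 hk).2)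
      exact mul_nonpos_of_nonpos_of_nonneg hdk (h0 k)
    linarith
  have hlb : ∑ k ∈ sn, d k * m k ≤ ∑ k, d k * a k := by
    have h1 : ∑ k, d k * a k
        = ∑ k ∈ sp, d k * a k + ∑ k ∈ sn, d k * a k := by
      rw [hsp, hsn, Finset.sum_filter_add_sum_filter_not]
    rw [h1]
    have h2 : ∑ k ∈ sn, d k * m k ≤ ∑ k ∈ sn, d k * a k := by
      apply Finset.sum_le_sum
      intro k hk
      have hdk : d k ≤ 0 := le_of_lt (lt_of_not_ge (Finset.mem_filter.1 hk).2)
      exact mul_le_mul_of_nonpos_left (hm k) hdk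
    have h3 : 0 ≤ ∑ k ∈ sp, d k * a k := by
      apply Finset.sum_nonneg
      intro k hk
      exact mul_nonneg (Finset.mem_filter.1 hk).2 (h0 k)
    linarith
  have := abs_le_max_abs_abs hlb hub
  rcases le_total |∑ k ∈ sn, d k * m k| |∑ k ∈ sp, d k * m k| with h | h
  · exact ⟨sp, by rw [max_eq_right h] at this; exact this⟩
  · exact ⟨sn, by rw [max_eq_left h] at this; exact this⟩

lemma bilin_vertex {ι : Type*} [Fintype ι] (c : ι → ι → ℝ) (m a b : ι → ℝ)
    (ha0 : ∀ k, 0 ≤ a k) (ham : ∀ k, a k ≤ m k)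
    (hb0 : ∀ k, 0 ≤ b k) (hbm : ∀ k, b k ≤ m k) :
    ∃ s t : Finset ι, |∑ k, ∑ l, c k l * a k * b l|
      ≤ |∑ k ∈ s, ∑ l ∈ t, c k l * m k * m l| := by
  classical
  have h1 : ∑ k, ∑ l, c k l * a k * b l
      = ∑ k, (∑ l, c k l * b l) * a k := by
    refine Finset.sum_congr rfl (fun k _ => ?_)
    rw [Finset.sum_mul]
    exact Finset.sum_congr rfl (fun l _ => by ring)
  obtain ⟨s, hs⟩ := lin_vertex (fun k => ∑ l, c k l * b l) a m ha0 ham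
  have h2 : ∑ k ∈ s, (∑ l, c k l * b l) * m k
      = ∑ l, (∑ k ∈ s, c k l * m k) * b l := by
    have : ∑ k ∈ s, (∑ l, c k l * b l) * m k = ∑ k ∈ s, ∑ l, c k l * b l * m k := by
      refine Finset.sum_congr rfl (fun k _ => ?_)
      rw [Finset.sum_mul]
    rw [this, Finset.sum_comm]
    refine Finset.sum_congr rfl (fun l _ => ?_)
    rw [Finset.sum_mul]
    exact Finset.sum_congr rfl (fun k _ => by ring)
  obtain ⟨t, ht⟩ := lin_vertex (fun l => ∑ k ∈ s, c k l * m k) b m hb0 hbm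
  have h3 : ∑ l ∈ t, (∑ k ∈ s, c k l * m k) * m l
      = ∑ k ∈ s, ∑ l ∈ t, c k l * m k * m l := by
    have : ∑ l ∈ t, (∑ k ∈ s, c k l * m k) * m l = ∑ l ∈ t, ∑ k ∈ s, c k l * m k * m l := by
      refine Finset.sum_congr rfl (fun l _ => ?_)
      rw [Finset.sum_mul]
    rw [this, Finset.sum_comm]
  refine ⟨s, t, ?_⟩
  calc |∑ k, ∑ l, c k l * a k * b l| = |∑ k, (∑ l, c k l * b l) * a k| := by rw [h1]
    _ ≤ |∑ k ∈ s, (∑ l, c k l * b l) * m k| := hs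
    _ = |∑ l, (∑ k ∈ s, c k l * m k) * b l| := by rw [h2]
    _ ≤ |∑ l ∈ t, (∑ k ∈ s, c k l * m k) * m l| := ht
    _ = |∑ k ∈ s, ∑ l ∈ t, c k l * m k * m l| := by rw [h3]

/-- Integral of a finite-type function over a product of sets. -/
lemma integral_formula {T : Type*} [MeasurableSpace T] (ν : Measure T)
    [IsProbabilityMeasure ν]
    {ι : Type*} [Fintype ι] (Ck : ι → Set T) (hmeas : ∀ k, MeasurableSet (Ck k))
    (hdisj : Pairwise (Function.onFun Disjoint Ck)) (hcover : (⋃ k, Ck k) = Set.univ)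
    (U : T × T → ℝ) (c : ι → ι → ℝ)
    (hU : ∀ k l x y, x ∈ Ck k → y ∈ Ck l → U (x, y) = c k l)
    (C D : Set T) (hC : MeasurableSet C) (hD : MeasurableSet D) :
    ∫ p in C ×ˢ D, U p ∂(ν.prod ν)
      = ∑ k, ∑ l, c k l * (ν (C ∩ Ck k)).toReal * (ν (D ∩ Ck l)).toReal := by
  classical
  set piece : ι × ι → Set (T × T) := fun q => (C ∩ Ck q.1) ×ˢ (D ∩ Ck q.2) with hpiece
  have hpmeas : ∀ q, MeasurableSet (piece q) :=
    fun q => (hC.inter (hmeas q.1)).prod (hD.inter (hmeas q.2))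
  have hset : C ×ˢ D = ⋃ q, piece q := by
    ext ⟨x, y⟩
    simp only [Set.mem_prod, Set.mem_iUnion, hpiece, Set.mem_inter_iff]
    constructor
    · rintro ⟨hx, hy⟩
      have hx' : x ∈ ⋃ k, Ck k := hcover ▸ Set.mem_univ x
      have hy' : y ∈ ⋃ k, Ck k := hcover ▸ Set.mem_univ y
      obtain ⟨k, hk⟩ := Set.mem_iUnion.1 hx'
      obtain ⟨l, hl⟩ := Set.mem_iUnion.1 hy'
      exact ⟨(k, l), ⟨hx, hk⟩, hy, hl⟩
    · rintro ⟨q, ⟨hx, _⟩, hy, _⟩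
      exact ⟨hx, hy⟩
  have hpdisj : Pairwise (Function.onFun Disjoint piece) := by
    intro q q' hqq'
    rw [Function.onFun]
    rw [Set.disjoint_left]
    rintro ⟨x, y⟩ ⟨⟨hx1, hx2⟩, hy1, hy2⟩ ⟨⟨hx1', hx2'⟩, hy1', hy2'⟩
    by_cases h1 : q.1 = q'.1
    · have h2 : q.2 ≠ q'.2 := fun h2 => hqq' (Prod.ext h1 h2)
      exact Set.disjoint_left.1 (hdisj h2) hy2 hy2'
    · exact Set.disjoint_left.1 (hdisj h1) hx2 hx2'
  have hUconst : ∀ q : ι × ι, ∀ p ∈ piece q, U p = c q.1 q.2 := by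
    rintro q ⟨x, y⟩ ⟨⟨_, hx⟩, _, hy⟩
    exact hU q.1 q.2 x y hx hy
  have hint : ∀ q : ι × ι, IntegrableOn U (piece q) (ν.prod ν) := by
    intro q
    rw [integrableOn_congr_fun (hUconst q) (hpmeas q)]
    exact integrableOn_const (measure_ne_top _ _)
  rw [hset, integral_iUnion_fintype hpmeas hpdisj hint]
  have hval : ∀ q : ι × ι, ∫ p in piece q, U p ∂(ν.prod ν)
      = c q.1 q.2 * (ν (C ∩ Ck q.1)).toReal * (ν (D ∩ Ck q.2)).toReal := by
    intro q
    rw [setIntegral_congr_fun (hpmeas q) (hUconst q), setIntegral_const,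
      hpiece]
    simp only [measureReal_def, Measure.prod_prod, ENNReal.toReal_mul, smul_eq_mul]
    ring
  rw [Fintype.sum_prod_type]
  exact Finset.sum_congr rfl fun k _ => Finset.sum_congr rfl fun l _ => hval (k, l)

lemma side_sSup {T : Type*} [MeasurableSpace T] (ν : Measure T)
    [IsProbabilityMeasure ν]
    {ι : Type*} [Fintype ι] (Ck : ι → Set T) (hmeas : ∀ k, MeasurableSet (Ck k))
    (hdisj : Pairwise (Function.onFun Disjoint Ck)) (hcover : (⋃ k, Ck k) = Set.univ)
    (U : T × T → ℝ) (c : ι → ι → ℝ)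
    (hU : ∀ k l x y, x ∈ Ck k → y ∈ Ck l → U (x, y) = c k l)
    (m : ι → ℝ) (hm : ∀ k, m k = (ν (Ck k)).toReal)
    (s₀ t₀ : Finset ι)
    (hmax : ∀ s t : Finset ι, |∑ k ∈ s, ∑ l ∈ t, c k l * m k * m l|
      ≤ |∑ k ∈ s₀, ∑ l ∈ t₀, c k l * m k * m l|) :
    sSup {x : ℝ | ∃ C D : Set T, MeasurableSet C ∧ MeasurableSet D ∧
        x = |∫ p in C ×ˢ D, U p ∂(ν.prod ν)|}
      = |∑ k ∈ s₀, ∑ l ∈ t₀, c k l * m k * m l| := by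
  classical
  set M : ℝ := |∑ k ∈ s₀, ∑ l ∈ t₀, c k l * m k * m l| with hM
  -- upper bound
  have hub : ∀ x ∈ {x : ℝ | ∃ C D : Set T, MeasurableSet C ∧ MeasurableSet D ∧
      x = |∫ p in C ×ˢ D, U p ∂(ν.prod ν)|}, x ≤ M := by
    rintro x ⟨C, D, hC, hD, rfl⟩
    rw [integral_formula ν Ck hmeas hdisj hcover U c hU C D hC hD]
    have ha0 : ∀ k, (0:ℝ) ≤ (ν (C ∩ Ck k)).toReal := fun k => ENNReal.toReal_nonneg
    have ham : ∀ k, (ν (C ∩ Ck k)).toReal ≤ m k := by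
      intro k
      rw [hm k]
      exact ENNReal.toReal_le_toReal (measure_ne_top _ _) (measure_ne_top _ _) |>.2
        (measure_mono Set.inter_subset_right)
    have hb0 : ∀ k, (0:ℝ) ≤ (ν (D ∩ Ck k)).toReal := fun k => ENNReal.toReal_nonneg
    have hbm : ∀ k, (ν (D ∩ Ck k)).toReal ≤ m k := by
      intro k
      rw [hm k]
      exact ENNReal.toReal_le_toReal (measure_ne_top _ _) (measure_ne_top _ _) |>.2
        (measure_mono Set.inter_subset_right)
    obtain ⟨s, t, hst⟩ := bilin_vertex c m _ _ ha0 ham hb0 hbm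
    exact hst.trans (hmax s t)
  -- membership: M is attained
  have hvertex : ∀ s : Finset ι, ∀ k : ι,
      (ν ((⋃ j ∈ s, Ck j) ∩ Ck k)).toReal = if k ∈ s then m k else 0 := by
    intro s k
    by_cases hk : k ∈ s
    · rw [if_pos hk, hm k]
      have hsub : Ck k ⊆ ⋃ j ∈ s, Ck j := Set.subset_biUnion_of_mem hk
      rw [Set.inter_eq_right.2 hsub]
    · rw [if_neg hk]
      have : (⋃ j ∈ s, Ck j) ∩ Ck k = ∅ := by
        ext x
        simp only [Set.mem_inter_iff, Set.mem_iUnion, Set.mem_empty_iff_false, iff_false,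
          not_and, not_exists]
        rintro ⟨j, hj, hxj⟩ hxk
        exact Set.disjoint_left.1 (hdisj (fun h : j = k => hk (h ▸ hj))) hxj hxk
      rw [this, measure_empty, ENNReal.toReal_zero]
  have hmem : M ∈ {x : ℝ | ∃ C D : Set T, MeasurableSet C ∧ MeasurableSet D ∧
      x = |∫ p in C ×ˢ D, U p ∂(ν.prod ν)|} := by
    refine ⟨⋃ j ∈ s₀, Ck j, ⋃ j ∈ t₀, Ck j,
      s₀.measurableSet_biUnion (fun j _ => hmeas j),
      t₀.measurableSet_biUnion (fun j _ => hmeas j), ?_⟩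
    rw [integral_formula ν Ck hmeas hdisj hcover U c hU _ _
      (s₀.measurableSet_biUnion (fun j _ => hmeas j))
      (t₀.measurableSet_biUnion (fun j _ => hmeas j))]
    have step1 : ∑ k, ∑ l, c k l * (ν ((⋃ j ∈ s₀, Ck j) ∩ Ck k)).toReal *
        (ν ((⋃ j ∈ t₀, Ck j) ∩ Ck l)).toReal
        = ∑ k ∈ s₀, ∑ l ∈ t₀, c k l * m k * m l := by
      rw [← Finset.sum_subset (Finset.subset_univ s₀) (fun k _ hk => by
        simp [hvertex s₀ k, hk])]
      refine Finset.sum_congr rfl (fun k hk => ?_)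
      rw [← Finset.sum_subset (Finset.subset_univ t₀) (fun l _ hl => by
        simp [hvertex t₀ l, hl])]
      refine Finset.sum_congr rfl (fun l hl => ?_)
      rw [hvertex s₀ k, hvertex t₀ l, if_pos hk, if_pos hl]
    rw [step1]
  exact le_antisymm (Real.sSup_le hub (le_trans (abs_nonneg _) (hub M hmem)))
    (le_csSup ⟨M, hub⟩ hmem)

/-- For finite-type functions `W₁`, `W₂` with partitions `{A_i}`,
`{B_j}`, the cut norm `‖W₁^{φ₁} − W₂^{φ₂}‖□` depends only on the values of
`W₁`, `W₂` and the numbers `μ(φ₁⁻¹(A_i) ∩ φ₂⁻¹(B_j))`: two couplings with the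
same intersection measures give equal cut norms. -/
theorem cut_norm_finite_type_depends_only_on_intersections
    {S₁ S₂ : Type*} [MeasurableSpace S₁] [MeasurableSpace S₂]
    (μ₁ : Measure S₁) (μ₂ : Measure S₂)
    [IsProbabilityMeasure μ₁] [IsProbabilityMeasure μ₂]
    (W₁ : S₁ × S₁ → ℝ) (W₂ : S₂ × S₂ → ℝ)
    (hW₁ : Integrable W₁ (μ₁.prod μ₁)) (hW₂ : Integrable W₂ (μ₂.prod μ₂))
    (N₁ N₂ : ℕ) (A : Fin N₁ → Set S₁) (B : Fin N₂ → Set S₂)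
    (hAmeas : ∀ i, MeasurableSet (A i)) (hBmeas : ∀ j, MeasurableSet (B j))
    (hAdisj : Pairwise fun i i' => Disjoint (A i) (A i'))
    (hBdisj : Pairwise fun j j' => Disjoint (B j) (B j'))
    (hAcover : (⋃ i, A i) = Set.univ) (hBcover : (⋃ j, B j) = Set.univ)
    (hW₁const : ∀ i i' : Fin N₁, ∀ x x' y y' : S₁, x ∈ A i → x' ∈ A i →
      y ∈ A i' → y' ∈ A i' → W₁ (x, y) = W₁ (x', y'))
    (hW₂const : ∀ j j' : Fin N₂, ∀ x x' y y' : S₂, x ∈ B j → x' ∈ B j →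
      y ∈ B j' → y' ∈ B j' → W₂ (x, y) = W₂ (x', y'))
    {T T' : Type*} [MeasurableSpace T] [MeasurableSpace T']
    (ν : Measure T) (ν' : Measure T')
    [IsProbabilityMeasure ν] [IsProbabilityMeasure ν']
    (φ₁ : T → S₁) (φ₂ : T → S₂) (ψ₁ : T' → S₁) (ψ₂ : T' → S₂)
    (hφ₁ : MeasurePreserving φ₁ ν μ₁) (hφ₂ : MeasurePreserving φ₂ ν μ₂)
    (hψ₁ : MeasurePreserving ψ₁ ν' μ₁) (hψ₂ : MeasurePreserving ψ₂ ν' μ₂)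
    (hsame : ∀ i j, ν (φ₁ ⁻¹' A i ∩ φ₂ ⁻¹' B j) = ν' (ψ₁ ⁻¹' A i ∩ ψ₂ ⁻¹' B j)) :
    sSup {t : ℝ | ∃ C D : Set T, MeasurableSet C ∧ MeasurableSet D ∧
        t = |∫ p in C ×ˢ D,
          (W₁ (φ₁ p.1, φ₁ p.2) - W₂ (φ₂ p.1, φ₂ p.2)) ∂(ν.prod ν)|} =
      sSup {t : ℝ | ∃ C D : Set T', MeasurableSet C ∧ MeasurableSet D ∧
        t = |∫ p in C ×ˢ D,
          (W₁ (ψ₁ p.1, ψ₁ p.2) - W₂ (ψ₂ p.1, ψ₂ p.2)) ∂(ν'.prod ν')|} := by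
  classical
  set ι := Fin N₁ × Fin N₂ with hι
  -- the common values
  set v₁ : Fin N₁ → Fin N₁ → ℝ := fun i i' =>
    if h : (A i).Nonempty ∧ (A i').Nonempty then W₁ (h.1.choose, h.2.choose) else 0 with hv₁
  set v₂ : Fin N₂ → Fin N₂ → ℝ := fun j j' =>
    if h : (B j).Nonempty ∧ (B j').Nonempty then W₂ (h.1.choose, h.2.choose) else 0 with hv₂
  set c : ι → ι → ℝ := fun k l => v₁ k.1 l.1 - v₂ k.2 l.2 with hc
  -- the parts
  set Ck : ι → Set T := fun k => φ₁ ⁻¹' A k.1 ∩ φ₂ ⁻¹' B k.2 with hCk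
  set Ck' : ι → Set T' := fun k => ψ₁ ⁻¹' A k.1 ∩ ψ₂ ⁻¹' B k.2 with hCk'
  have hmeasT : ∀ k, MeasurableSet (Ck k) := fun k =>
    (hφ₁.measurable (hAmeas k.1)).inter (hφ₂.measurable (hBmeas k.2))
  have hmeasT' : ∀ k, MeasurableSet (Ck' k) := fun k =>
    (hψ₁.measurable (hAmeas k.1)).inter (hψ₂.measurable (hBmeas k.2))
  have hdisjT : Pairwise (Function.onFun Disjoint Ck) := by
    intro k k' hkk'
    rw [Function.onFun, Set.disjoint_left]
    rintro x ⟨hx1, hx2⟩ ⟨hx1', hx2'⟩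
    by_cases h1 : k.1 = k'.1
    · have h2 : k.2 ≠ k'.2 := fun h2 => hkk' (Prod.ext h1 h2)
      exact Set.disjoint_left.1 (hBdisj h2) hx2 hx2'
    · exact Set.disjoint_left.1 (hAdisj h1) hx1 hx1'
  have hdisjT' : Pairwise (Function.onFun Disjoint Ck') := by
    intro k k' hkk'
    rw [Function.onFun, Set.disjoint_left]
    rintro x ⟨hx1, hx2⟩ ⟨hx1', hx2'⟩
    by_cases h1 : k.1 = k'.1
    · have h2 : k.2 ≠ k'.2 := fun h2 => hkk' (Prod.ext h1 h2)
      exact Set.disjoint_left.1 (hBdisj h2) hx2 hx2'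
    · exact Set.disjoint_left.1 (hAdisj h1) hx1 hx1'
  have hcoverT : (⋃ k, Ck k) = Set.univ := by
    ext x
    simp only [Set.mem_iUnion, Set.mem_univ, iff_true, hCk, Set.mem_inter_iff,
      Set.mem_preimage]
    have hx1 : φ₁ x ∈ ⋃ i, A i := hAcover ▸ Set.mem_univ _
    have hx2 : φ₂ x ∈ ⋃ j, B j := hBcover ▸ Set.mem_univ _
    obtain ⟨i, hi⟩ := Set.mem_iUnion.1 hx1
    obtain ⟨j, hj⟩ := Set.mem_iUnion.1 hx2
    exact ⟨(i, j), hi, hj⟩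
  have hcoverT' : (⋃ k, Ck' k) = Set.univ := by
    ext x
    simp only [Set.mem_iUnion, Set.mem_univ, iff_true, hCk', Set.mem_inter_iff,
      Set.mem_preimage]
    have hx1 : ψ₁ x ∈ ⋃ i, A i := hAcover ▸ Set.mem_univ _
    have hx2 : ψ₂ x ∈ ⋃ j, B j := hBcover ▸ Set.mem_univ _
    obtain ⟨i, hi⟩ := Set.mem_iUnion.1 hx1
    obtain ⟨j, hj⟩ := Set.mem_iUnion.1 hx2
    exact ⟨(i, j), hi, hj⟩
  -- constancy
  have hv₁eq : ∀ (i i' : Fin N₁) (x y : S₁), x ∈ A i → y ∈ A i' →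
      W₁ (x, y) = v₁ i i' := by
    intro i i' x y hx hy
    have h : (A i).Nonempty ∧ (A i').Nonempty := ⟨⟨x, hx⟩, ⟨y, hy⟩⟩
    rw [hv₁]
    simp only [dif_pos h]
    exact hW₁const i i' x h.1.choose y h.2.choose hx h.1.choose_spec hy h.2.choose_spec
  have hv₂eq : ∀ (j j' : Fin N₂) (x y : S₂), x ∈ B j → y ∈ B j' →
      W₂ (x, y) = v₂ j j' := by
    intro j j' x y hx hy
    have h : (B j).Nonempty ∧ (B j').Nonempty := ⟨⟨x, hx⟩, ⟨y, hy⟩⟩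
    rw [hv₂]
    simp only [dif_pos h]
    exact hW₂const j j' x h.1.choose y h.2.choose hx h.1.choose_spec hy h.2.choose_spec
  have hUT : ∀ k l : ι, ∀ x y : T, x ∈ Ck k → y ∈ Ck l →
      (fun p : T × T => W₁ (φ₁ p.1, φ₁ p.2) - W₂ (φ₂ p.1, φ₂ p.2)) (x, y) = c k l := by
    rintro k l x y ⟨hx1, hx2⟩ ⟨hy1, hy2⟩
    simp only [hc]
    rw [hv₁eq k.1 l.1 _ _ hx1 hy1, hv₂eq k.2 l.2 _ _ hx2 hy2]
  have hUT' : ∀ k l : ι, ∀ x y : T', x ∈ Ck' k → y ∈ Ck' l →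
      (fun p : T' × T' => W₁ (ψ₁ p.1, ψ₁ p.2) - W₂ (ψ₂ p.1, ψ₂ p.2)) (x, y) = c k l := by
    rintro k l x y ⟨hx1, hx2⟩ ⟨hy1, hy2⟩
    simp only [hc]
    rw [hv₁eq k.1 l.1 _ _ hx1 hy1, hv₂eq k.2 l.2 _ _ hx2 hy2]
  -- the common measures
  set m : ι → ℝ := fun k => (ν (Ck k)).toReal with hmdef
  have hmT : ∀ k, m k = (ν (Ck k)).toReal := fun k => rfl
  have hmT' : ∀ k, m k = (ν' (Ck' k)).toReal := by
    intro k
    rw [hmdef]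
    simp only [hCk, hCk']
    rw [hsame k.1 k.2]
  -- the maximizing vertex
  obtain ⟨p₀, _, hp₀⟩ := Finset.exists_max_image
    (Finset.univ : Finset (Finset ι × Finset ι))
    (fun p => |∑ k ∈ p.1, ∑ l ∈ p.2, c k l * m k * m l|)
    ⟨(∅, ∅), Finset.mem_univ _⟩
  have hmax : ∀ s t : Finset ι, |∑ k ∈ s, ∑ l ∈ t, c k l * m k * m l|
      ≤ |∑ k ∈ p₀.1, ∑ l ∈ p₀.2, c k l * m k * m l| :=
    fun s t => hp₀ (s, t) (Finset.mem_univ _)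
  have h1 := side_sSup ν Ck hmeasT hdisjT hcoverT
    (fun p : T × T => W₁ (φ₁ p.1, φ₁ p.2) - W₂ (φ₂ p.1, φ₂ p.2)) c hUT m hmT p₀.1 p₀.2 hmax
  have h2 := side_sSup ν' Ck' hmeasT' hdisjT' hcoverT'
    (fun p : T' × T' => W₁ (ψ₁ p.1, ψ₁ p.2) - W₂ (ψ₂ p.1, ψ₂ p.2)) c hUT' m hmT' p₀.1 p₀.2 hmax
  exact h1.trans h2.symm
end

section
/- The cut metric satisfies the triangle inequality: for probability spaces S₁, S₂, S₃ and integrable functions W_ℓ : S_ℓ × S_ℓ → ℝ (ℓ = 1,2,3), one has δ□(W₁, W₃) ≤ δ□(W₁, W₂) + δ□(W₂, W₃), where δ□(U, V) := inf over pairs of measure-preserving maps φ: S → S_U, ψ: S → S_V from a common probability space of ‖U∘(φ×φ) − V∘(ψ×ψ)‖□. -/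
open MeasureTheory

/-- The cut norm of an integrable function on the square of a probability
space. -/
noncomputable def cutNorm {Ω : Type} [MeasurableSpace Ω] (μ : Measure Ω)
    (U : Ω × Ω → ℝ) : ℝ :=
  sSup {t : ℝ | ∃ A B : Set Ω, MeasurableSet A ∧ MeasurableSet B ∧
    t = |∫ p in A ×ˢ B, U p ∂(μ.prod μ)|}

section Aux

open Set

variable {Ω : Type} [MeasurableSpace Ω] {μ : Measure Ω}

lemma cutNorm_abs_le {F : Ω × Ω → ℝ} (hF : Integrable F (μ.prod μ)) (s : Set (Ω × Ω)) :
    |∫ p in s, F p ∂(μ.prod μ)| ≤ ∫ p, |F p| ∂(μ.prod μ) := by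
  have h1 : |∫ p in s, F p ∂(μ.prod μ)| ≤ ∫ p in s, |F p| ∂(μ.prod μ) := by
    simpa [Real.norm_eq_abs] using
      norm_integral_le_integral_norm (μ := (μ.prod μ).restrict s) F
  exact h1.trans (setIntegral_le_integral hF.abs
    (Filter.Eventually.of_forall fun p => abs_nonneg _))

lemma bddAbove_cutNorm_set {F : Ω × Ω → ℝ} (hF : Integrable F (μ.prod μ)) :
    BddAbove {t : ℝ | ∃ A B : Set Ω, MeasurableSet A ∧ MeasurableSet B ∧
      t = |∫ p in A ×ˢ B, F p ∂(μ.prod μ)|} := by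
  refine ⟨∫ p, |F p| ∂(μ.prod μ), ?_⟩
  rintro t ⟨A, B, -, -, rfl⟩
  exact cutNorm_abs_le hF _

lemma cutNorm_nonneg (F : Ω × Ω → ℝ) : 0 ≤ cutNorm μ F :=
  Real.sSup_nonneg (by rintro t ⟨A, B, -, -, rfl⟩; exact abs_nonneg _)

lemma abs_le_cutNorm {F : Ω × Ω → ℝ} (hF : Integrable F (μ.prod μ)) {A B : Set Ω}
    (hA : MeasurableSet A) (hB : MeasurableSet B) :
    |∫ p in A ×ˢ B, F p ∂(μ.prod μ)| ≤ cutNorm μ F :=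
  le_csSup (bddAbove_cutNorm_set hF) ⟨A, B, hA, hB, rfl⟩

lemma cutNorm_le {F : Ω × Ω → ℝ} {c : ℝ} (hc : 0 ≤ c)
    (h : ∀ A B : Set Ω, MeasurableSet A → MeasurableSet B →
      |∫ p in A ×ˢ B, F p ∂(μ.prod μ)| ≤ c) : cutNorm μ F ≤ c :=
  Real.sSup_le (by rintro t ⟨A, B, hA, hB, rfl⟩; exact h A B hA hB) hc

lemma cutNorm_le_integral {F : Ω × Ω → ℝ} (hF : Integrable F (μ.prod μ)) :
    cutNorm μ F ≤ ∫ p, |F p| ∂(μ.prod μ) :=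
  cutNorm_le (integral_nonneg fun p => abs_nonneg _) fun _ _ _ _ => cutNorm_abs_le hF _

lemma cutNorm_congr_ae {F G : Ω × Ω → ℝ} (h : F =ᵐ[μ.prod μ] G) :
    cutNorm μ F = cutNorm μ G := by
  unfold cutNorm
  congr 1
  ext t
  constructor <;> rintro ⟨A, B, hA, hB, rfl⟩ <;> refine ⟨A, B, hA, hB, ?_⟩
  · rw [integral_congr_ae (Filter.EventuallyEq.restrict h)]
  · rw [integral_congr_ae (Filter.EventuallyEq.restrict h)]

lemma cutNorm_zero : cutNorm μ (fun _ => (0 : ℝ)) = 0 := by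
  refine le_antisymm (cutNorm_le le_rfl fun A B _ _ => by simp) (cutNorm_nonneg _)

lemma cutNorm_sub_le {f g h : Ω × Ω → ℝ} (hf : Integrable f (μ.prod μ))
    (hg : Integrable g (μ.prod μ)) (hh : Integrable h (μ.prod μ)) :
    cutNorm μ (fun p => f p - h p) ≤
      cutNorm μ (fun p => f p - g p) + cutNorm μ (fun p => g p - h p) := by
  refine cutNorm_le (add_nonneg (cutNorm_nonneg _) (cutNorm_nonneg _)) fun A B hA hB => ?_
  have key : ∫ p in A ×ˢ B, (f p - h p) ∂(μ.prod μ) =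
      (∫ p in A ×ˢ B, (f p - g p) ∂(μ.prod μ)) + ∫ p in A ×ˢ B, (g p - h p) ∂(μ.prod μ) := by
    have h2 := integral_add ((hf.sub hg).restrict (s := A ×ˢ B))
      ((hg.sub hh).restrict (s := A ×ˢ B))
    simp only [Pi.sub_apply] at h2
    rw [← h2]
    congr 1 with p
    ring
  rw [key]
  exact (abs_add_le _ _).trans
    (add_le_add (abs_le_cutNorm (hf.sub hg) hA hB) (abs_le_cutNorm (hg.sub hh) hA hB))

lemma exists_set_bound {f h : Ω → ℝ} (hh : Integrable h μ) (hf : Measurable f)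
    (hf0 : ∀ x, 0 ≤ f x) (hf1 : ∀ x, f x ≤ 1) :
    ∃ C : Set Ω, MeasurableSet C ∧ |∫ x, f x * h x ∂μ| ≤ |∫ x in C, h x ∂μ| := by
  have key : ∀ h : Ω → ℝ, Integrable h μ →
      ∃ C : Set Ω, MeasurableSet C ∧ ∫ x, f x * h x ∂μ ≤ |∫ x in C, h x ∂μ| := by
    intro h hh
    have hmeas : StronglyMeasurable (hh.1.mk h) := hh.1.stronglyMeasurable_mk
    have hae : h =ᵐ[μ] hh.1.mk h := hh.1.ae_eq_mk
    have hCmeas : MeasurableSet {x | 0 ≤ hh.1.mk h x} :=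
      measurableSet_le measurable_const hmeas.measurable
    refine ⟨{x | 0 ≤ hh.1.mk h x}, hCmeas, ?_⟩
    have h1 : ∫ x, f x * h x ∂μ ≤ ∫ x, Set.indicator {x | 0 ≤ hh.1.mk h x} h x ∂μ := by
      refine integral_mono_ae
        (hh.bdd_mul hf.aestronglyMeasurable
          (c := 1) (Filter.Eventually.of_forall fun x => by rw [Real.norm_eq_abs, abs_of_nonneg (hf0 x)]; exact hf1 x))
        (hh.indicator hCmeas) ?_
      filter_upwards [hae] with x hx
      by_cases hx0 : 0 ≤ hh.1.mk h x
      · have hmem : x ∈ {x | 0 ≤ hh.1.mk h x} := hx0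
        rw [Set.indicator_of_mem hmem]
        have hx0' : 0 ≤ h x := by rw [hx]; exact hx0
        nlinarith [hf0 x, hf1 x]
      · have hmem : x ∉ {x | 0 ≤ hh.1.mk h x} := hx0
        rw [Set.indicator_of_notMem hmem]
        have hx0' : h x ≤ 0 := by rw [hx]; exact le_of_not_ge hx0
        nlinarith [hf0 x]
    rw [integral_indicator hCmeas] at h1
    exact h1.trans (le_abs_self _)
  rcases le_or_gt 0 (∫ x, f x * h x ∂μ) with hsgn | hsgn
  · obtain ⟨C, hC, hle⟩ := key h hh
    exact ⟨C, hC, by rwa [abs_of_nonneg hsgn]⟩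
  · obtain ⟨C, hC, hle⟩ := key (fun x => -h x) hh.neg
    refine ⟨C, hC, ?_⟩
    have e1 : ∫ x, f x * -h x ∂μ = -∫ x, f x * h x ∂μ := by
      simp [mul_neg, integral_neg]
    have e2 : ∫ x in C, -h x ∂μ = -∫ x in C, h x ∂μ := integral_neg _
    rw [e1, e2, abs_neg] at hle
    rwa [abs_of_neg hsgn]

end Aux
section Aux2

open Set
open scoped ENNReal

variable {Ω : Type} [MeasurableSpace Ω] {μ : Measure Ω}

lemma abs_integral_mul_mul_le [IsProbabilityMeasure μ] {F : Ω × Ω → ℝ}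
    (hF : Integrable F (μ.prod μ)) {f g : Ω → ℝ}
    (hf : Measurable f) (hf0 : ∀ x, 0 ≤ f x) (hf1 : ∀ x, f x ≤ 1)
    (hg : Measurable g) (hg0 : ∀ x, 0 ≤ g x) (hg1 : ∀ x, g x ≤ 1) :
    |∫ z, f z.1 * g z.2 * F z ∂(μ.prod μ)| ≤ cutNorm μ F := by
  have hgbd : ∃ C, ∀ z : Ω × Ω, ‖g z.2‖ ≤ C :=
    ⟨1, fun z => by rw [Real.norm_eq_abs, abs_of_nonneg (hg0 _)]; exact hg1 _⟩
  have hint : Integrable (fun z => g z.2 * F z) (μ.prod μ) :=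
    hF.bdd_mul (hg.comp measurable_snd).aestronglyMeasurable (Filter.Eventually.of_forall hgbd.choose_spec)
  have hint2 : Integrable (fun z => f z.1 * g z.2 * F z) (μ.prod μ) :=
    hF.bdd_mul (((hf.comp measurable_fst).mul (hg.comp measurable_snd)).aestronglyMeasurable)
      (c := 1) (Filter.Eventually.of_forall fun z => by
        rw [Real.norm_eq_abs, abs_of_nonneg (mul_nonneg (hf0 _) (hg0 _))]
        exact mul_le_one₀ (hf1 _) (hg0 _) (hg1 _))
  set h : Ω → ℝ := fun x => ∫ y, g y * F (x, y) ∂μ with hdef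
  have hh : Integrable h μ := hint.integral_prod_left
  have e1 : ∫ z, f z.1 * g z.2 * F z ∂(μ.prod μ) = ∫ x, f x * h x ∂μ := by
    rw [integral_prod _ hint2]
    congr 1 with x
    simp_rw [mul_assoc]
    rw [integral_const_mul]
  obtain ⟨C, hC, h1⟩ := exists_set_bound hh hf hf0 hf1
  set k : Ω → ℝ := fun y => ∫ x in C, F (x, y) ∂μ with hkdef
  have hresC : Integrable (fun z => g z.2 * F z) ((μ.restrict C).prod μ) := by
    rw [Measure.restrict_prod_eq_prod_univ]
    exact hint.restrict
  have hFC : Integrable F ((μ.restrict C).prod μ) := by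
    rw [Measure.restrict_prod_eq_prod_univ]
    exact hF.restrict
  have hk : Integrable k μ := hFC.integral_prod_right
  have e2 : ∫ x in C, h x ∂μ = ∫ y, g y * k y ∂μ := by
    calc ∫ x in C, h x ∂μ = ∫ z, g z.2 * F z ∂((μ.restrict C).prod μ) :=
          (integral_prod _ hresC).symm
      _ = ∫ y, ∫ x, g y * F (x, y) ∂(μ.restrict C) ∂μ := integral_prod_symm _ hresC
      _ = ∫ y, g y * k y ∂μ := by
          congr 1 with y
          rw [integral_const_mul]
  obtain ⟨D, hD, h2⟩ := exists_set_bound hk hg hg0 hg1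
  have hFCD : Integrable F ((μ.restrict C).prod (μ.restrict D)) := by
    rw [Measure.prod_restrict]
    exact hF.restrict
  have e3 : ∫ y in D, k y ∂μ = ∫ z in C ×ˢ D, F z ∂(μ.prod μ) := by
    calc ∫ y in D, k y ∂μ = ∫ z, F z ∂((μ.restrict C).prod (μ.restrict D)) :=
          (integral_prod_symm _ hFCD).symm
      _ = ∫ z in C ×ˢ D, F z ∂(μ.prod μ) := by rw [Measure.prod_restrict]
  calc |∫ z, f z.1 * g z.2 * F z ∂(μ.prod μ)| = |∫ x, f x * h x ∂μ| := by rw [e1]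
    _ ≤ |∫ x in C, h x ∂μ| := h1
    _ = |∫ y, g y * k y ∂μ| := by rw [e2]
    _ ≤ |∫ y in D, k y ∂μ| := h2
    _ = |∫ z in C ×ˢ D, F z ∂(μ.prod μ)| := by rw [e3]
    _ ≤ cutNorm μ F := abs_le_cutNorm hF hC hD

lemma exists_density {Λ : Type} [MeasurableSpace Λ] {lam : Measure Λ}
    [IsProbabilityMeasure lam] [IsProbabilityMeasure μ] {π : Λ → Ω}
    (hπ : MeasurePreserving π lam μ) {A : Set Λ} (hA : MeasurableSet A) :
    ∃ f : Ω → ℝ, Measurable f ∧ (∀ x, 0 ≤ f x) ∧ (∀ x, f x ≤ 1) ∧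
      ∀ h : Ω → ℝ, Integrable h μ → ∫ x in A, h (π x) ∂lam = ∫ x, f x * h x ∂μ := by
  set ν : Measure Ω := Measure.map π (lam.restrict A) with hν
  have hν_le : ν ≤ μ := by
    refine Measure.le_iff.mpr fun s hs => ?_
    rw [hν, Measure.map_apply hπ.measurable hs, Measure.restrict_apply (hπ.measurable hs)]
    calc lam (π ⁻¹' s ∩ A) ≤ lam (π ⁻¹' s) := measure_mono Set.inter_subset_left
      _ = μ s := hπ.measure_preimage hs.nullMeasurableSet
  haveI : IsFiniteMeasure ν :=
    ⟨lt_of_le_of_lt (hν_le Set.univ) (measure_lt_top μ _)⟩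
  have hac : ν ≪ μ := hν_le.absolutelyContinuous
  have hle1 : ν.rnDeriv μ ≤ᵐ[μ] 1 := Measure.rnDeriv_le_one_of_le hν_le
  refine ⟨fun x => min ((ν.rnDeriv μ x).toReal) 1,
    ((Measure.measurable_rnDeriv ν μ).ennreal_toReal).min measurable_const,
    fun x => le_min ENNReal.toReal_nonneg zero_le_one, fun x => min_le_right _ _, ?_⟩
  intro h hh
  have hh' : AEStronglyMeasurable h ν := hh.1.mono_ac hac
  have e1 : ∫ x in A, h (π x) ∂lam = ∫ y, h y ∂ν := by
    rw [hν, integral_map hπ.measurable.aemeasurable (hν ▸ hh')]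
  have e2 : ∫ y, h y ∂ν = ∫ x, (ν.rnDeriv μ x).toReal • h x ∂μ :=
    (integral_rnDeriv_smul hac).symm
  rw [e1, e2]
  refine integral_congr_ae ?_
  filter_upwards [hle1] with x hx
  have hx1 : (ν.rnDeriv μ x).toReal ≤ 1 := by
    calc (ν.rnDeriv μ x).toReal ≤ (1 : ℝ≥0∞).toReal :=
      ENNReal.toReal_mono ENNReal.one_ne_top hx
      _ = 1 := by simp
  rw [min_eq_left hx1, smul_eq_mul]

end Aux2
section Aux3

open Set

variable {Ω : Type} [MeasurableSpace Ω] {μ : Measure Ω}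

lemma cutNorm_comp_le {Λ : Type} [MeasurableSpace Λ] {lam : Measure Λ}
    [IsProbabilityMeasure lam] [IsProbabilityMeasure μ] {π : Λ → Ω}
    (hπ : MeasurePreserving π lam μ) {F : Ω × Ω → ℝ} (hF : Integrable F (μ.prod μ)) :
    cutNorm lam (fun z => F (π z.1, π z.2)) ≤ cutNorm μ F := by
  have hππ : MeasurePreserving (Prod.map π π) (lam.prod lam) (μ.prod μ) := hπ.prod hπ
  have hFπ : Integrable (fun z : Λ × Λ => F (π z.1, π z.2)) (lam.prod lam) := by
    have := (hππ.integrable_comp hF.1).mpr hF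
    refine this.congr (Filter.Eventually.of_forall fun z => ?_)
    simp [Function.comp, Prod.map]
  refine cutNorm_le (cutNorm_nonneg _) fun A B hA hB => ?_
  obtain ⟨fA, hfAm, hfA0, hfA1, hfA⟩ := exists_density hπ hA
  obtain ⟨fB, hfBm, hfB0, hfB1, hfB⟩ := exists_density hπ hB
  -- integrability pieces
  have hintB : Integrable (fun z : Ω × Ω => fB z.2 * F z) (μ.prod μ) :=
    hF.bdd_mul (hfBm.comp measurable_snd).aestronglyMeasurable
      (c := 1) (Filter.Eventually.of_forall fun z => by rw [Real.norm_eq_abs, abs_of_nonneg (hfB0 _)]; exact hfB1 _)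
  set H : Ω → ℝ := fun x => ∫ y, fB y * F (x, y) ∂μ with hHdef
  have hH : Integrable H μ := hintB.integral_prod_left
  have hint2 : Integrable (fun z : Ω × Ω => fA z.1 * fB z.2 * F z) (μ.prod μ) :=
    hF.bdd_mul (((hfAm.comp measurable_fst).mul (hfBm.comp measurable_snd)).aestronglyMeasurable)
      (c := 1) (Filter.Eventually.of_forall fun z => by
        rw [Real.norm_eq_abs, abs_of_nonneg (mul_nonneg (hfA0 _) (hfB0 _))]
        exact mul_le_one₀ (hfA1 _) (hfB0 _) (hfB1 _))
  -- a.e. integrability of slices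
  have hae1 : ∀ᵐ x ∂μ, Integrable (fun y => F (x, y)) μ := hF.prod_right_ae
  have hae1' : ∀ᵐ x ∂(Measure.map π lam), Integrable (fun y => F (x, y)) μ := by
    rw [hπ.map_eq]; exact hae1
  have hae2 : ∀ᵐ p ∂lam, Integrable (fun y => F (π p, y)) μ :=
    ae_of_ae_map hπ.measurable.aemeasurable hae1'
  -- step 1
  have hrestr : Integrable (fun z : Λ × Λ => F (π z.1, π z.2))
      ((lam.restrict A).prod (lam.restrict B)) := by
    rw [Measure.prod_restrict]
    exact hFπ.restrict
  have e1 : ∫ z in A ×ˢ B, F (π z.1, π z.2) ∂(lam.prod lam)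
      = ∫ p in A, (∫ q in B, F (π p, π q) ∂lam) ∂lam := by
    rw [← Measure.prod_restrict, integral_prod _ hrestr]
  -- step 2 : inner integral
  have e2 : ∫ p in A, (∫ q in B, F (π p, π q) ∂lam) ∂lam = ∫ p in A, H (π p) ∂lam := by
    refine integral_congr_ae ?_
    refine Filter.Eventually.filter_mono (ae_mono Measure.restrict_le_self) ?_
    filter_upwards [hae2] with p hp
    exact hfB (fun y => F (π p, y)) hp
  have e3 : ∫ p in A, H (π p) ∂lam = ∫ x, fA x * H x ∂μ := hfA H hH
  have e4 : ∫ x, fA x * H x ∂μ = ∫ z, fA z.1 * fB z.2 * F z ∂(μ.prod μ) := by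
    rw [integral_prod _ hint2]
    congr 1 with x
    simp_rw [mul_assoc]
    rw [integral_const_mul]
  rw [e1, e2, e3, e4]
  exact abs_integral_mul_mul_le hF hfAm hfA0 hfA1 hfBm hfB0 hfB1

end Aux3

section Aux3b

variable {Ω : Type} [MeasurableSpace Ω] {μ : Measure Ω}

lemma integrable_pair_comp {Λ : Type} [MeasurableSpace Λ] {lam : Measure Λ}
    [IsProbabilityMeasure lam] [IsProbabilityMeasure μ] {π : Λ → Ω}
    (hπ : MeasurePreserving π lam μ) {F : Ω × Ω → ℝ} (hF : Integrable F (μ.prod μ)) :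
    Integrable (fun z : Λ × Λ => F (π z.1, π z.2)) (lam.prod lam) := by
  have hππ : MeasurePreserving (Prod.map π π) (lam.prod lam) (μ.prod μ) := hπ.prod hπ
  have h := (hππ.integrable_comp hF.1).mpr hF
  exact h.congr (Filter.Eventually.of_forall fun z => by simp [Function.comp, Prod.map])

end Aux3b
section Aux4

open Set
open scoped ENNReal

lemma exists_glue {Ω Ω' J : Type} [MeasurableSpace Ω] [MeasurableSpace Ω'] [MeasurableSpace J]
    [Finite J] [MeasurableSingletonClass J]
    (lam : Measure Ω) (nu : Measure Ω') [IsProbabilityMeasure lam] [IsProbabilityMeasure nu]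
    {u : Ω → J} {v : Ω' → J} (hu : Measurable u) (hv : Measurable v)
    (huv : Measure.map u lam = Measure.map v nu) :
    ∃ τ : Measure (Ω × Ω'), IsProbabilityMeasure τ ∧
      MeasurePreserving Prod.fst τ lam ∧ MeasurePreserving Prod.snd τ nu ∧
      τ {z | u z.1 ≠ v z.2} = 0 := by
  classical
  set p : J → ℝ≥0∞ := fun j => lam (u ⁻¹' {j}) with hp
  have hpv : ∀ j, nu (v ⁻¹' {j}) = p j := by
    intro j
    show nu (v ⁻¹' {j}) = lam (u ⁻¹' {j})
    rw [← Measure.map_apply hu (measurableSet_singleton j), huv,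
      Measure.map_apply hv (measurableSet_singleton j)]
  have hptop : ∀ j, p j ≠ ∞ := fun j => measure_ne_top _ _
  have hUnionU : (⋃ j, u ⁻¹' {j}) = Set.univ := by ext x; simp
  have hUnionV : (⋃ j, v ⁻¹' {j}) = Set.univ := by ext x; simp
  have hdisjU : Pairwise (Function.onFun Disjoint fun j => u ⁻¹' {j}) := by
    intro i j hij
    refine Set.disjoint_left.mpr fun x hxi hxj => hij ?_
    simp only [Set.mem_preimage, Set.mem_singleton_iff] at hxi hxj
    rw [← hxi, ← hxj]
  have hdisjV : Pairwise (Function.onFun Disjoint fun j => v ⁻¹' {j}) := by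
    intro i j hij
    refine Set.disjoint_left.mpr fun x hxi hxj => hij ?_
    simp only [Set.mem_preimage, Set.mem_singleton_iff] at hxi hxj
    rw [← hxi, ← hxj]
  set τ : Measure (Ω × Ω') := Measure.sum fun j =>
    (p j)⁻¹ • ((lam.restrict (u ⁻¹' {j})).prod (nu.restrict (v ⁻¹' {j}))) with hτ
  have hNmeas : MeasurableSet {z : Ω × Ω' | u z.1 = v z.2} := by
    have : {z : Ω × Ω' | u z.1 = v z.2} = ⋃ j, (u ⁻¹' {j}) ×ˢ (v ⁻¹' {j}) := by
      ext z
      simp only [Set.mem_setOf_eq, Set.mem_iUnion, Set.mem_prod, Set.mem_preimage,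
        Set.mem_singleton_iff]
      constructor
      · intro h; exact ⟨u z.1, rfl, h.symm⟩
      · rintro ⟨j, h1, h2⟩; rw [h1, h2]
    rw [this]
    exact MeasurableSet.iUnion fun j =>
      (hu (measurableSet_singleton j)).prod (hv (measurableSet_singleton j))
  -- first marginal
  have hmapfst : Measure.map Prod.fst τ = lam := by
    rw [hτ, Measure.map_sum measurable_fst.aemeasurable]
    have hterm : ∀ j, Measure.map Prod.fst
        ((p j)⁻¹ • ((lam.restrict (u ⁻¹' {j})).prod (nu.restrict (v ⁻¹' {j}))))
        = lam.restrict (u ⁻¹' {j}) := by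
      intro j
      rw [Measure.map_smul, Measure.map_fst_prod]
      rw [Measure.restrict_apply MeasurableSet.univ, Set.univ_inter, hpv]
      by_cases h0 : p j = 0
      · have : lam.restrict (u ⁻¹' {j}) = 0 := by
          rw [Measure.restrict_eq_zero]; exact h0
        rw [this]
        simp [h0]
      · rw [smul_smul, ENNReal.inv_mul_cancel h0 (hptop j), one_smul]
    simp_rw [hterm]
    rw [← Measure.restrict_iUnion hdisjU (fun j => hu (measurableSet_singleton j)),
      hUnionU, Measure.restrict_univ]
  have hmapsnd : Measure.map Prod.snd τ = nu := by
    rw [hτ, Measure.map_sum measurable_snd.aemeasurable]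
    have hterm : ∀ j, Measure.map Prod.snd
        ((p j)⁻¹ • ((lam.restrict (u ⁻¹' {j})).prod (nu.restrict (v ⁻¹' {j}))))
        = nu.restrict (v ⁻¹' {j}) := by
      intro j
      rw [Measure.map_smul, Measure.map_snd_prod]
      rw [Measure.restrict_apply MeasurableSet.univ, Set.univ_inter]
      by_cases h0 : p j = 0
      · have : nu.restrict (v ⁻¹' {j}) = 0 := by
          rw [Measure.restrict_eq_zero, hpv]; exact h0
        rw [this]
        simp
      · rw [smul_smul, ENNReal.inv_mul_cancel h0 (hptop j), one_smul]
    simp_rw [hterm]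
    rw [← Measure.restrict_iUnion hdisjV (fun j => hv (measurableSet_singleton j)),
      hUnionV, Measure.restrict_univ]
  have hprob : IsProbabilityMeasure τ := by
    constructor
    rw [hτ, Measure.sum_apply _ MeasurableSet.univ]
    have hterm : ∀ j, ((p j)⁻¹ • ((lam.restrict (u ⁻¹' {j})).prod (nu.restrict (v ⁻¹' {j}))))
        Set.univ = p j := by
      intro j
      rw [Measure.smul_apply, smul_eq_mul, ← Set.univ_prod_univ, Measure.prod_prod,
        Measure.restrict_apply MeasurableSet.univ, Measure.restrict_apply MeasurableSet.univ,
        Set.univ_inter, Set.univ_inter, hpv]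
      by_cases h0 : p j = 0
      · simp [h0]
      · rw [← mul_assoc, ENNReal.inv_mul_cancel h0 (hptop j), one_mul]
    simp_rw [hterm]
    have := measure_iUnion (μ := lam) hdisjU (fun j => hu (measurableSet_singleton j))
    rw [hUnionU, measure_univ] at this
    exact this.symm
  refine ⟨τ, hprob, ⟨measurable_fst, hmapfst⟩, ⟨measurable_snd, hmapsnd⟩, ?_⟩
  have hcompl : {z : Ω × Ω' | u z.1 ≠ v z.2} = {z : Ω × Ω' | u z.1 = v z.2}ᶜ := rfl
  rw [hcompl, hτ, Measure.sum_apply _ hNmeas.compl]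
  have hterm : ∀ j, ((p j)⁻¹ • ((lam.restrict (u ⁻¹' {j})).prod (nu.restrict (v ⁻¹' {j}))))
      {z : Ω × Ω' | u z.1 = v z.2}ᶜ = 0 := by
    intro j
    rw [Measure.smul_apply, Measure.prod_restrict,
      Measure.restrict_apply hNmeas.compl]
    have hempty : {z : Ω × Ω' | u z.1 = v z.2}ᶜ ∩ (u ⁻¹' {j}) ×ˢ (v ⁻¹' {j}) = ∅ := by
      rw [Set.eq_empty_iff_forall_notMem]
      rintro z ⟨hne, hz1, hz2⟩
      simp only [Set.mem_preimage, Set.mem_singleton_iff] at hz1 hz2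
      exact hne (show u z.1 = v z.2 by rw [hz1, hz2])
    rw [hempty]
    simp
  simp_rw [hterm]
  simp

end Aux4
section Aux5

open Set
open scoped symmDiff

def SameOn {S : Type} (𝒞 : Set (Set S)) (x x' : S) : Prop :=
  ∀ C ∈ 𝒞, (x ∈ C ↔ x' ∈ C)

lemma generateSetAlgebra_finite_subfamily {α : Type} {𝒜 : Set (Set α)} {s : Set α}
    (hs : s ∈ MeasureTheory.generateSetAlgebra 𝒜) :
    ∃ F : Set (Set α), F ⊆ 𝒜 ∧ F.Finite ∧ s ∈ MeasureTheory.generateSetAlgebra F := by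
  induction hs with
  | base t ht =>
      exact ⟨{t}, Set.singleton_subset_iff.mpr ht, Set.finite_singleton t,
        MeasureTheory.generateSetAlgebra.base t rfl⟩
  | empty => exact ⟨∅, Set.empty_subset _, Set.finite_empty, MeasureTheory.generateSetAlgebra.empty⟩
  | compl t _ ih =>
      obtain ⟨F, h1, h2, h3⟩ := ih
      exact ⟨F, h1, h2, MeasureTheory.generateSetAlgebra.compl t h3⟩
  | union t u _ _ iht ihu =>
      obtain ⟨F, h1, h2, h3⟩ := iht
      obtain ⟨G, g1, g2, g3⟩ := ihu
      exact ⟨F ∪ G, Set.union_subset h1 g1, h2.union g2,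
        MeasureTheory.generateSetAlgebra.union t u
          (MeasureTheory.generateSetAlgebra_mono Set.subset_union_left h3)
          (MeasureTheory.generateSetAlgebra_mono Set.subset_union_right g3)⟩

lemma invariant_of_gen {α : Type} {𝒞 : Set (Set α)} {F : Set (Set (α × α))}
    (hF : ∀ r ∈ F, ∃ A B : Set α, A ∈ 𝒞 ∧ B ∈ 𝒞 ∧ r = A ×ˢ B) {R : Set (α × α)}
    (hR : R ∈ MeasureTheory.generateSetAlgebra F) {x x' y y' : α}
    (hx : SameOn 𝒞 x x') (hy : SameOn 𝒞 y y') : ((x, y) ∈ R ↔ (x', y') ∈ R) := by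
  induction hR with
  | base t ht =>
      obtain ⟨A, B, hA, hB, rfl⟩ := hF t ht
      simp only [Set.mem_prod]
      rw [hx A hA, hy B hB]
  | empty => simp
  | compl t _ ih => simp only [Set.mem_compl_iff]; rw [ih]
  | union t u _ _ iht ihu => simp only [Set.mem_union]; rw [iht, ihu]

variable {S : Type} [MeasurableSpace S]

lemma step_base (μ : Measure S) [IsProbabilityMeasure μ] (c : ℝ) {E : Set (S × S)}
    (hE : MeasurableSet E) {δ : ℝ} (hδ : 0 < δ) :
    ∃ 𝒞 : Set (Set S), 𝒞.Finite ∧ (∀ C ∈ 𝒞, MeasurableSet C) ∧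
      ∃ g : S × S → ℝ, Integrable g (μ.prod μ) ∧
        (∀ x x' y y', SameOn 𝒞 x x' → SameOn 𝒞 y y' → g (x, y) = g (x', y')) ∧
        ∫ z, |E.indicator (fun _ => c) z - g z| ∂(μ.prod μ) < δ := by
  classical
  set δ' := δ / (|c| + 1) with hδ'def
  have hcpos : (0:ℝ) < |c| + 1 := by positivity
  have hδ' : 0 < δ' := div_pos hδ hcpos
  set 𝒜 : Set (Set (S × S)) :=
    Set.image2 (· ×ˢ ·) {s : Set S | MeasurableSet s} {t : Set S | MeasurableSet t} with h𝒜
  have hgen : (inferInstance : MeasurableSpace (S × S)) =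
      MeasurableSpace.generateFrom (MeasureTheory.generateSetAlgebra 𝒜) := by
    rw [MeasureTheory.generateFrom_generateSetAlgebra_eq, h𝒜, generateFrom_prod]
  have hdense : (μ.prod μ).MeasureDense (MeasureTheory.generateSetAlgebra 𝒜) :=
    Measure.MeasureDense.of_generateFrom_isSetAlgebra_finite (μ.prod μ)
      MeasureTheory.isSetAlgebra_generateSetAlgebra hgen
  obtain ⟨R, hR_mem, hR_close⟩ := hdense.approx E hE (measure_ne_top _ _) δ' hδ'
  have hRmeas : MeasurableSet R := hdense.measurable R hR_mem
  obtain ⟨F, hF𝒜, hFfin, hRF⟩ := generateSetAlgebra_finite_subfamily hR_mem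
  haveI : Finite ↥F := hFfin.to_subtype
  have hsides : ∀ r : ↥F, ∃ AB : Set S × Set S, MeasurableSet AB.1 ∧ MeasurableSet AB.2 ∧
      (r : Set (S × S)) = AB.1 ×ˢ AB.2 := by
    intro r
    obtain ⟨A, hA, B, hB, hr⟩ := hF𝒜 r.2
    exact ⟨(A, B), hA, hB, hr.symm⟩
  choose σ hσ1 hσ2 hσ3 using hsides
  refine ⟨(Set.range fun r => (σ r).1) ∪ (Set.range fun r => (σ r).2),
    (Set.finite_range _).union (Set.finite_range _), ?_, R.indicator (fun _ => c), ?_, ?_, ?_⟩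
  · rintro C (⟨r, rfl⟩ | ⟨r, rfl⟩)
    exacts [hσ1 r, hσ2 r]
  · exact (integrable_const c).indicator hRmeas
  · intro x x' y y' hx hy
    have hinv : ((x, y) ∈ R ↔ (x', y') ∈ R) := by
      refine invariant_of_gen ?_ hRF hx hy
      intro r hr
      exact ⟨(σ ⟨r, hr⟩).1, (σ ⟨r, hr⟩).2, Or.inl ⟨⟨r, hr⟩, rfl⟩, Or.inr ⟨⟨r, hr⟩, rfl⟩,
        hσ3 ⟨r, hr⟩⟩
    simp only [Set.indicator_apply]
    by_cases h : (x, y) ∈ R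
    · rw [if_pos h, if_pos (hinv.mp h)]
    · rw [if_neg h, if_neg (fun h' => h (hinv.mpr h'))]
  · -- error estimate
    have hpoint : ∀ z, |E.indicator (fun _ => c) z - R.indicator (fun _ => c) z| ≤
        (E ∆ R).indicator (fun _ => |c|) z := by
      intro z
      by_cases hzE : z ∈ E <;> by_cases hzR : z ∈ R <;>
        simp [Set.indicator_apply, hzE, hzR, Set.mem_symmDiff, abs_nonneg]
    have hindE : Integrable (E.indicator fun _ => c) (μ.prod μ) :=
      (integrable_const c).indicator hE
    have hindR : Integrable (R.indicator fun _ => c) (μ.prod μ) :=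
      (integrable_const c).indicator hRmeas
    have hindS : Integrable ((E ∆ R).indicator fun _ => |c|) (μ.prod μ) :=
      (integrable_const _).indicator (hE.symmDiff hRmeas)
    have h1 : ∫ z, |E.indicator (fun _ => c) z - R.indicator (fun _ => c) z| ∂(μ.prod μ) ≤
        ∫ z, (E ∆ R).indicator (fun _ => |c|) z ∂(μ.prod μ) :=
      integral_mono ((hindE.sub hindR).abs) hindS hpoint
    have h2 : ∫ z, (E ∆ R).indicator (fun _ => |c|) z ∂(μ.prod μ) =
        ((μ.prod μ) (E ∆ R)).toReal • |c| :=
      integral_indicator_const _ (hE.symmDiff hRmeas)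
    have htR : ((μ.prod μ) (E ∆ R)).toReal < δ' := ENNReal.toReal_lt_of_lt_ofReal hR_close
    have ht0 : 0 ≤ ((μ.prod μ) (E ∆ R)).toReal := ENNReal.toReal_nonneg
    have hkey : δ' * (|c| + 1) = δ := by
      rw [hδ'def]; field_simp
    calc ∫ z, |E.indicator (fun _ => c) z - R.indicator (fun _ => c) z| ∂(μ.prod μ)
        ≤ ((μ.prod μ) (E ∆ R)).toReal • |c| := h2 ▸ h1
      _ < δ := by
          rw [smul_eq_mul]
          nlinarith [abs_nonneg c]

lemma exists_step_approx (μ : Measure S) [IsProbabilityMeasure μ]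
    {f : S × S → ℝ} (hf : Integrable f (μ.prod μ)) {ε : ℝ} (hε : 0 < ε) :
    ∃ 𝒞 : Set (Set S), 𝒞.Finite ∧ (∀ C ∈ 𝒞, MeasurableSet C) ∧
      ∃ g : S × S → ℝ, Integrable g (μ.prod μ) ∧
        (∀ x x' y y', SameOn 𝒞 x x' → SameOn 𝒞 y y' → g (x, y) = g (x', y')) ∧
        ∫ z, |f z - g z| ∂(μ.prod μ) < ε := by
  obtain ⟨s, hs_close, -⟩ :=
    (memLp_one_iff_integrable.mpr hf).exists_simpleFunc_eLpNorm_sub_lt ENNReal.one_ne_top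
      (ENNReal.ofReal_pos.mpr (half_pos hε)).ne'
  have hsint : Integrable (⇑s) (μ.prod μ) := s.integrable_of_isFiniteMeasure
  -- the simple function can be approximated by an invariant step function
  have key : ∀ t : SimpleFunc (S × S) ℝ, ∀ δ : ℝ, 0 < δ →
      ∃ 𝒞 : Set (Set S), 𝒞.Finite ∧ (∀ C ∈ 𝒞, MeasurableSet C) ∧
      ∃ g : S × S → ℝ, Integrable g (μ.prod μ) ∧
        (∀ x x' y y', SameOn 𝒞 x x' → SameOn 𝒞 y y' → g (x, y) = g (x', y')) ∧
        ∫ z, |t z - g z| ∂(μ.prod μ) < δ := by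
    intro t
    induction t using SimpleFunc.induction with
    | @const c E hE =>
        intro δ hδ
        obtain ⟨𝒞, h1, h2, g, h3, h4, h5⟩ := step_base μ c hE hδ
        refine ⟨𝒞, h1, h2, g, h3, h4, ?_⟩
        have hcoe : ∀ z, (SimpleFunc.piecewise E hE
            (SimpleFunc.const _ c) (SimpleFunc.const _ 0)) z = E.indicator (fun _ => c) z := by
          intro z
          by_cases hz : z ∈ E <;>
            simp [SimpleFunc.piecewise_apply, hz, Set.indicator_of_mem, Set.indicator_of_notMem]
        calc ∫ z, |(SimpleFunc.piecewise E hE (SimpleFunc.const _ c)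
              (SimpleFunc.const _ 0)) z - g z| ∂(μ.prod μ)
            = ∫ z, |E.indicator (fun _ => c) z - g z| ∂(μ.prod μ) :=
              integral_congr_ae (Filter.Eventually.of_forall fun z => by simp only [hcoe])
          _ < δ := h5
    | @add t₁ t₂ hdisj ht₁ ht₂ =>
        intro δ hδ
        obtain ⟨𝒞₁, h𝒞₁fin, h𝒞₁meas, g₁, hg₁int, hg₁inv, hg₁err⟩ := ht₁ (δ/2) (half_pos hδ)
        obtain ⟨𝒞₂, h𝒞₂fin, h𝒞₂meas, g₂, hg₂int, hg₂inv, hg₂err⟩ := ht₂ (δ/2) (half_pos hδ)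
        refine ⟨𝒞₁ ∪ 𝒞₂, h𝒞₁fin.union h𝒞₂fin, ?_, fun z => g₁ z + g₂ z, hg₁int.add hg₂int, ?_, ?_⟩
        · rintro C (hC | hC)
          exacts [h𝒞₁meas C hC, h𝒞₂meas C hC]
        · intro x x' y y' hx hy
          have hx₁ : SameOn 𝒞₁ x x' := fun C hC => hx C (Or.inl hC)
          have hx₂ : SameOn 𝒞₂ x x' := fun C hC => hx C (Or.inr hC)
          have hy₁ : SameOn 𝒞₁ y y' := fun C hC => hy C (Or.inl hC)
          have hy₂ : SameOn 𝒞₂ y y' := fun C hC => hy C (Or.inr hC)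
          show g₁ (x, y) + g₂ (x, y) = g₁ (x', y') + g₂ (x', y')
          rw [hg₁inv x x' y y' hx₁ hy₁, hg₂inv x x' y y' hx₂ hy₂]
        · have ht₁int : Integrable (⇑t₁) (μ.prod μ) := t₁.integrable_of_isFiniteMeasure
          have ht₂int : Integrable (⇑t₂) (μ.prod μ) := t₂.integrable_of_isFiniteMeasure
          have hmono : ∫ z, |(t₁ + t₂) z - (g₁ z + g₂ z)| ∂(μ.prod μ) ≤
              ∫ z, (|t₁ z - g₁ z| + |t₂ z - g₂ z|) ∂(μ.prod μ) := by
            refine integral_mono (((ht₁int.add ht₂int).sub (hg₁int.add hg₂int)).abs.congr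
              (Filter.Eventually.of_forall fun z => ?_))
              (((ht₁int.sub hg₁int).abs).add ((ht₂int.sub hg₂int).abs)) fun z => ?_
            · simp [SimpleFunc.coe_add]
            · simp only [SimpleFunc.coe_add, Pi.add_apply]
              calc |t₁ z + t₂ z - (g₁ z + g₂ z)| = |(t₁ z - g₁ z) + (t₂ z - g₂ z)| := by ring_nf
                _ ≤ |t₁ z - g₁ z| + |t₂ z - g₂ z| := abs_add_le _ _
          have hsplit : ∫ z, (|t₁ z - g₁ z| + |t₂ z - g₂ z|) ∂(μ.prod μ) =
              (∫ z, |t₁ z - g₁ z| ∂(μ.prod μ)) + ∫ z, |t₂ z - g₂ z| ∂(μ.prod μ) :=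
            integral_add ((ht₁int.sub hg₁int).abs) ((ht₂int.sub hg₂int).abs)
          calc ∫ z, |(t₁ + t₂) z - (g₁ z + g₂ z)| ∂(μ.prod μ)
              ≤ _ := hmono
            _ = _ := hsplit
            _ < δ/2 + δ/2 := add_lt_add hg₁err hg₂err
            _ = δ := by ring
  obtain ⟨𝒞, h1, h2, g, h3, h4, h5⟩ := key s (ε/2) (half_pos hε)
  refine ⟨𝒞, h1, h2, g, h3, h4, ?_⟩
  have hfs : ∫ z, |f z - s z| ∂(μ.prod μ) < ε/2 := by
    have heq : ∫ z, |f z - s z| ∂(μ.prod μ) = (eLpNorm (f - ⇑s) 1 (μ.prod μ)).toReal := by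
      rw [eLpNorm_one_eq_lintegral_enorm,
        ← integral_norm_eq_lintegral_enorm ((hf.sub hsint).aestronglyMeasurable)]
      exact integral_congr_ae (Filter.Eventually.of_forall fun z => by
        simp [Real.norm_eq_abs])
    rw [heq]
    exact ENNReal.toReal_lt_of_lt_ofReal hs_close
  have hmono : ∫ z, |f z - g z| ∂(μ.prod μ) ≤
      ∫ z, (|f z - s z| + |s z - g z|) ∂(μ.prod μ) := by
    refine integral_mono ((hf.sub h3).abs)
      (((hf.sub hsint).abs).add ((hsint.sub h3).abs)) fun z => ?_
    calc |f z - g z| = |(f z - s z) + (s z - g z)| := by ring_nf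
      _ ≤ |f z - s z| + |s z - g z| := abs_add_le _ _
  have hsplit : ∫ z, (|f z - s z| + |s z - g z|) ∂(μ.prod μ) =
      (∫ z, |f z - s z| ∂(μ.prod μ)) + ∫ z, |s z - g z| ∂(μ.prod μ) :=
    integral_add ((hf.sub hsint).abs) ((hsint.sub h3).abs)
  calc ∫ z, |f z - g z| ∂(μ.prod μ) ≤ _ := hmono
    _ = _ := hsplit
    _ < ε/2 + ε/2 := add_lt_add hfs h5
    _ = ε := by ring

end Aux5
/-- The cut metric between functions on (possibly different) probability
spaces: the infimum of `‖W₁^{φ₁} − W₂^{φ₂}‖□` over couplings, i.e. pairs of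
measure-preserving maps from a common probability space. -/
noncomputable def cutDist {S₁ S₂ : Type} [MeasurableSpace S₁]
    [MeasurableSpace S₂] (μ₁ : Measure S₁) (μ₂ : Measure S₂)
    (W₁ : S₁ × S₁ → ℝ) (W₂ : S₂ × S₂ → ℝ) : ℝ :=
  sInf {t : ℝ | ∃ (Ω : Type) (_ : MeasurableSpace Ω) (μ : Measure Ω)
    (φ₁ : Ω → S₁) (φ₂ : Ω → S₂), IsProbabilityMeasure μ ∧
    MeasurePreserving φ₁ μ μ₁ ∧ MeasurePreserving φ₂ μ μ₂ ∧
    t = cutNorm μ (fun p => W₁ (φ₁ p.1, φ₁ p.2) - W₂ (φ₂ p.1, φ₂ p.2))}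

section MainAux

lemma cutDist_set_nonempty {S₁ S₂ : Type} [MeasurableSpace S₁] [MeasurableSpace S₂]
    (μ₁ : Measure S₁) (μ₂ : Measure S₂) [IsProbabilityMeasure μ₁] [IsProbabilityMeasure μ₂]
    (W₁ : S₁ × S₁ → ℝ) (W₂ : S₂ × S₂ → ℝ) :
    {t : ℝ | ∃ (Ω : Type) (_ : MeasurableSpace Ω) (μ : Measure Ω)
      (φ₁ : Ω → S₁) (φ₂ : Ω → S₂), IsProbabilityMeasure μ ∧
      MeasurePreserving φ₁ μ μ₁ ∧ MeasurePreserving φ₂ μ μ₂ ∧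
      t = cutNorm μ (fun p => W₁ (φ₁ p.1, φ₁ p.2) - W₂ (φ₂ p.1, φ₂ p.2))}.Nonempty := by
  refine ⟨_, S₁ × S₂, inferInstance, μ₁.prod μ₂, Prod.fst, Prod.snd, inferInstance,
    ⟨measurable_fst, ?_⟩, ⟨measurable_snd, ?_⟩, rfl⟩
  · rw [Measure.map_fst_prod]; simp
  · rw [Measure.map_snd_prod]; simp

lemma cutDist_set_bddBelow {S₁ S₂ : Type} [MeasurableSpace S₁] [MeasurableSpace S₂]
    (μ₁ : Measure S₁) (μ₂ : Measure S₂)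
    (W₁ : S₁ × S₁ → ℝ) (W₂ : S₂ × S₂ → ℝ) :
    BddBelow {t : ℝ | ∃ (Ω : Type) (_ : MeasurableSpace Ω) (μ : Measure Ω)
      (φ₁ : Ω → S₁) (φ₂ : Ω → S₂), IsProbabilityMeasure μ ∧
      MeasurePreserving φ₁ μ μ₁ ∧ MeasurePreserving φ₂ μ μ₂ ∧
      t = cutNorm μ (fun p => W₁ (φ₁ p.1, φ₁ p.2) - W₂ (φ₂ p.1, φ₂ p.2))} := by
  refine ⟨0, ?_⟩
  rintro t ⟨Ω, mΩ, μ, φ₁, φ₂, h, h1, h2, rfl⟩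
  exact cutNorm_nonneg _

end MainAux

/-- The cut metric satisfies the triangle inequality. -/
theorem cutDist_triangle {S₁ S₂ S₃ : Type}
    [MeasurableSpace S₁] [MeasurableSpace S₂] [MeasurableSpace S₃]
    (μ₁ : Measure S₁) (μ₂ : Measure S₂) (μ₃ : Measure S₃)
    [IsProbabilityMeasure μ₁] [IsProbabilityMeasure μ₂]
    [IsProbabilityMeasure μ₃]
    (W₁ : S₁ × S₁ → ℝ) (W₂ : S₂ × S₂ → ℝ) (W₃ : S₃ × S₃ → ℝ)
    (hW₁ : Integrable W₁ (μ₁.prod μ₁)) (hW₂ : Integrable W₂ (μ₂.prod μ₂))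
    (hW₃ : Integrable W₃ (μ₃.prod μ₃)) :
    cutDist μ₁ μ₃ W₁ W₃ ≤ cutDist μ₁ μ₂ W₁ W₂ + cutDist μ₂ μ₃ W₂ W₃ := by
  classical
  refine le_of_forall_pos_le_add fun ε hε => ?_
  have hε4 : 0 < ε/4 := by positivity
  obtain ⟨a, ha_mem, ha_lt⟩ := Real.lt_sInf_add_pos (cutDist_set_nonempty μ₁ μ₂ W₁ W₂) hε4
  obtain ⟨b, hb_mem, hb_lt⟩ := Real.lt_sInf_add_pos (cutDist_set_nonempty μ₂ μ₃ W₂ W₃) hε4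
  obtain ⟨Ω, mΩ, lam, φ₁, φ₂, hlam, hφ₁, hφ₂, rfl⟩ := ha_mem
  obtain ⟨Ω', mΩ', nu, ψ₂, ψ₃, hnu, hψ₂, hψ₃, rfl⟩ := hb_mem
  haveI := hlam; haveI := hnu
  obtain ⟨𝒞, h𝒞fin, h𝒞meas, w, hw_int, hw_inv, hw_close⟩ := exists_step_approx μ₂ hW₂ hε4
  haveI : Finite ↥𝒞 := h𝒞fin.to_subtype
  letI : MeasurableSpace (↥𝒞 → Bool) := ⊤
  haveI : MeasurableSingletonClass (↥𝒞 → Bool) := ⟨fun _ => trivial⟩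
  set ι : S₂ → (↥𝒞 → Bool) := fun x C => decide (x ∈ (C : Set S₂)) with hι_def
  have hι_meas : Measurable ι := by
    intro T _
    have hrepr : ι ⁻¹' T = ⋃ j ∈ T, ι ⁻¹' {j} := by
      ext x; simp
    rw [hrepr]
    refine MeasurableSet.biUnion (Set.to_countable T) fun j _ => ?_
    have hfiber : ι ⁻¹' {j} = ⋂ C : ↥𝒞, {x : S₂ | decide (x ∈ (C : Set S₂)) = j C} := by
      ext x
      simp [hι_def, Set.mem_iInter, funext_iff]
    rw [hfiber]
    refine MeasurableSet.iInter fun C => ?_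
    by_cases hb : j C = true
    · have he : {x : S₂ | decide (x ∈ (C : Set S₂)) = j C} = (C : Set S₂) := by
        ext x; simp [hb]
      rw [he]; exact h𝒞meas C C.2
    · have hb' : j C = false := by simpa using hb
      have he : {x : S₂ | decide (x ∈ (C : Set S₂)) = j C} = (C : Set S₂)ᶜ := by
        ext x; simp [hb']
      rw [he]; exact (h𝒞meas C C.2).compl
  have hι_same : ∀ x x', ι x = ι x' → SameOn 𝒞 x x' := by
    intro x x' h C hC
    have h2 := congrFun h ⟨C, hC⟩
    simpa [hι_def, decide_eq_decide] using h2
  obtain ⟨τ, hτ_prob, hτ_fst, hτ_snd, hτ_supp⟩ := exists_glue lam nu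
    (hι_meas.comp hφ₂.measurable) (hι_meas.comp hψ₂.measurable)
    (by rw [← Measure.map_map hι_meas hφ₂.measurable, ← Measure.map_map hι_meas hψ₂.measurable,
      hφ₂.map_eq, hψ₂.map_eq])
  haveI := hτ_prob
  -- measure preserving maps to the three spaces
  have hΦ₁ : MeasurePreserving (φ₁ ∘ Prod.fst) τ μ₁ := hφ₁.comp hτ_fst
  have hΦ₂ : MeasurePreserving (φ₂ ∘ Prod.fst) τ μ₂ := hφ₂.comp hτ_fst
  have hΨ₂ : MeasurePreserving (ψ₂ ∘ Prod.snd) τ μ₂ := hψ₂.comp hτ_snd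
  have hΦ₃ : MeasurePreserving (ψ₃ ∘ Prod.snd) τ μ₃ := hψ₃.comp hτ_snd
  -- integrability of the six composed functions on τ × τ
  have hf1 : Integrable (fun p : (Ω × Ω') × (Ω × Ω') =>
      W₁ (φ₁ p.1.1, φ₁ p.2.1)) (τ.prod τ) := integrable_pair_comp hΦ₁ hW₁
  have hf2 : Integrable (fun p : (Ω × Ω') × (Ω × Ω') =>
      W₂ (φ₂ p.1.1, φ₂ p.2.1)) (τ.prod τ) := integrable_pair_comp hΦ₂ hW₂
  have hf2' : Integrable (fun p : (Ω × Ω') × (Ω × Ω') =>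
      w (φ₂ p.1.1, φ₂ p.2.1)) (τ.prod τ) := integrable_pair_comp hΦ₂ hw_int
  have hg2' : Integrable (fun p : (Ω × Ω') × (Ω × Ω') =>
      w (ψ₂ p.1.2, ψ₂ p.2.2)) (τ.prod τ) := integrable_pair_comp hΨ₂ hw_int
  have hg2 : Integrable (fun p : (Ω × Ω') × (Ω × Ω') =>
      W₂ (ψ₂ p.1.2, ψ₂ p.2.2)) (τ.prod τ) := integrable_pair_comp hΨ₂ hW₂
  have hf3 : Integrable (fun p : (Ω × Ω') × (Ω × Ω') =>
      W₃ (ψ₃ p.1.2, ψ₃ p.2.2)) (τ.prod τ) := integrable_pair_comp hΦ₃ hW₃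
  -- the candidate value is in the (1,3) coupling set
  have h13 : cutDist μ₁ μ₃ W₁ W₃ ≤ cutNorm τ (fun p : (Ω × Ω') × (Ω × Ω') =>
      W₁ (φ₁ p.1.1, φ₁ p.2.1) - W₃ (ψ₃ p.1.2, ψ₃ p.2.2)) := by
    refine csInf_le (cutDist_set_bddBelow μ₁ μ₃ W₁ W₃) ?_
    exact ⟨Ω × Ω', inferInstance, τ, φ₁ ∘ Prod.fst, ψ₃ ∘ Prod.snd, hτ_prob, hΦ₁, hΦ₃, rfl⟩
  -- chain of cut-norm triangle inequalities
  have hchain : cutNorm τ (fun p : (Ω × Ω') × (Ω × Ω') =>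
        W₁ (φ₁ p.1.1, φ₁ p.2.1) - W₃ (ψ₃ p.1.2, ψ₃ p.2.2)) ≤
      cutNorm τ (fun p : (Ω × Ω') × (Ω × Ω') =>
        W₁ (φ₁ p.1.1, φ₁ p.2.1) - W₂ (φ₂ p.1.1, φ₂ p.2.1)) +
      (cutNorm τ (fun p : (Ω × Ω') × (Ω × Ω') =>
        W₂ (φ₂ p.1.1, φ₂ p.2.1) - w (φ₂ p.1.1, φ₂ p.2.1)) +
      (cutNorm τ (fun p : (Ω × Ω') × (Ω × Ω') =>
        w (φ₂ p.1.1, φ₂ p.2.1) - w (ψ₂ p.1.2, ψ₂ p.2.2)) +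
      (cutNorm τ (fun p : (Ω × Ω') × (Ω × Ω') =>
        w (ψ₂ p.1.2, ψ₂ p.2.2) - W₂ (ψ₂ p.1.2, ψ₂ p.2.2)) +
      cutNorm τ (fun p : (Ω × Ω') × (Ω × Ω') =>
        W₂ (ψ₂ p.1.2, ψ₂ p.2.2) - W₃ (ψ₃ p.1.2, ψ₃ p.2.2))))) := by
    refine (cutNorm_sub_le hf1 hf2 hf3).trans (add_le_add_right ?_ _)
    refine (cutNorm_sub_le hf2 hf2' hf3).trans (add_le_add_right ?_ _)
    refine (cutNorm_sub_le hf2' hg2' hf3).trans (add_le_add_right ?_ _)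
    exact cutNorm_sub_le hg2' hg2 hf3
  -- bound each term
  have hB1 : cutNorm τ (fun p : (Ω × Ω') × (Ω × Ω') =>
      W₁ (φ₁ p.1.1, φ₁ p.2.1) - W₂ (φ₂ p.1.1, φ₂ p.2.1)) ≤
      cutNorm lam (fun p : Ω × Ω => W₁ (φ₁ p.1, φ₁ p.2) - W₂ (φ₂ p.1, φ₂ p.2)) := by
    have hF12 : Integrable (fun p : Ω × Ω => W₁ (φ₁ p.1, φ₁ p.2) - W₂ (φ₂ p.1, φ₂ p.2))
        (lam.prod lam) := (integrable_pair_comp hφ₁ hW₁).sub (integrable_pair_comp hφ₂ hW₂)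
    exact cutNorm_comp_le hτ_fst hF12
  have hB5 : cutNorm τ (fun p : (Ω × Ω') × (Ω × Ω') =>
      W₂ (ψ₂ p.1.2, ψ₂ p.2.2) - W₃ (ψ₃ p.1.2, ψ₃ p.2.2)) ≤
      cutNorm nu (fun p : Ω' × Ω' => W₂ (ψ₂ p.1, ψ₂ p.2) - W₃ (ψ₃ p.1, ψ₃ p.2)) := by
    have hF23 : Integrable (fun p : Ω' × Ω' => W₂ (ψ₂ p.1, ψ₂ p.2) - W₃ (ψ₃ p.1, ψ₃ p.2))
        (nu.prod nu) := (integrable_pair_comp hψ₂ hW₂).sub (integrable_pair_comp hψ₃ hW₃)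
    exact cutNorm_comp_le hτ_snd hF23
  -- transfer of the L¹ error
  have htrans : ∀ (Φ : Ω × Ω' → S₂), MeasurePreserving Φ τ μ₂ →
      ∫ p : (Ω × Ω') × (Ω × Ω'), |W₂ (Φ p.1, Φ p.2) - w (Φ p.1, Φ p.2)| ∂(τ.prod τ)
      = ∫ q, |W₂ q - w q| ∂(μ₂.prod μ₂) := by
    intro Φ hΦ
    have hu : AEStronglyMeasurable (fun q : S₂ × S₂ => |W₂ q - w q|) (μ₂.prod μ₂) :=
      ((hW₂.sub hw_int).abs).aestronglyMeasurable
    have hmp : MeasurePreserving (Prod.map Φ Φ) (τ.prod τ) (μ₂.prod μ₂) := hΦ.prod hΦ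
    rw [← hmp.map_eq, integral_map hmp.measurable.aemeasurable (hmp.map_eq.symm ▸ hu)]
    exact integral_congr_ae (Filter.Eventually.of_forall fun z => by simp [Prod.map])
  have hB2 : cutNorm τ (fun p : (Ω × Ω') × (Ω × Ω') =>
      W₂ (φ₂ p.1.1, φ₂ p.2.1) - w (φ₂ p.1.1, φ₂ p.2.1)) < ε/4 := by
    refine lt_of_le_of_lt (cutNorm_le_integral (hf2.sub hf2')) ?_
    have := htrans (φ₂ ∘ Prod.fst) hΦ₂
    calc ∫ p : (Ω × Ω') × (Ω × Ω'),
          |W₂ (φ₂ p.1.1, φ₂ p.2.1) - w (φ₂ p.1.1, φ₂ p.2.1)| ∂(τ.prod τ)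
        = ∫ q, |W₂ q - w q| ∂(μ₂.prod μ₂) := this
      _ < ε/4 := hw_close
  have hB4 : cutNorm τ (fun p : (Ω × Ω') × (Ω × Ω') =>
      w (ψ₂ p.1.2, ψ₂ p.2.2) - W₂ (ψ₂ p.1.2, ψ₂ p.2.2)) < ε/4 := by
    refine lt_of_le_of_lt (cutNorm_le_integral (hg2'.sub hg2)) ?_
    have h1 := htrans (ψ₂ ∘ Prod.snd) hΨ₂
    calc ∫ p : (Ω × Ω') × (Ω × Ω'),
          |w (ψ₂ p.1.2, ψ₂ p.2.2) - W₂ (ψ₂ p.1.2, ψ₂ p.2.2)| ∂(τ.prod τ)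
        = ∫ p : (Ω × Ω') × (Ω × Ω'),
          |W₂ (ψ₂ p.1.2, ψ₂ p.2.2) - w (ψ₂ p.1.2, ψ₂ p.2.2)| ∂(τ.prod τ) :=
          integral_congr_ae (Filter.Eventually.of_forall fun z => by simp only [abs_sub_comm])
      _ = ∫ q, |W₂ q - w q| ∂(μ₂.prod μ₂) := h1
      _ < ε/4 := hw_close
  -- middle term vanishes
  have hB3 : cutNorm τ (fun p : (Ω × Ω') × (Ω × Ω') =>
      w (φ₂ p.1.1, φ₂ p.2.1) - w (ψ₂ p.1.2, ψ₂ p.2.2)) = 0 := by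
    set N : Set (Ω × Ω') := {z | ι (φ₂ z.1) = ι (ψ₂ z.2)} with hN
    have hNc : τ Nᶜ = 0 := hτ_supp
    have hNN : (τ.prod τ) ((N ×ˢ N)ᶜ) = 0 := by
      have hsub : (N ×ˢ N)ᶜ ⊆ (Nᶜ ×ˢ Set.univ) ∪ (Set.univ ×ˢ Nᶜ) := by
        intro z hz
        by_cases h1 : z.1 ∈ N
        · right
          refine ⟨trivial, fun h2 => hz ⟨h1, h2⟩⟩
        · left
          exact ⟨h1, trivial⟩
      refine le_antisymm (le_trans (measure_mono hsub) ?_) zero_le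
      refine le_trans (measure_union_le _ _) ?_
      rw [Measure.prod_prod, Measure.prod_prod, hNc]
      simp
    have hae : (fun p : (Ω × Ω') × (Ω × Ω') => w (φ₂ p.1.1, φ₂ p.2.1) - w (ψ₂ p.1.2, ψ₂ p.2.2))
        =ᵐ[τ.prod τ] (fun _ => (0:ℝ)) := by
      have hsubset : {p : (Ω × Ω') × (Ω × Ω') |
          ¬ (w (φ₂ p.1.1, φ₂ p.2.1) - w (ψ₂ p.1.2, ψ₂ p.2.2) = 0)} ⊆ (N ×ˢ N)ᶜ := by
        intro p hp hmem
        obtain ⟨h1, h2⟩ := hmem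
        refine hp ?_
        rw [sub_eq_zero]
        exact hw_inv _ _ _ _ (hι_same _ _ h1) (hι_same _ _ h2)
      exact ae_iff.mpr (measure_mono_null hsubset hNN)
    rw [cutNorm_congr_ae hae]
    exact cutNorm_zero
  -- put everything together
  have hfinal := h13.trans hchain
  rw [hB3] at hfinal
  have : cutDist μ₁ μ₃ W₁ W₃ <
      (cutDist μ₁ μ₂ W₁ W₂ + ε/4) + (ε/4 + (0 + (ε/4 + (cutDist μ₂ μ₃ W₂ W₃ + ε/4)))) := by
    refine lt_of_le_of_lt hfinal ?_
    have e1 := hB1.trans_lt ha_lt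
    have e5 := hB5.trans_lt hb_lt
    unfold cutDist
    gcongr
  unfold cutDist at this ⊢
  linarith
end

section
/- Counting lemma for simple digraphs in cut metric: let W₁ : S₁² → [0,1] and W₂ : S₂² → [0,1] be measurable functions on probability spaces, and let F be a finite simple digraph (no loops and no pair of opposite edges) with m edges. Define t(F, W) := ∫_{S^{|F|}} ∏_{(i,j) ∈ E(F)} W(x_i, x_j) ∏_i dμ(x_i). Then |t(F, W₁) − t(F, W₂)| ≤ m · δ□(W₁, W₂). -/
open MeasureTheory

set_option maxHeartbeats 2000000

/-- The cut norm (functional version) of a function on the square of a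
probability space: supremum over measurable `f, g : Ω → [-1,1]`. -/
noncomputable def cutNorm₂ {Ω : Type} [MeasurableSpace Ω] (μ : Measure Ω)
    (U : Ω × Ω → ℝ) : ℝ :=
  sSup {t : ℝ | ∃ f g : Ω → ℝ, Measurable f ∧ Measurable g ∧
    (∀ x, f x ∈ Set.Icc (-1 : ℝ) 1) ∧ (∀ x, g x ∈ Set.Icc (-1 : ℝ) 1) ∧
    t = |∫ p, f p.1 * U p * g p.2 ∂(μ.prod μ)|}

/-- The cut metric between functions on (possibly different) probability
spaces. -/
noncomputable def cutDist₂ {S₁ S₂ : Type} [MeasurableSpace S₁]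
    [MeasurableSpace S₂] (μ₁ : Measure S₁) (μ₂ : Measure S₂)
    (W₁ : S₁ × S₁ → ℝ) (W₂ : S₂ × S₂ → ℝ) : ℝ :=
  sInf {t : ℝ | ∃ (Ω : Type) (_ : MeasurableSpace Ω) (μ : Measure Ω)
    (φ₁ : Ω → S₁) (φ₂ : Ω → S₂), IsProbabilityMeasure μ ∧
    MeasurePreserving φ₁ μ μ₁ ∧ MeasurePreserving φ₂ μ μ₂ ∧
    t = cutNorm₂ μ (fun p => W₁ (φ₁ p.1, φ₁ p.2) - W₂ (φ₂ p.1, φ₂ p.2))}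

/-- The homomorphism density of a simple digraph with edge set `E` in a
function `W` on the square of a probability space. -/
noncomputable def homDensity {S : Type} [MeasurableSpace S] (μ : Measure S)
    (k : ℕ) (E : Finset (Fin k × Fin k)) (W : S × S → ℝ) : ℝ :=
  ∫ x : Fin k → S, ∏ p ∈ E, W (x p.1, x p.2) ∂(Measure.pi fun _ => μ)

/- ------------------- Auxiliary lemmas ------------------- -/

section Aux

variable {Ω : Type} [MeasurableSpace Ω]

lemma aux_integrable_of_bounded {μ : Measure Ω} [IsFiniteMeasure μ]
    {f : Ω → ℝ} (hm : Measurable f) (C : ℝ) (h : ∀ x, |f x| ≤ C) :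
    Integrable f μ :=
  ⟨hm.aestronglyMeasurable,
    HasFiniteIntegral.of_bounded (C := C)
      (Filter.Eventually.of_forall (by simpa [Real.norm_eq_abs] using h))⟩

lemma aux_measurable_prodEdges {k : ℕ} (E : Finset (Fin k × Fin k))
    (V : Fin k × Fin k → Ω × Ω → ℝ) (hV : ∀ e, Measurable (V e)) :
    Measurable fun x : Fin k → Ω => ∏ e ∈ E, V e (x e.1, x e.2) :=
  Finset.measurable_prod _ fun e _ =>
    (hV e).comp ((measurable_pi_apply _).prodMk (measurable_pi_apply _))

lemma aux_prod_mem_Icc {k : ℕ} (E : Finset (Fin k × Fin k))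
    (V : Fin k × Fin k → Ω × Ω → ℝ) (hV : ∀ e p, V e p ∈ Set.Icc (0:ℝ) 1)
    (x : Fin k → Ω) : (∏ e ∈ E, V e (x e.1, x e.2)) ∈ Set.Icc (0:ℝ) 1 :=
  ⟨Finset.prod_nonneg fun e _ => (hV e _).1,
    Finset.prod_le_one (fun e _ => (hV e _).1) (fun e _ => (hV e _).2)⟩

lemma aux_cutNorm_bddAbove (μ : Measure Ω) [IsProbabilityMeasure μ]
    {U : Ω × Ω → ℝ} (hU1 : ∀ p, |U p| ≤ 1) :
    BddAbove {t : ℝ | ∃ f g : Ω → ℝ, Measurable f ∧ Measurable g ∧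
      (∀ x, f x ∈ Set.Icc (-1 : ℝ) 1) ∧ (∀ x, g x ∈ Set.Icc (-1 : ℝ) 1) ∧
      t = |∫ p, f p.1 * U p * g p.2 ∂(μ.prod μ)|} := by
  refine ⟨1, ?_⟩
  rintro t ⟨f, g, hf, hg, hf1, hg1, rfl⟩
  have hb : ∀ p : Ω × Ω, |f p.1| * |U p| * |g p.2| ≤ 1 := by
    intro p
    have h1 : |f p.1| ≤ 1 := abs_le.mpr ⟨(hf1 p.1).1, (hf1 p.1).2⟩
    have h2 : |g p.2| ≤ 1 := abs_le.mpr ⟨(hg1 p.2).1, (hg1 p.2).2⟩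
    exact mul_le_one₀ (mul_le_one₀ h1 (abs_nonneg _) (hU1 p)) (abs_nonneg _) h2
  calc |∫ p, f p.1 * U p * g p.2 ∂(μ.prod μ)|
      ≤ ∫ p, |f p.1| * |U p| * |g p.2| ∂(μ.prod μ) := by
        simpa [Real.norm_eq_abs, abs_mul] using
          norm_integral_le_integral_norm (μ := μ.prod μ)
            (f := fun p => f p.1 * U p * g p.2)
    _ ≤ ∫ _ : Ω × Ω, (1:ℝ) ∂(μ.prod μ) :=
        integral_mono_of_nonneg (Filter.Eventually.of_forall fun p =>
            mul_nonneg (mul_nonneg (abs_nonneg _) (abs_nonneg _)) (abs_nonneg _))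
          (integrable_const 1) (Filter.Eventually.of_forall hb)
    _ = 1 := by simp

lemma aux_cutNorm_nonneg (μ : Measure Ω) [IsProbabilityMeasure μ]
    {U : Ω × Ω → ℝ} (hU1 : ∀ p, |U p| ≤ 1) : 0 ≤ cutNorm₂ μ U := by
  refine le_csSup (aux_cutNorm_bddAbove μ hU1) ?_
  refine ⟨fun _ => 0, fun _ => 0, measurable_const, measurable_const,
    fun _ => by norm_num, fun _ => by norm_num, ?_⟩
  simp

lemma aux_le_cutNorm (μ : Measure Ω) [IsProbabilityMeasure μ]
    {U : Ω × Ω → ℝ} (hU1 : ∀ p, |U p| ≤ 1) {f g : Ω → ℝ}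
    (hf : Measurable f) (hg : Measurable g)
    (hf1 : ∀ x, f x ∈ Set.Icc (-1 : ℝ) 1) (hg1 : ∀ x, g x ∈ Set.Icc (-1 : ℝ) 1) :
    |∫ p, f p.1 * U p * g p.2 ∂(μ.prod μ)| ≤ cutNorm₂ μ U :=
  le_csSup (aux_cutNorm_bddAbove μ hU1) ⟨f, g, hf, hg, hf1, hg1, rfl⟩

/-- Updating two distinct coordinates by fresh independent values preserves
the product measure. -/
lemma aux_measurePreserving_updatePair (μ : Measure Ω) [IsProbabilityMeasure μ]
    {k : ℕ} {i j : Fin k} (hij : i ≠ j) :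
    MeasurePreserving
      (fun q : (Fin k → Ω) × (Ω × Ω) =>
        Function.update (Function.update q.1 i q.2.1) j q.2.2)
      ((Measure.pi fun _ => μ).prod (μ.prod μ)) (Measure.pi fun _ => μ) := by
  classical
  have hmeas : Measurable (fun q : (Fin k → Ω) × (Ω × Ω) =>
      Function.update (Function.update q.1 i q.2.1) j q.2.2) := by
    apply measurable_pi_iff.mpr
    intro l
    by_cases hj : l = j
    · subst hj
      simpa using (measurable_snd.snd : Measurable
        fun q : (Fin k → Ω) × (Ω × Ω) => q.2.2)
    · by_cases hi : l = i
      · subst hi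
        simp only [Function.update_of_ne hj, Function.update_self]
        exact measurable_snd.fst
      · simp only [Function.update_of_ne hj, Function.update_of_ne hi]
        exact (measurable_pi_apply l).comp measurable_fst
  refine ⟨hmeas, ?_⟩
  refine (Measure.pi_eq fun s hs => ?_).symm
  rw [Measure.map_apply hmeas (MeasurableSet.univ_pi hs)]
  have hupd : ∀ (q : (Fin k → Ω) × (Ω × Ω)) l,
      Function.update (Function.update q.1 i q.2.1) j q.2.2 l
        = if l = j then q.2.2 else if l = i then q.2.1 else q.1 l := by
    intro q l
    by_cases h1 : l = j
    · subst h1; simp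
    · rw [Function.update_of_ne h1, Function.update_apply, if_neg h1]
  have hpre : (fun q : (Fin k → Ω) × (Ω × Ω) =>
        Function.update (Function.update q.1 i q.2.1) j q.2.2) ⁻¹'
        (Set.pi Set.univ s) =
      (Set.pi Set.univ fun l => if l = i ∨ l = j then Set.univ else s l) ×ˢ
        (s i ×ˢ s j) := by
    ext q
    simp only [Set.mem_preimage, Set.mem_univ_pi, Set.mem_prod]
    constructor
    · intro hq
      refine ⟨fun l => ?_, ?_, ?_⟩
      · by_cases hl : l = i ∨ l = j
        · rw [if_pos hl]; exact Set.mem_univ _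
        · rw [if_neg hl]
          push_neg at hl
          have := hq l
          rw [hupd q l, if_neg hl.2, if_neg hl.1] at this
          exact this
      · have := hq i
        rw [hupd q i, if_neg hij, if_pos rfl] at this
        exact this
      · have := hq j
        rw [hupd q j, if_pos rfl] at this
        exact this
    · rintro ⟨h1, h2, h3⟩ l
      rw [hupd q l]
      by_cases hj' : l = j
      · rw [if_pos hj']; exact hj' ▸ h3
      · rw [if_neg hj']
        by_cases hi' : l = i
        · rw [if_pos hi']; exact hi' ▸ h2
        · rw [if_neg hi']
          have := h1 l
          rw [if_neg (by simp [hi', hj'])] at this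
          exact this
  rw [hpre, Measure.prod_prod, Measure.prod_prod, Measure.pi_pi]
  have hval : ∀ l, μ (if l = i ∨ l = j then Set.univ else s l)
      = if l = i ∨ l = j then 1 else μ (s l) := by
    intro l; split_ifs <;> simp
  rw [Finset.prod_congr rfl fun l _ => hval l]
  have hsplit := Finset.prod_filter_mul_prod_filter_not Finset.univ
    (fun l => l = i ∨ l = j) (fun l => μ (s l))
  have hfil : Finset.univ.filter (fun l : Fin k => l = i ∨ l = j) = {i, j} := by
    ext l; simp [Finset.mem_filter, Finset.mem_insert]
  have h1 : ∏ l ∈ Finset.univ.filter (fun l : Fin k => l = i ∨ l = j),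
      μ (s l) = μ (s i) * μ (s j) := by
    rw [hfil]; exact Finset.prod_pair hij
  have h2 : ∏ l ∈ Finset.univ.filter (fun l : Fin k => ¬(l = i ∨ l = j)),
      μ (s l) = ∏ l : Fin k, if l = i ∨ l = j then 1 else μ (s l) := by
    rw [Finset.prod_filter]
    refine Finset.prod_congr rfl fun l _ => ?_
    by_cases hl : l = i ∨ l = j <;> simp [hl]
  rw [← h2, ← hsplit, h1]
  ring

/-- `homDensity` is invariant under measure-preserving maps. -/
lemma aux_homDensity_comp {S : Type} [MeasurableSpace S]
    {μ : Measure Ω} {ν : Measure S} [IsProbabilityMeasure ν]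
    {φ : Ω → S} (hφ : MeasurePreserving φ μ ν) {W : S × S → ℝ}
    (hW : Measurable W) (k : ℕ) (E : Finset (Fin k × Fin k)) :
    homDensity ν k E W = homDensity μ k E (fun p => W (φ p.1, φ p.2)) := by
  have hΦ : MeasurePreserving (fun (x : Fin k → Ω) l => φ (x l))
      (Measure.pi fun _ => μ) (Measure.pi fun _ => ν) :=
    measurePreserving_pi _ _ (fun _ => hφ)
  unfold homDensity
  rw [← hΦ.map_eq, integral_map hΦ.measurable.aemeasurable
    (aux_measurable_prodEdges E (fun _ => W) fun _ => hW).aestronglyMeasurable]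

/-- Core estimate: an integral of a product of `[0,1]`-valued edge factors not
joining `i` and `j`, times a factor `U (x i, x j)`, is bounded by the cut
norm of `U`. -/
lemma aux_core (μ : Measure Ω) [IsProbabilityMeasure μ]
    {k : ℕ} {i j : Fin k} (hij : i ≠ j) (E' : Finset (Fin k × Fin k))
    (hE' : ∀ e ∈ E', ¬((e.1 = i ∨ e.2 = i) ∧ (e.1 = j ∨ e.2 = j)))
    (V : Fin k × Fin k → Ω × Ω → ℝ) (hVm : ∀ e, Measurable (V e))
    (hV01 : ∀ e p, V e p ∈ Set.Icc (0:ℝ) 1)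
    (U : Ω × Ω → ℝ) (hUm : Measurable U) (hU1 : ∀ p, |U p| ≤ 1) :
    |∫ x : Fin k → Ω, (∏ e ∈ E', V e (x e.1, x e.2)) * U (x i, x j)
        ∂(Measure.pi fun _ => μ)| ≤ cutNorm₂ μ U := by
  classical
  set f : (Fin k → Ω) → ℝ :=
    fun x => (∏ e ∈ E', V e (x e.1, x e.2)) * U (x i, x j) with hfdef
  have hfm : Measurable f :=
    (aux_measurable_prodEdges E' V hVm).mul
      (hUm.comp ((measurable_pi_apply i).prodMk (measurable_pi_apply j)))
  have hfb : ∀ x, |f x| ≤ 1 := by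
    intro x
    simp only [hfdef, abs_mul]
    have h1 := aux_prod_mem_Icc E' V hV01 x
    exact mul_le_one₀ (abs_le.mpr ⟨by linarith [h1.1], h1.2⟩) (abs_nonneg _) (hU1 _)
  have hT := aux_measurePreserving_updatePair μ (k := k) hij
  have hAB : ∫ x, f x ∂(Measure.pi fun _ : Fin k => μ) =
      ∫ x, ∫ p : Ω × Ω,
        f (Function.update (Function.update x i p.1) j p.2) ∂(μ.prod μ)
        ∂(Measure.pi fun _ : Fin k => μ) := by
    calc ∫ x, f x ∂(Measure.pi fun _ : Fin k => μ)
        = ∫ x, f x ∂(Measure.map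
            (fun q : (Fin k → Ω) × (Ω × Ω) =>
              Function.update (Function.update q.1 i q.2.1) j q.2.2)
            ((Measure.pi fun _ : Fin k => μ).prod (μ.prod μ))) := by
          rw [hT.map_eq]
      _ = ∫ q : (Fin k → Ω) × (Ω × Ω),
            f (Function.update (Function.update q.1 i q.2.1) j q.2.2)
            ∂((Measure.pi fun _ : Fin k => μ).prod (μ.prod μ)) :=
          integral_map hT.measurable.aemeasurable hfm.aestronglyMeasurable
      _ = ∫ x, ∫ p : Ω × Ω,
            f (Function.update (Function.update x i p.1) j p.2) ∂(μ.prod μ)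
            ∂(Measure.pi fun _ : Fin k => μ) :=
          integral_prod
            (fun q : (Fin k → Ω) × (Ω × Ω) =>
              f (Function.update (Function.update q.1 i q.2.1) j q.2.2))
            (aux_integrable_of_bounded (hfm.comp hT.measurable) 1
              (fun q => hfb _))
  rw [hAB]
  set F : (Fin k → Ω) → Ω → ℝ := fun x u =>
    ∏ e ∈ E'.filter fun e => e.1 = i ∨ e.2 = i,
      V e (Function.update x i u e.1, Function.update x i u e.2) with hFdef
  set G : (Fin k → Ω) → Ω → ℝ := fun x v =>
    ∏ e ∈ (E'.filter fun e => ¬(e.1 = i ∨ e.2 = i)).filter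
        fun e => e.1 = j ∨ e.2 = j,
      V e (Function.update x j v e.1, Function.update x j v e.2) with hGdef
  set C : (Fin k → Ω) → ℝ := fun x =>
    ∏ e ∈ (E'.filter fun e => ¬(e.1 = i ∨ e.2 = i)).filter
        fun e => ¬(e.1 = j ∨ e.2 = j),
      V e (x e.1, x e.2) with hCdef
  have hsplit : ∀ x u v,
      f (Function.update (Function.update x i u) j v)
        = C x * (F x u * U (u, v) * G x v) := by
    intro x u v
    set y : Fin k → Ω := Function.update (Function.update x i u) j v with hy
    have hyj : ∀ a, a ≠ j → y a = Function.update x i u a := by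
      intro a ha; rw [hy, Function.update_of_ne ha]
    have hyi : ∀ a, a ≠ i → y a = Function.update x j v a := by
      intro a ha
      by_cases h : a = j
      · subst h; rw [hy]; simp
      · rw [hyj a h, Function.update_of_ne ha, Function.update_of_ne h]
    have hyiv : y i = u := by rw [hyj i hij]; simp
    have hyjv : y j = v := by rw [hy]; simp
    show (∏ e ∈ E', V e (y e.1, y e.2)) * U (y i, y j) = _
    rw [hyiv, hyjv]
    rw [← Finset.prod_filter_mul_prod_filter_not E' (fun e => e.1 = i ∨ e.2 = i)
      (fun e => V e (y e.1, y e.2)),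
      ← Finset.prod_filter_mul_prod_filter_not
        (E'.filter fun e => ¬(e.1 = i ∨ e.2 = i)) (fun e => e.1 = j ∨ e.2 = j)
        (fun e => V e (y e.1, y e.2))]
    have e1 : ∏ e ∈ E'.filter (fun e => e.1 = i ∨ e.2 = i),
        V e (y e.1, y e.2) = F x u := by
      refine Finset.prod_congr rfl fun e he => ?_
      obtain ⟨heE, hepI⟩ := Finset.mem_filter.mp he
      have hnotj : ¬(e.1 = j ∨ e.2 = j) := fun hpj => hE' e heE ⟨hepI, hpj⟩
      push_neg at hnotj
      rw [hyj _ hnotj.1, hyj _ hnotj.2]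
    have e2 : ∏ e ∈ (E'.filter fun e => ¬(e.1 = i ∨ e.2 = i)).filter
        (fun e => e.1 = j ∨ e.2 = j), V e (y e.1, y e.2) = G x v := by
      refine Finset.prod_congr rfl fun e he => ?_
      obtain ⟨he', _⟩ := Finset.mem_filter.mp he
      obtain ⟨_, hnoti⟩ := Finset.mem_filter.mp he'
      push_neg at hnoti
      rw [hyi _ hnoti.1, hyi _ hnoti.2]
    have e3 : ∏ e ∈ (E'.filter fun e => ¬(e.1 = i ∨ e.2 = i)).filter
        (fun e => ¬(e.1 = j ∨ e.2 = j)), V e (y e.1, y e.2) = C x := by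
      refine Finset.prod_congr rfl fun e he => ?_
      obtain ⟨he', hnotj⟩ := Finset.mem_filter.mp he
      obtain ⟨_, hnoti⟩ := Finset.mem_filter.mp he'
      push_neg at hnoti; push_neg at hnotj
      rw [hyi _ hnoti.1, hyi _ hnoti.2,
        Function.update_of_ne hnotj.1, Function.update_of_ne hnotj.2]
    rw [e1, e2, e3]
    ring
  have hinner : ∀ x,
      ∫ p : Ω × Ω, f (Function.update (Function.update x i p.1) j p.2)
          ∂(μ.prod μ)
        = C x * ∫ p : Ω × Ω, F x p.1 * U p * G x p.2 ∂(μ.prod μ) := by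
    intro x
    rw [← integral_const_mul]
    refine integral_congr_ae (Filter.Eventually.of_forall fun p => ?_)
    have := hsplit x p.1 p.2
    simpa using this
  have hFm : ∀ x, Measurable (F x) := by
    intro x
    refine Finset.measurable_prod _ fun e _ => (hVm e).comp ?_
    exact ((measurable_pi_apply e.1).comp (measurable_update x)).prodMk
      ((measurable_pi_apply e.2).comp (measurable_update x))
  have hGm : ∀ x, Measurable (G x) := by
    intro x
    refine Finset.measurable_prod _ fun e _ => (hVm e).comp ?_
    exact ((measurable_pi_apply e.1).comp (measurable_update x)).prodMk
      ((measurable_pi_apply e.2).comp (measurable_update x))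
  have hF1 : ∀ x u, F x u ∈ Set.Icc (-1:ℝ) 1 := by
    intro x u
    have h : F x u ∈ Set.Icc (0:ℝ) 1 :=
      aux_prod_mem_Icc (E'.filter fun e => e.1 = i ∨ e.2 = i)
        (fun e p => V e (p.1, p.2)) (fun e p => hV01 e _) (Function.update x i u)
    exact ⟨le_trans (by norm_num) h.1, h.2⟩
  have hG1 : ∀ x v, G x v ∈ Set.Icc (-1:ℝ) 1 := by
    intro x v
    have h : G x v ∈ Set.Icc (0:ℝ) 1 :=
      aux_prod_mem_Icc ((E'.filter fun e => ¬(e.1 = i ∨ e.2 = i)).filter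
          fun e => e.1 = j ∨ e.2 = j)
        (fun e p => V e (p.1, p.2)) (fun e p => hV01 e _) (Function.update x j v)
    exact ⟨le_trans (by norm_num) h.1, h.2⟩
  have hbound : ∀ x,
      |∫ p : Ω × Ω, f (Function.update (Function.update x i p.1) j p.2)
          ∂(μ.prod μ)| ≤ cutNorm₂ μ U := by
    intro x
    rw [hinner x, abs_mul]
    have hC1 : |C x| ≤ 1 := by
      have h : C x ∈ Set.Icc (0:ℝ) 1 :=
        aux_prod_mem_Icc ((E'.filter fun e => ¬(e.1 = i ∨ e.2 = i)).filter
            fun e => ¬(e.1 = j ∨ e.2 = j))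
          (fun e p => V e (p.1, p.2)) (fun e p => hV01 e _) x
      exact abs_le.mpr ⟨le_trans (by norm_num) h.1, h.2⟩
    have hI := aux_le_cutNorm μ hU1 (hFm x) (hGm x) (hF1 x) (hG1 x)
    calc |C x| * |∫ p : Ω × Ω, F x p.1 * U p * G x p.2 ∂(μ.prod μ)|
        ≤ 1 * cutNorm₂ μ U :=
          mul_le_mul hC1 hI (abs_nonneg _) zero_le_one
      _ = cutNorm₂ μ U := one_mul _
  calc |∫ x, ∫ p : Ω × Ω,
        f (Function.update (Function.update x i p.1) j p.2) ∂(μ.prod μ)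
        ∂(Measure.pi fun _ : Fin k => μ)|
      ≤ ∫ x, |∫ p : Ω × Ω,
          f (Function.update (Function.update x i p.1) j p.2) ∂(μ.prod μ)|
          ∂(Measure.pi fun _ : Fin k => μ) := by
        simpa [Real.norm_eq_abs] using
          norm_integral_le_integral_norm (μ := Measure.pi fun _ : Fin k => μ)
            (f := fun x => ∫ p : Ω × Ω,
              f (Function.update (Function.update x i p.1) j p.2) ∂(μ.prod μ))
    _ ≤ ∫ _x : Fin k → Ω, cutNorm₂ μ U ∂(Measure.pi fun _ : Fin k => μ) :=
        integral_mono_of_nonneg (Filter.Eventually.of_forall fun x => abs_nonneg _)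
          (integrable_const _) (Filter.Eventually.of_forall hbound)
    _ = cutNorm₂ μ U := by simp

/-- Telescoping step: counting lemma on a common probability space. -/
lemma aux_telescope (μ : Measure Ω) [IsProbabilityMeasure μ]
    {k : ℕ} (E : Finset (Fin k × Fin k))
    (hsimple : ∀ p ∈ E, p.1 ≠ p.2 ∧ (p.2, p.1) ∉ E)
    (U₁ U₂ : Ω × Ω → ℝ) (h1m : Measurable U₁) (h2m : Measurable U₂)
    (h1 : ∀ p, U₁ p ∈ Set.Icc (0:ℝ) 1) (h2 : ∀ p, U₂ p ∈ Set.Icc (0:ℝ) 1) :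
    |homDensity μ k E U₁ - homDensity μ k E U₂| ≤
      (E.card : ℝ) * cutNorm₂ μ (fun p => U₁ p - U₂ p) := by
  classical
  set ν := cutNorm₂ μ (fun p => U₁ p - U₂ p) with hν
  set h : Finset (Fin k × Fin k) → ℝ := fun A =>
    ∫ x : Fin k → Ω, ∏ e ∈ E, (if e ∈ A then U₂ else U₁) (x e.1, x e.2)
      ∂(Measure.pi fun _ : Fin k => μ)
    with hhdef
  have hVm : ∀ (A : Finset (Fin k × Fin k)) e,
      Measurable (if e ∈ A then U₂ else U₁) := by
    intro A e; split_ifs <;> assumption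
  have hV01 : ∀ (A : Finset (Fin k × Fin k)) e p,
      (if e ∈ A then U₂ else U₁) p ∈ Set.Icc (0:ℝ) 1 := by
    intro A e p; split_ifs with hh
    · exact h2 p
    · exact h1 p
  have hint : ∀ A : Finset (Fin k × Fin k),
      Integrable (fun x : Fin k → Ω =>
        ∏ e ∈ E, (if e ∈ A then U₂ else U₁) (x e.1, x e.2))
        (Measure.pi fun _ : Fin k => μ) := by
    intro A
    refine aux_integrable_of_bounded
      (aux_measurable_prodEdges E _ (hVm A)) 1 (fun x => ?_)
    have hmem := aux_prod_mem_Icc E _ (hV01 A) x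
    exact abs_le.mpr ⟨by linarith [hmem.1], hmem.2⟩
  have hU1abs : ∀ p, |U₁ p - U₂ p| ≤ 1 := by
    intro p
    have a := h1 p; have b := h2 p
    rw [abs_le]; constructor <;> [linarith [a.1, b.2]; linarith [a.2, b.1]]
  have key : ∀ A : Finset (Fin k × Fin k), A ⊆ E →
      |h ∅ - h A| ≤ (A.card : ℝ) * ν := by
    intro A
    induction A using Finset.induction_on with
    | empty => intro _; simp
    | insert a A ha ih =>
      intro hsub
      have haE : a ∈ E := hsub (Finset.mem_insert_self a A)
      have hAE : A ⊆ E := fun e he => hsub (Finset.mem_insert_of_mem he)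
      have hstep : |h A - h (insert a A)| ≤ ν := by
        have hdiff : h A - h (insert a A) =
            ∫ x : Fin k → Ω,
              (∏ e ∈ E.erase a, (if e ∈ A then U₂ else U₁) (x e.1, x e.2)) *
                ((fun p => U₁ p - U₂ p) (x a.1, x a.2))
              ∂(Measure.pi fun _ : Fin k => μ) := by
          rw [hhdef]
          rw [← integral_sub (hint A) (hint (insert a A))]
          refine integral_congr_ae (Filter.Eventually.of_forall fun x => ?_)
          dsimp only
          rw [← Finset.mul_prod_erase E _ haE, ← Finset.mul_prod_erase E _ haE]
          have hsame : ∏ e ∈ E.erase a,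
              (if e ∈ insert a A then U₂ else U₁) (x e.1, x e.2)
              = ∏ e ∈ E.erase a, (if e ∈ A then U₂ else U₁) (x e.1, x e.2) := by
            refine Finset.prod_congr rfl fun e he => ?_
            have hne : e ≠ a := (Finset.mem_erase.mp he).1
            simp [Finset.mem_insert, hne]
          rw [hsame]
          rw [if_neg ha, if_pos (Finset.mem_insert_self a A)]
          ring
        rw [hdiff]
        have hij : a.1 ≠ a.2 := (hsimple a haE).1
        have hE' : ∀ e ∈ E.erase a,
            ¬((e.1 = a.1 ∨ e.2 = a.1) ∧ (e.1 = a.2 ∨ e.2 = a.2)) := by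
          rintro e he ⟨hc1, hc2⟩
          obtain ⟨hea, heE⟩ := Finset.mem_erase.mp he
          have hsa := hsimple a haE
          rcases hc1 with h1' | h1' <;> rcases hc2 with h2' | h2'
          · exact hsa.1 (by rw [← h1', h2'])
          · exact hea (Prod.ext h1' h2')
          · have heq : e = (a.2, a.1) := Prod.ext h2' h1'
            exact hsa.2 (heq ▸ heE)
          · exact hsa.1 (by rw [← h1', h2'])
        exact aux_core μ hij (E.erase a) hE' _ (hVm A) (hV01 A) _
          (h1m.sub h2m) hU1abs
      calc |h ∅ - h (insert a A)|
          ≤ |h ∅ - h A| + |h A - h (insert a A)| := abs_sub_le _ _ _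
        _ ≤ (A.card : ℝ) * ν + ν := add_le_add (ih hAE) hstep
        _ = ((insert a A).card : ℝ) * ν := by
            rw [Finset.card_insert_of_notMem ha]
            push_cast
            ring
  have hE0 : h ∅ = homDensity μ k E U₁ := by
    rw [hhdef]
    unfold homDensity
    simp
  have hEE : h E = homDensity μ k E U₂ := by
    rw [hhdef]
    unfold homDensity
    refine integral_congr_ae (Filter.Eventually.of_forall fun x => ?_)
    exact Finset.prod_congr rfl fun e he => by rw [if_pos he]
  calc |homDensity μ k E U₁ - homDensity μ k E U₂|
      = |h ∅ - h E| := by rw [hE0, hEE]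
    _ ≤ (E.card : ℝ) * ν := key E Finset.Subset.rfl

end Aux

/-- Counting lemma: for a finite simple digraph `F` with `m`
edges and `[0,1]`-valued measurable `W₁`, `W₂`,
`|t(F,W₁) − t(F,W₂)| ≤ m · δ□(W₁,W₂)`. -/
theorem counting_lemma_simple_digraph {S₁ S₂ : Type}
    [MeasurableSpace S₁] [MeasurableSpace S₂]
    (μ₁ : Measure S₁) (μ₂ : Measure S₂)
    [IsProbabilityMeasure μ₁] [IsProbabilityMeasure μ₂]
    (W₁ : S₁ × S₁ → ℝ) (W₂ : S₂ × S₂ → ℝ)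
    (hW₁meas : Measurable W₁) (hW₂meas : Measurable W₂)
    (hW₁01 : ∀ p, W₁ p ∈ Set.Icc (0 : ℝ) 1)
    (hW₂01 : ∀ p, W₂ p ∈ Set.Icc (0 : ℝ) 1)
    (k : ℕ) (E : Finset (Fin k × Fin k))
    (hsimple : ∀ p ∈ E, p.1 ≠ p.2 ∧ (p.2, p.1) ∉ E) :
    |homDensity μ₁ k E W₁ - homDensity μ₂ k E W₂| ≤
      (E.card : ℝ) * cutDist₂ μ₁ μ₂ W₁ W₂ := by
  classical
  set T := {t : ℝ | ∃ (Ω : Type) (_ : MeasurableSpace Ω) (μ : Measure Ω)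
    (φ₁ : Ω → S₁) (φ₂ : Ω → S₂), IsProbabilityMeasure μ ∧
    MeasurePreserving φ₁ μ μ₁ ∧ MeasurePreserving φ₂ μ μ₂ ∧
    t = cutNorm₂ μ (fun p => W₁ (φ₁ p.1, φ₁ p.2) - W₂ (φ₂ p.1, φ₂ p.2))}
    with hT
  have hfst : MeasurePreserving (Prod.fst : S₁ × S₂ → S₁) (μ₁.prod μ₂) μ₁ :=
    ⟨measurable_fst, by simp [Measure.map_fst_prod]⟩
  have hsnd : MeasurePreserving (Prod.snd : S₁ × S₂ → S₂) (μ₁.prod μ₂) μ₂ :=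
    ⟨measurable_snd, by simp [Measure.map_snd_prod]⟩
  have hne : T.Nonempty := by
    refine ⟨_, S₁ × S₂, inferInstance, μ₁.prod μ₂, Prod.fst, Prod.snd,
      inferInstance, hfst, hsnd, rfl⟩
  have hbound : ∀ t ∈ T, |homDensity μ₁ k E W₁ - homDensity μ₂ k E W₂| ≤
      (E.card : ℝ) * t := by
    rintro t ⟨Ω, mΩ, μ, φ₁, φ₂, hprob, hφ₁, hφ₂, rfl⟩
    haveI := hprob
    rw [aux_homDensity_comp hφ₁ hW₁meas k E, aux_homDensity_comp hφ₂ hW₂meas k E]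
    exact aux_telescope μ E hsimple
      (fun p => W₁ (φ₁ p.1, φ₁ p.2)) (fun p => W₂ (φ₂ p.1, φ₂ p.2))
      (hW₁meas.comp ((hφ₁.measurable.comp measurable_fst).prodMk
        (hφ₁.measurable.comp measurable_snd)))
      (hW₂meas.comp ((hφ₂.measurable.comp measurable_fst).prodMk
        (hφ₂.measurable.comp measurable_snd)))
      (fun p => hW₁01 _) (fun p => hW₂01 _)
  rcases Nat.eq_zero_or_pos E.card with h0 | hpos
  · have hE : E = ∅ := Finset.card_eq_zero.mp h0
    subst hE
    have h1 : homDensity μ₁ k (∅ : Finset (Fin k × Fin k)) W₁ = 1 := by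
      unfold homDensity; simp
    have h2 : homDensity μ₂ k (∅ : Finset (Fin k × Fin k)) W₂ = 1 := by
      unfold homDensity; simp
    rw [h1, h2]
    simp
  · have hm : (0:ℝ) < (E.card : ℝ) := by exact_mod_cast hpos
    have hdiv : |homDensity μ₁ k E W₁ - homDensity μ₂ k E W₂| / (E.card : ℝ)
        ≤ sInf T := by
      refine le_csInf hne fun t ht => ?_
      rw [div_le_iff₀ hm]
      calc |homDensity μ₁ k E W₁ - homDensity μ₂ k E W₂|
          ≤ (E.card : ℝ) * t := hbound t ht
        _ = t * (E.card : ℝ) := mul_comm _ _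
    rw [div_le_iff₀ hm] at hdiv
    calc |homDensity μ₁ k E W₁ - homDensity μ₂ k E W₂|
        ≤ sInf T * (E.card : ℝ) := hdiv
      _ = (E.card : ℝ) * sInf T := mul_comm _ _
      _ = (E.card : ℝ) * cutDist₂ μ₁ μ₂ W₁ W₂ := by rw [hT]; rfl
end

section
/- Suppose (S, μ) is a Borel probability space (a probability space whose measurable space is isomorphic to a Borel subset of [0,1]) and γ : [0,1] → S is measure-preserving (with Lebesgue measure on [0,1]). Then there exists a measurable measure-preserving function α : S × [0,1] → [0,1] (with respect to μ × λ on the domain and λ on the codomain) such that γ(α(s, y)) = s for (μ × λ)-almost every (s, y) ∈ S × [0,1]. -/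
open MeasureTheory ProbabilityTheory Set Filter
open scoped Topology ENNReal

noncomputable section QuantileAux

/-- Generalized inverse (quantile function) of the cdf of a real measure. -/
noncomputable def quantAux (ν : Measure ℝ) (u : ℝ) : ℝ := sInf {x | u ≤ cdf ν x}

lemma quantAux_set_nonempty (ν : Measure ℝ) {u : ℝ} (h1 : u < 1) :
    {x | u ≤ cdf ν x}.Nonempty := by
  have h := (tendsto_cdf_atTop ν).eventually_mem (Ioi_mem_nhds h1)
  obtain ⟨y, hy⟩ := h.exists
  exact ⟨y, show u ≤ cdf ν y from le_of_lt hy⟩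

lemma quantAux_set_bddBelow (ν : Measure ℝ) {u : ℝ} (h0 : 0 < u) :
    BddBelow {x | u ≤ cdf ν x} := by
  have h := (tendsto_cdf_atBot ν).eventually_mem (Iio_mem_nhds h0)
  rw [eventually_atBot] at h
  obtain ⟨x₀, hx₀⟩ := h
  refine ⟨x₀, fun x hx => ?_⟩
  simp only [Set.mem_setOf_eq] at hx
  by_contra hlt
  exact absurd hx (not_le.mpr (hx₀ x (le_of_not_ge hlt)))

lemma quantAux_le_iff (ν : Measure ℝ) {u x : ℝ} (h0 : 0 < u) (h1 : u < 1) :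
    quantAux ν u ≤ x ↔ u ≤ cdf ν x := by
  constructor
  · intro h
    have key : ∀ z, x < z → u ≤ cdf ν z := by
      intro z hz
      have hlt : sInf {x | u ≤ cdf ν x} < z := lt_of_le_of_lt h hz
      rw [csInf_lt_iff (quantAux_set_bddBelow ν h0) (quantAux_set_nonempty ν h1)] at hlt
      obtain ⟨y, hy, hyz⟩ := hlt
      exact le_trans hy (monotone_cdf ν hyz.le)
    have htd : Tendsto (cdf ν) (𝓝[>] x) (𝓝 (cdf ν x)) :=
      ((cdf ν).right_continuous x).tendsto.mono_left (nhdsWithin_mono x Ioi_subset_Ici_self)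
    exact ge_of_tendsto htd (eventually_nhdsWithin_of_forall fun z hz => key z hz)
  · intro h
    exact csInf_le (quantAux_set_bddBelow ν h0) h

end QuantileAux

noncomputable section AlphaAux

variable {S : Type*} [MeasurableSpace S]

/-- The candidate right inverse built from a kernel. -/
noncomputable def alphaFun (κ : Kernel S ℝ) : S × ℝ → ℝ := fun p =>
  if p.2 ∈ Set.Ioo (0:ℝ) 1 then quantAux (κ p.1) p.2 else 0

lemma measurable_cdf_eval (κ : Kernel S ℝ) [IsMarkovKernel κ] (x : ℝ) :
    Measurable fun s => cdf (κ s) x := by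
  have : (fun s => cdf (κ s) x) = fun s => ((κ s) (Iic x)).toReal := by
    funext s; rw [cdf_eq_real, measureReal_def]
  rw [this]
  exact (κ.measurable_coe measurableSet_Iic).ennreal_toReal

lemma measurable_alphaFun (κ : Kernel S ℝ) [IsMarkovKernel κ] :
    Measurable (alphaFun κ) := by
  apply measurable_of_Iic
  intro x
  have hset : alphaFun κ ⁻¹' Iic x =
      ({p : S × ℝ | p.2 ∈ Set.Ioo (0:ℝ) 1} ∩ {p | p.2 ≤ cdf (κ p.1) x}) ∪
      ({p : S × ℝ | p.2 ∈ Set.Ioo (0:ℝ) 1}ᶜ ∩ {p | (0:ℝ) ≤ x}) := by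
    ext p
    by_cases hp : p.2 ∈ Set.Ioo (0:ℝ) 1
    · constructor
      · intro h
        left
        exact ⟨hp, (quantAux_le_iff _ hp.1 hp.2).mp (by simpa [alphaFun, hp] using h)⟩
      · rintro (⟨_, h⟩ | ⟨hc, _⟩)
        · simpa [alphaFun, hp] using (quantAux_le_iff _ hp.1 hp.2).mpr h
        · exact absurd hp hc
    · constructor
      · intro h
        right
        exact ⟨hp, by simpa [alphaFun, hp] using h⟩
      · rintro (⟨hc, _⟩ | ⟨_, h⟩)
        · exact absurd hc hp
        · simpa [alphaFun, hp] using h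
  rw [hset]
  have h1 : MeasurableSet {p : S × ℝ | p.2 ∈ Set.Ioo (0:ℝ) 1} :=
    measurable_snd measurableSet_Ioo
  have h2 : MeasurableSet {p : S × ℝ | p.2 ≤ cdf (κ p.1) x} :=
    measurableSet_le measurable_snd ((measurable_cdf_eval κ x).comp measurable_fst)
  have h3 : MeasurableSet {p : S × ℝ | (0:ℝ) ≤ x} := by
    by_cases hx : (0:ℝ) ≤ x <;> simp [hx]
  exact (h1.inter h2).union (h1.compl.inter h3)

lemma slice_measure_Iic (κ : Kernel S ℝ) [IsMarkovKernel κ] (s : S) (x : ℝ) :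
    (volume.restrict (Set.Icc (0:ℝ) 1)) {u | alphaFun κ (s, u) ≤ x} = κ s (Iic x) := by
  set m := (volume : Measure ℝ).restrict (Set.Icc (0:ℝ) 1) with hm
  set c := cdf (κ s) x with hc
  have hc0 : 0 ≤ c := cdf_nonneg _ _
  have hc1 : c ≤ 1 := cdf_le_one _ _
  set A := {u : ℝ | alphaFun κ (s, u) ≤ x} with hA
  have hnull : m (Set.Ioo (0:ℝ) 1)ᶜ = 0 := by
    rw [hm, Measure.restrict_apply measurableSet_Ioo.compl]
    have : (Set.Ioo (0:ℝ) 1)ᶜ ∩ Set.Icc 0 1 = {0, 1} := by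
      ext u
      simp only [Set.mem_inter_iff, Set.mem_compl_iff, Set.mem_Ioo, Set.mem_Icc,
        Set.mem_insert_iff, Set.mem_singleton_iff]
      constructor
      · rintro ⟨h1, h2, h3⟩
        rcases lt_or_eq_of_le h2 with h2' | h2'
        · rcases lt_or_eq_of_le h3 with h3' | h3'
          · exact absurd ⟨h2', h3'⟩ h1
          · right; exact h3'
        · left; exact h2'.symm
      · rintro (rfl | rfl) <;> norm_num
    rw [this, Set.insert_eq]
    exact measure_union_null Real.volume_singleton Real.volume_singleton
  have hAeq : A ∩ Set.Ioo 0 1 = Iic c ∩ Set.Ioo 0 1 := by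
    ext u
    simp only [Set.mem_inter_iff, Set.mem_Ioo, Set.mem_Iic, hA, Set.mem_setOf_eq]
    constructor
    · rintro ⟨h1, h2⟩
      refine ⟨?_, h2⟩
      have := (quantAux_le_iff (κ s) h2.1 h2.2).mp (by simpa [alphaFun, h2] using h1)
      exact this
    · rintro ⟨h1, h2⟩
      refine ⟨?_, h2⟩
      simp only [alphaFun, h2, if_true, Set.mem_Ioo]
      exact (quantAux_le_iff (κ s) h2.1 h2.2).mpr h1
  have hmA : m A = m (A ∩ Set.Ioo 0 1) := by
    have := measure_inter_add_diff (μ := m) A (measurableSet_Ioo (a := (0:ℝ)) (b := 1))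
    have hdiff : m (A \ Set.Ioo 0 1) = 0 :=
      measure_mono_null (Set.diff_subset_compl A (Set.Ioo 0 1)) hnull
    rw [← this, hdiff, add_zero]
  have hvol : m (Iic c ∩ Set.Ioo 0 1) = ENNReal.ofReal c := by
    rw [hm, Measure.restrict_apply (measurableSet_Iic.inter measurableSet_Ioo)]
    have hsub : Iic c ∩ Set.Ioo 0 1 ∩ Set.Icc 0 1 = Iic c ∩ Set.Ioo 0 1 := by
      rw [Set.inter_eq_left.mpr]
      exact fun u hu => ⟨hu.2.1.le, hu.2.2.le⟩
    rw [hsub]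
    apply le_antisymm
    · calc volume (Iic c ∩ Set.Ioo 0 1) ≤ volume (Set.Ioc 0 c) := by
            apply measure_mono
            rintro u ⟨h1, h2, _⟩
            exact ⟨h2, h1⟩
          _ = ENNReal.ofReal c := by rw [Real.volume_Ioc, sub_zero]
    · calc ENNReal.ofReal c = volume (Set.Ioo 0 c) := by rw [Real.volume_Ioo, sub_zero]
        _ ≤ volume (Iic c ∩ Set.Ioo 0 1) := by
            apply measure_mono
            rintro u ⟨h1, h2⟩
            exact ⟨h2.le, h1, lt_of_lt_of_le h2 hc1⟩
  rw [hmA, hAeq, hvol]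
  exact ofReal_cdf (κ s) x

end AlphaAux

/-- If `(S, μ)` is a Borel (standard Borel) probability space and
`γ : [0,1] → S` is measure-preserving (for Lebesgue measure on `[0,1]`), then
there is a measure-preserving `α : S × [0,1] → [0,1]` with `γ(α(s,y)) = s`
for `(μ × λ)`-a.e. `(s,y)`. -/
theorem exists_measurable_right_inverse {S : Type*} [MeasurableSpace S]
    [StandardBorelSpace S] (μ : Measure S) [IsProbabilityMeasure μ]
    (γ : ℝ → S)
    (hγ : MeasurePreserving γ ((volume : Measure ℝ).restrict (Set.Icc 0 1)) μ) :
    ∃ α : S × ℝ → ℝ,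
      MeasurePreserving α
        (μ.prod ((volume : Measure ℝ).restrict (Set.Icc 0 1)))
        ((volume : Measure ℝ).restrict (Set.Icc 0 1)) ∧
      ∀ᵐ p ∂(μ.prod ((volume : Measure ℝ).restrict (Set.Icc 0 1))),
        γ (α p) = p.1 := by
  classical
  letI := upgradeStandardBorel S
  set m := (volume : Measure ℝ).restrict (Set.Icc 0 1) with hm
  haveI : IsProbabilityMeasure m := ⟨by simp [hm, Real.volume_Icc]⟩
  have hγm : Measurable γ := hγ.measurable
  have hf : Measurable (fun y : ℝ => (γ y, y)) := hγm.prodMk measurable_id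
  set ρ : Measure (S × ℝ) := m.map (fun y => (γ y, y)) with hρ
  haveI : IsProbabilityMeasure ρ := Measure.isProbabilityMeasure_map hf.aemeasurable
  have hfst : ρ.fst = μ := by
    rw [hρ, Measure.fst, Measure.map_map measurable_fst hf]
    exact hγ.map_eq
  set κ := ρ.condKernel with hκ
  have hαm : Measurable (alphaFun κ) := measurable_alphaFun κ
  -- slices
  have hslice : ∀ (s : S) (x : ℝ),
      m (Prod.mk s ⁻¹' (alphaFun κ ⁻¹' Iic x)) = κ s (Iic x) := by
    intro s x
    exact slice_measure_Iic κ s x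
  -- the diagonal-type set
  have hE : MeasurableSet {p : S × ℝ | γ p.2 = p.1} := by
    have hd : {p : S × ℝ | γ p.2 = p.1} = (fun p : S × ℝ => (γ p.2, p.1)) ⁻¹' (Set.diagonal S) := by
      ext p; simp [Set.diagonal]
    rw [hd]
    exact ((hγm.comp measurable_snd).prodMk measurable_fst)
      (isClosed_diagonal.measurableSet)
  refine ⟨alphaFun κ, ⟨hαm, ?_⟩, ?_⟩
  · -- measure preserving
    refine Measure.ext_of_Iic _ _ (fun x => ?_)
    rw [Measure.map_apply hαm measurableSet_Iic,
      Measure.prod_apply (hαm measurableSet_Iic)]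
    have h1 : ∫⁻ s, m (Prod.mk s ⁻¹' (alphaFun κ ⁻¹' Iic x)) ∂μ
        = ∫⁻ s, κ s (Iic x) ∂μ := by
      apply lintegral_congr
      intro s
      exact hslice s x
    rw [h1, ← hfst]
    have h2 : ∫⁻ s, κ s (Iic x) ∂ρ.fst
        = (ρ.fst ⊗ₘ κ) (Prod.snd ⁻¹' Iic x) := by
      rw [Measure.compProd_apply (measurableSet_Iic.preimage measurable_snd)]
      rfl
    rw [h2, hκ, ρ.disintegrate ρ.condKernel, hρ,
      Measure.map_apply hf (measurableSet_Iic.preimage measurable_snd)]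
    rfl
  · -- a.e. right inverse
    have hρE : ρ {p : S × ℝ | γ p.2 = p.1}ᶜ = 0 := by
      rw [hρ, Measure.map_apply hf hE.compl]
      convert measure_empty (μ := m)
      ext y
      simp
    have hcomp : (ρ.fst ⊗ₘ κ) {p : S × ℝ | γ p.2 = p.1}ᶜ = 0 := by
      rw [hκ, ρ.disintegrate ρ.condKernel]; exact hρE
    rw [Measure.compProd_apply hE.compl, hfst] at hcomp
    have h_ae : ∀ᵐ s ∂μ, κ s (Prod.mk s ⁻¹' {p : S × ℝ | γ p.2 = p.1}ᶜ) = 0 :=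
      (lintegral_eq_zero_iff
        (Kernel.measurable_kernel_prodMk_left hE.compl)).mp hcomp
    -- the bad set
    have hg : Measurable (fun p : S × ℝ => (p.1, alphaFun κ p)) :=
      measurable_fst.prodMk hαm
    set B := (fun p : S × ℝ => (p.1, alphaFun κ p)) ⁻¹' {p : S × ℝ | γ p.2 = p.1}ᶜ with hB
    have hBm : MeasurableSet B := hE.compl.preimage hg
    have hgoal : (μ.prod m) B = 0 := by
      rw [Measure.prod_apply hBm]
      have : ∀ᵐ s ∂μ, m (Prod.mk s ⁻¹' B) = 0 := by
        filter_upwards [h_ae] with s hs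
        have hameas : Measurable fun u => alphaFun κ (s, u) :=
          hαm.comp measurable_prodMk_left
        have hmap : m.map (fun u => alphaFun κ (s, u)) = κ s := by
          haveI : IsProbabilityMeasure (κ s) := inferInstance
          refine Measure.ext_of_Iic _ _ (fun x => ?_)
          rw [Measure.map_apply hameas measurableSet_Iic]
          exact hslice s x
        have hcalc : m (Prod.mk s ⁻¹' B)
            = (m.map (fun u => alphaFun κ (s, u)))
              (Prod.mk s ⁻¹' {p : S × ℝ | γ p.2 = p.1}ᶜ) := by
          rw [Measure.map_apply hameas (measurable_prodMk_left hE.compl)]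
          rfl
        rw [hcalc, hmap]
        exact hs
      calc ∫⁻ s, m (Prod.mk s ⁻¹' B) ∂μ = ∫⁻ _, 0 ∂μ := lintegral_congr_ae this
        _ = 0 := lintegral_zero
    rw [ae_iff]
    exact hgoal
end

section
/- Let W be a kernel on an ordered probability space (S, μ, ≺), let p ∈ [0,1], and define the 'thinned' ordered probability space S* = S ∪ {*} with μ_p({*}) = 1 − p and μ_p(A) = p·μ(A) for measurable A ⊆ S, with ≺ extended so that * is incomparable to every element, and W extended by W(*,x) = W(x,*) = W(*,*) = 0. Then for every finite poset Q on {1,...,k}: ∫_{(S*)^k} ∏_{i <_Q j} W(x_i,x_j) dμ_p^k = p^{n(Q)} · ∫_{S^k} ∏_{i <_Q j} W(x_i,x_j) dμ^k, where n(Q) is the number of elements of Q comparable to at least one other element of Q. -/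
open MeasureTheory

/-- The natural σ-algebra on `Option α`, transported from `α ⊕ Unit`. -/
instance optionMeasurableSpace {α : Type*} [MeasurableSpace α] :
    MeasurableSpace (Option α) :=
  MeasurableSpace.map (fun x : α ⊕ Unit => Sum.elim some (fun _ => none) x)
    inferInstance

section Helpers

variable {S : Type*} [MeasurableSpace S]

private def optG (S : Type*) [MeasurableSpace S] : S ⊕ Unit → Option S :=
  Sum.elim some fun _ => none

private lemma measurable_optG : Measurable (optG S) := fun _ ht => ht

private lemma measurable_from_option {γ : Type*} [MeasurableSpace γ] {h : Option S → γ}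
    (hh : Measurable fun z => h (optG S z)) : Measurable h := fun t ht => hh ht

private lemma measurable_some_opt : Measurable (fun x : S => (some x : Option S)) :=
  measurable_optG.comp measurable_inl

private lemma measurableSet_eq_none : MeasurableSet {o : Option S | o = none} := by
  have h : (optG S) ⁻¹' {o : Option S | o = none} = Set.range Sum.inr := by
    ext z; cases z <;> simp [optG]
  show MeasurableSet ((optG S) ⁻¹' {o : Option S | o = none})
  rw [h]; exact measurableSet_range_inr

private lemma measurable_getD (s₀ : S) : Measurable fun o : Option S => o.getD s₀ := by
  apply measurable_from_option
  have h : (fun z : S ⊕ Unit => (optG S z).getD s₀) = Sum.elim id fun _ => s₀ := by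
    funext z; cases z <;> rfl
  rw [h]; exact Measurable.sumElim measurable_id measurable_const

end Helpers

/-- Thinning a kernel. Extend an ordered probability space `S`
by a point `*` (here `none : Option S`) of mass `1 - p`, scaling `μ` by `p`,
with `*` incomparable to everything and `W` extended by `0`. Then for every
finite poset `Q` on `{1,…,k}`, the homomorphism integral for the extended
kernel equals `p^{n(Q)}` times the original one, where `n(Q)` is the number
of elements of `Q` comparable to at least one other element. -/
theorem thinned_kernel_homomorphism_density {S : Type*} [MeasurableSpace S]
    (μ : Measure S) [IsProbabilityMeasure μ]
    (r : S → S → Prop) (hirr : Irreflexive r) (htrans : Transitive r)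
    (hrmeas : MeasurableSet {p : S × S | r p.1 p.2})
    (W : S → S → ℝ) (hWmeas : Measurable fun q : S × S => W q.1 q.2)
    (hW01 : ∀ x y, W x y ∈ Set.Icc (0 : ℝ) 1)
    (hW1 : ∀ x y, 0 < W x y → r x y)
    (hW2 : ∀ x y z, 0 < W x y → 0 < W y z → W x z = 1)
    (p : ℝ) (hp : p ∈ Set.Icc (0 : ℝ) 1)
    (μp : Measure (Option S))
    (hμp : μp = ENNReal.ofReal p • μ.map Option.some +
      ENNReal.ofReal (1 - p) • Measure.dirac (none : Option S))
    (Wstar : Option S → Option S → ℝ)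
    (hWstar : ∀ a b : Option S,
      Wstar a b = a.elim 0 fun x => b.elim 0 fun y => W x y)
    (k : ℕ) (Q : Fin k → Fin k → Prop) [DecidableRel Q]
    (hQirr : Irreflexive Q) (hQtrans : Transitive Q) :
    ∫ x : Fin k → Option S,
        ∏ q ∈ Finset.univ.filter (fun q : Fin k × Fin k => Q q.1 q.2),
          Wstar (x q.1) (x q.2) ∂(Measure.pi fun _ => μp) =
      p ^ (Finset.univ.filter
            (fun i : Fin k => ∃ j : Fin k, Q i j ∨ Q j i)).card *
        ∫ x : Fin k → S,
          ∏ q ∈ Finset.univ.filter (fun q : Fin k × Fin k => Q q.1 q.2),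
            W (x q.1) (x q.2) ∂(Measure.pi fun _ => μ) := by
  classical
  have hp0 : 0 ≤ p := hp.1
  have h1p0 : 0 ≤ 1 - p := by linarith [hp.2]
  obtain ⟨s₀⟩ : Nonempty S := by
    by_contra h
    rw [not_nonempty_iff] at h
    have h1 := measure_univ (μ := μ)
    rw [Set.univ_eq_empty_iff.mpr h, measure_empty] at h1
    simp at h1
  set T : Finset (Fin k) :=
    Finset.univ.filter (fun i : Fin k => ∃ j : Fin k, Q i j ∨ Q j i) with hT
  set E : Finset (Fin k × Fin k) :=
    Finset.univ.filter (fun q : Fin k × Fin k => Q q.1 q.2) with hE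
  -- basic bounds for Wstar
  have hWstar01 : ∀ a b, Wstar a b ∈ Set.Icc (0 : ℝ) 1 := by
    intro a b; rw [hWstar]
    cases a <;> cases b <;>
      simp only [Option.elim] <;>
      first
        | exact ⟨le_refl 0, zero_le_one⟩
        | exact hW01 _ _
  -- measurability of Wstar (uncurried)
  have hu : Measurable (fun q : Option S × Option S => Wstar q.1 q.2) := by
    have heq : (fun q : Option S × Option S => Wstar q.1 q.2)
        = fun q => (if q.1 = none then (0 : ℝ) else 1) *
            ((if q.2 = none then (0 : ℝ) else 1) * W (q.1.getD s₀) (q.2.getD s₀)) := by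
      funext q
      rcases q with ⟨a, b⟩
      cases a <;> cases b <;> simp [hWstar]
    rw [heq]
    refine Measurable.mul ?_ (Measurable.mul ?_ ?_)
    · exact Measurable.ite (measurable_fst measurableSet_eq_none) measurable_const
        measurable_const
    · exact Measurable.ite (measurable_snd measurableSet_eq_none) measurable_const
        measurable_const
    · exact hWmeas.comp (((measurable_getD s₀).comp measurable_fst).prodMk
        ((measurable_getD s₀).comp measurable_snd))
  have hFmeas : Measurable (fun x : Fin k → Option S => ∏ q ∈ E, Wstar (x q.1) (x q.2)) := by
    apply Finset.measurable_prod
    intro q _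
    have h1 : Measurable (fun x : Fin k → Option S => (x q.1, x q.2)) := by fun_prop
    exact hu.comp h1
  -- the Bernoulli measure on Bool
  set β : Measure Bool := ENNReal.ofReal p • Measure.dirac true +
      ENNReal.ofReal (1 - p) • Measure.dirac false with hβ
  have hβprob : IsProbabilityMeasure β := by
    constructor
    rw [hβ]
    simp [← ENNReal.ofReal_add hp0 h1p0]
  have hμpprob : IsProbabilityMeasure μp := by
    constructor
    rw [hμp]
    simp only [Measure.coe_add, Measure.coe_smul, Pi.add_apply, Pi.smul_apply, smul_eq_mul]
    rw [Measure.map_apply measurable_some_opt MeasurableSet.univ]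
    simp [← ENNReal.ofReal_add hp0 h1p0]
  haveI := hβprob
  haveI := hμpprob
  -- the gluing map
  set φ : Bool × S → Option S := fun z => if z.1 then some z.2 else none with hφdef
  have hφmeas : Measurable φ := by
    apply Measurable.ite (measurable_fst (measurableSet_singleton true))
      (measurable_some_opt.comp measurable_snd) measurable_const
  have hφmp : MeasurePreserving φ (β.prod μ) μp := by
    refine ⟨hφmeas, ?_⟩
    ext A hA
    rw [Measure.map_apply hφmeas hA, Measure.prod_apply (hφmeas hA), hβ]
    rw [lintegral_add_measure, lintegral_smul_measure, lintegral_smul_measure,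
      lintegral_dirac, lintegral_dirac]
    have h1 : Prod.mk true ⁻¹' (φ ⁻¹' A) = some ⁻¹' A := by
      ext s; simp [hφdef]
    have h2 : Prod.mk false ⁻¹' (φ ⁻¹' A) = {s : S | none ∈ A} := by
      ext s; simp [hφdef]
    rw [h1, h2, hμp]
    simp only [Measure.coe_add, Measure.coe_smul, Pi.add_apply, Pi.smul_apply, smul_eq_mul]
    rw [Measure.map_apply measurable_some_opt hA, Measure.dirac_apply' _ hA]
    congr 1
    by_cases h : (none : Option S) ∈ A
    · simp [h, Set.indicator_of_mem h]
    · simp [h, Set.indicator_of_notMem h]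
  -- the pi version of the gluing map
  have hmp : MeasurePreserving
      (fun z : (Fin k → Bool) × (Fin k → S) => fun i => φ (z.1 i, z.2 i))
      ((Measure.pi fun _ : Fin k => β).prod (Measure.pi fun _ : Fin k => μ))
      (Measure.pi fun _ : Fin k => μp) := by
    have h1 := MeasurePreserving.symm _
      (measurePreserving_arrowProdEquivProdArrow Bool S (Fin k) (fun _ => β) (fun _ => μ))
    have h2 := measurePreserving_pi (fun _ : Fin k => β.prod μ) (fun _ : Fin k => μp)
      (fun _ => hφmp)
    have h3 := h2.comp h1
    convert h3 using 1
    funext z i; rfl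
  -- rewrite LHS via the gluing map
  rw [← hmp.map_eq, integral_map hmp.measurable.aemeasurable hFmeas.aestronglyMeasurable]
  -- integrability for Fubini
  have hintmeas : Measurable (fun z : (Fin k → Bool) × (Fin k → S) =>
      ∏ q ∈ E, Wstar (φ (z.1 q.1, z.2 q.1)) (φ (z.1 q.2, z.2 q.2))) :=
    hFmeas.comp hmp.measurable
  have hint : Integrable (fun z : (Fin k → Bool) × (Fin k → S) =>
      ∏ q ∈ E, Wstar (φ (z.1 q.1, z.2 q.1)) (φ (z.1 q.2, z.2 q.2)))
      ((Measure.pi fun _ : Fin k => β).prod (Measure.pi fun _ : Fin k => μ)) := by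
    refine Integrable.mono' (integrable_const (1 : ℝ)) hintmeas.aestronglyMeasurable
      (Filter.Eventually.of_forall fun z => ?_)
    rw [Real.norm_eq_abs, abs_of_nonneg (Finset.prod_nonneg fun q _ => (hWstar01 _ _).1)]
    exact Finset.prod_le_one (fun q _ => (hWstar01 _ _).1) (fun q _ => (hWstar01 _ _).2)
  rw [integral_prod _ hint]
  -- the inner integral
  have hinner : ∀ b : Fin k → Bool,
      (∫ y : Fin k → S, ∏ q ∈ E, Wstar (φ (b q.1, y q.1)) (φ (b q.2, y q.2))
          ∂(Measure.pi fun _ : Fin k => μ))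
        = Set.indicator {b : Fin k → Bool | ∀ i ∈ T, b i = true}
            (fun _ => ∫ x : Fin k → S, ∏ q ∈ E, W (x q.1) (x q.2)
              ∂(Measure.pi fun _ : Fin k => μ)) b := by
    intro b
    by_cases hb : ∀ i ∈ T, b i = true
    · rw [Set.indicator_of_mem (show b ∈ {b : Fin k → Bool | ∀ i ∈ T, b i = true} from hb)]
      apply integral_congr_ae
      apply Filter.Eventually.of_forall
      intro y
      apply Finset.prod_congr rfl
      intro q hq
      have hQq : Q q.1 q.2 := (Finset.mem_filter.mp hq).2
      have hq1 : q.1 ∈ T := Finset.mem_filter.mpr ⟨Finset.mem_univ _, ⟨q.2, Or.inl hQq⟩⟩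
      have hq2 : q.2 ∈ T := Finset.mem_filter.mpr ⟨Finset.mem_univ _, ⟨q.1, Or.inr hQq⟩⟩
      simp [hφdef, hb q.1 hq1, hb q.2 hq2, hWstar]
    · rw [Set.indicator_of_notMem
        (show b ∉ {b : Fin k → Bool | ∀ i ∈ T, b i = true} from hb)]
      push_neg at hb
      obtain ⟨i, hiT, hbi⟩ := hb
      have hbi' : b i = false := by simpa using hbi
      have hiT' : ∃ j, Q i j ∨ Q j i := (Finset.mem_filter.mp hiT).2
      obtain ⟨j, hij⟩ := hiT'
      have hzero : ∀ y : Fin k → S,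
          ∏ q ∈ E, Wstar (φ (b q.1, y q.1)) (φ (b q.2, y q.2)) = 0 := by
        intro y
        rcases hij with h | h
        · refine Finset.prod_eq_zero
            (Finset.mem_filter.mpr ⟨Finset.mem_univ ((i, j) : Fin k × Fin k), h⟩) ?_
          simp [hφdef, hbi', hWstar]
        · refine Finset.prod_eq_zero
            (Finset.mem_filter.mpr ⟨Finset.mem_univ ((j, i) : Fin k × Fin k), h⟩) ?_
          cases hbj : b j <;> simp [hφdef, hbi', hbj, hWstar]
      simp only [hzero, integral_zero]
  simp only [hinner]
  -- the measure of the thinning event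
  have hAeq : {b : Fin k → Bool | ∀ i ∈ T, b i = true}
      = Set.pi Set.univ (fun i => if i ∈ T then {true} else Set.univ) := by
    ext b
    simp only [Set.mem_setOf_eq, Set.mem_pi, Set.mem_univ, true_implies]
    constructor
    · intro h i
      by_cases hi : i ∈ T
      · simp [hi, h i hi]
      · simp [hi]
    · intro h i hi
      have := h i
      simpa [hi] using this
  have hAmeas : MeasurableSet {b : Fin k → Bool | ∀ i ∈ T, b i = true} := by
    rw [hAeq]
    exact MeasurableSet.univ_pi fun i => by
      by_cases hi : i ∈ T <;> simp [hi, measurableSet_singleton]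
  rw [integral_indicator_const _ hAmeas]
  have hβtrue : β {true} = ENNReal.ofReal p := by
    rw [hβ]
    simp [Measure.dirac_apply]
  have hmeasval : (Measure.pi fun _ : Fin k => β) {b | ∀ i ∈ T, b i = true}
      = ENNReal.ofReal p ^ T.card := by
    rw [hAeq, Measure.pi_pi]
    have : ∀ i : Fin k, β (if i ∈ T then {true} else Set.univ)
        = if i ∈ T then ENNReal.ofReal p else 1 := by
      intro i
      by_cases hi : i ∈ T
      · simp [hi, hβtrue]
      · simp only [if_neg hi]
        exact measure_univ
    rw [Finset.prod_congr rfl fun i _ => this i]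
    rw [Finset.prod_ite_mem, Finset.univ_inter, Finset.prod_const]
  rw [measureReal_def, hmeasval, ENNReal.toReal_pow, ENNReal.toReal_ofReal hp0, smul_eq_mul]
end
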